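/- arXiv:2409.19791 — 11 statements merged into one kernel-verified Lean document; each statement's English description precedes it below -/
import Mathlib

section
/- Let E be a finite-dimensional real inner product space, let p ≥ 2 be an integer, and let f : E → ℝ be C^p-smooth with ∇f(0) = 0. Let T := ker(∇²f(0)), where ∇²f(0) is the Hessian of f at 0 viewed as a self-adjoint linear operator on E, and let T⊥ be the orthogonal complement of T. Then there exist open neighborhoods U of 0 in T and V of 0 in T⊥ and a C^{p−1}-smooth map v : U → V such that v(0) = 0, the derivative Dv(0) = 0, and for every u ∈ U and w ∈ V one has P_{T⊥}(∇f(u + w)) = 0 if and only if w = v(u), where P_{T⊥} denotes the orthogonal projection onto T⊥. Consequently, near 0 the Morse ravine {u + w : u ∈ T, w ∈ T⊥, P_{T⊥}(∇f(u + w)) = 0} coincides with the graph {u + v(u) : u ∈ U}, and is therefore a C^{p−1}-smooth manifold whose tangent space at 0 equals T. -/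
open InnerProductSpace Set

set_option maxHeartbeats 1000000


/-- **Smoothness of the Morse ravine.**
Let `E` be a finite-dimensional real inner product space, `p ≥ 2`, and `f : E → ℝ`
a `C^p`-smooth function with `∇f(0) = 0`.  With `T := ker(∇²f(0))` (the Hessian being
the derivative of the gradient at `0`), there are open neighborhoods `U` of `0` in `T`
and `V` of `0` in `Tᗮ` and a `C^{p-1}`-smooth map `v : U → V` with `v 0 = 0`,
`Dv(0) = 0`, such that for `u ∈ U`, `w ∈ V` one has
`P_{Tᗮ}(∇f(u + w)) = 0 ↔ w = v u`; consequently near `0` the Morse ravine coincides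
with the graph of `v`. -/
theorem morse_ravine_graphical_representation
    {E : Type*} [NormedAddCommGroup E] [InnerProductSpace ℝ E] [FiniteDimensional ℝ E]
    (p : ℕ) (hp : 2 ≤ p) (f : E → ℝ) (hf : ContDiff ℝ p f)
    (hcrit : gradient f 0 = 0)
    (T : Submodule ℝ E) (hT : T = LinearMap.ker (fderiv ℝ (gradient f) 0 : E →ₗ[ℝ] E)) :
    ∃ (U : Set T) (V : Set Tᗮ) (v : T → Tᗮ),
      IsOpen U ∧ (0 : T) ∈ U ∧ IsOpen V ∧ (0 : Tᗮ) ∈ V ∧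
      ContDiffOn ℝ (p - 1 : ℕ) v U ∧ v 0 = 0 ∧ fderiv ℝ v 0 = 0 ∧
      (∀ u ∈ U, v u ∈ V) ∧
      (∀ u ∈ U, ∀ w ∈ V,
        (Submodule.orthogonalProjectionOnto Tᗮ (gradient f ((u : E) + (w : E))) = 0 ↔ w = v u)) ∧
      {x : E | ∃ u ∈ U, ∃ w ∈ V, x = (u : E) + (w : E) ∧
          Submodule.orthogonalProjectionOnto Tᗮ (gradient f x) = 0}
        = {x : E | ∃ u ∈ U, x = (u : E) + ((v u : Tᗮ) : E)} := by
  have h1 : ContDiff ℝ (p-1 : ℕ) (fderiv ℝ f) := hf.fderiv_right (by norm_cast; omega)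
  have h1p : (1 : WithTop ℕ∞) ≤ ((p - 1 : ℕ) : WithTop ℕ∞) := by norm_cast; omega
  have hgrad : ContDiff ℝ (p-1 : ℕ) (gradient f) :=
    (toDual ℝ E).symm.toContinuousLinearEquiv.contDiff.comp h1
  set A := fderiv ℝ (gradient f) 0 with hA
  -- symmetry of the Hessian
  have hAsymm : ∀ x y : E, ⟪A x, y⟫_ℝ = ⟪A y, x⟫_ℝ := by
    set f'' := fderiv ℝ (fderiv ℝ f) 0 with hf''
    have hsymm : ∀ x y : E, f'' x y = f'' y x :=
      second_derivative_symmetric (fun y => (hf.differentiable (by norm_cast; omega) y).hasFDerivAt)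
        ((h1.differentiable (by norm_cast; omega) 0).hasFDerivAt)
    have key : ∀ x y : E, ⟪y, A x⟫_ℝ = f'' x y := by
      intro x y
      have hF : ∀ z, (innerSL ℝ y) (gradient f z) = (ContinuousLinearMap.apply ℝ ℝ y) (fderiv ℝ f z) := by
        intro z
        simp only [innerSL_apply_apply, ContinuousLinearMap.apply_apply]
        rw [real_inner_comm]
        exact toDual_symm_apply
      have h1' : HasFDerivAt (fun z => (innerSL ℝ y) (gradient f z)) ((innerSL ℝ y).comp A) 0 :=
        (innerSL ℝ y).hasFDerivAt.comp 0 ((hgrad.differentiable (by norm_cast; omega) 0).hasFDerivAt)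
      have h2' : HasFDerivAt (fun z => (innerSL ℝ y) (gradient f z))
          ((ContinuousLinearMap.apply ℝ ℝ y).comp f'') 0 := by
        simp only [hF]
        exact (ContinuousLinearMap.apply ℝ ℝ y).hasFDerivAt.comp 0 ((h1.differentiable (by norm_cast; omega) 0).hasFDerivAt)
      have := h1'.unique h2'
      calc ⟪y, A x⟫_ℝ = ((innerSL ℝ y).comp A) x := rfl
        _ = ((ContinuousLinearMap.apply ℝ ℝ y).comp f'') x := by rw [this]
        _ = f'' x y := rfl
    intro x y
    rw [real_inner_comm, key x y, hsymm x y, ← key y x, real_inner_comm]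
  have hAT : ∀ h : T, A (h : E) = 0 := by
    intro h
    have h2 : (h : E) ∈ LinearMap.ker (A : E →ₗ[ℝ] E) := by rw [← hT]; exact h.2
    exact LinearMap.mem_ker.mp h2
  -- the setup
  set P : E →L[ℝ] Tᗮ := Submodule.orthogonalProjectionOnto Tᗮ with hP
  set j : T × Tᗮ →L[ℝ] E := T.subtypeL.coprod Tᗮ.subtypeL with hj
  set B : Tᗮ →L[ℝ] Tᗮ := (P.comp A).comp Tᗮ.subtypeL with hB
  have hBinj : Function.Injective B := by
    rw [injective_iff_map_eq_zero]
    intro w hw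
    have h1' : A (w : E) ∈ Tᗮᗮ := by
      have : P (A (w : E)) = 0 := hw
      rwa [hP, Submodule.orthogonalProjectionOnto_eq_zero_iff] at this
    have h2' : A (w : E) ∈ Tᗮ := by
      rw [Submodule.mem_orthogonal]
      intro y hy
      rw [real_inner_comm, hAsymm, show A y = 0 from hAT ⟨y, hy⟩, inner_zero_left]
    have h3' : A (w : E) = 0 := by
      have := (Submodule.orthogonal_disjoint Tᗮ)
      exact (Submodule.disjoint_def.mp this) _ h2' h1'
    have h4' : (w : E) ∈ T := by
      have hm : (w : E) ∈ LinearMap.ker (A : E →ₗ[ℝ] E) := LinearMap.mem_ker.mpr h3'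
      rwa [← hT] at hm
    have := (Submodule.orthogonal_disjoint T)
    exact Subtype.ext ((Submodule.disjoint_def.mp this) _ h4' w.2)
  have hBbij : Function.Bijective B :=
    ⟨hBinj, LinearMap.injective_iff_surjective.mp hBinj⟩
  set Beq : Tᗮ ≃L[ℝ] Tᗮ :=
    (LinearEquiv.ofBijective (B : Tᗮ →ₗ[ℝ] Tᗮ) hBbij).toContinuousLinearEquiv with hBeq
  have hBeqB : ∀ w : Tᗮ, Beq w = B w := fun w => rfl
  set φ : T × Tᗮ → T × Tᗮ := fun x => (x.1, P (gradient f ((x.1 : E) + (x.2 : E)))) with hφ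
  have hφcd : ContDiff ℝ (p-1 : ℕ) φ := by
    apply contDiff_fst.prodMk
    have hjc : ContDiff ℝ (p-1 : ℕ) (fun x : T × Tᗮ => ((x.1 : E) + (x.2 : E))) :=
      (T.subtypeL.contDiff.comp contDiff_fst).add (Tᗮ.subtypeL.contDiff.comp contDiff_snd)
    exact P.contDiff.comp (hgrad.comp hjc)
  set D : (T × Tᗮ) ≃L[ℝ] (T × Tᗮ) := (ContinuousLinearEquiv.refl ℝ T).prodCongr Beq with hD
  have hDeq : ((ContinuousLinearMap.fst ℝ T Tᗮ).prod ((P.comp A).comp j))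
      = (D : T × Tᗮ →L[ℝ] T × Tᗮ) := by
    apply ContinuousLinearMap.ext
    intro x
    apply Prod.ext
    · rfl
    · show P (A ((x.1 : E) + (x.2 : E))) = Beq x.2
      rw [hBeqB]
      show P (A ((x.1 : E) + (x.2 : E))) = P (A (x.2 : E))
      rw [map_add, hAT x.1, zero_add]
  have hDs : HasStrictFDerivAt φ (D : T × Tᗮ →L[ℝ] T × Tᗮ) 0 := by
    rw [← hDeq]
    apply HasStrictFDerivAt.prodMk
    · exact hasStrictFDerivAt_fst
    · have hg0 : HasStrictFDerivAt (gradient f) A 0 :=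
        (hgrad.contDiffAt).hasStrictFDerivAt (by norm_cast; omega)
      have hjs : HasStrictFDerivAt (fun x : T × Tᗮ => ((x.1 : E) + (x.2 : E))) j 0 :=
        j.hasStrictFDerivAt
      have : HasStrictFDerivAt (fun x : T × Tᗮ => gradient f ((x.1 : E) + (x.2 : E)))
          (A.comp j) 0 := by
        have h0 : ((0 : T × Tᗮ).1 : E) + ((0 : T × Tᗮ).2 : E) = 0 := by simp
        exact HasStrictFDerivAt.comp 0 (h0 ▸ hg0) hjs
      exact (P.hasStrictFDerivAt).comp 0 this
  -- the partial homeomorphism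
  set Φ := hDs.toOpenPartialHomeomorph φ with hΦ
  have hΦcoe : ⇑Φ = φ := hDs.toOpenPartialHomeomorph_coe
  have h0src : (0 : T × Tᗮ) ∈ Φ.source := hDs.mem_toOpenPartialHomeomorph_source
  have hφ0 : φ 0 = 0 := by
    show (((0:T), P (gradient f ((((0:T)):E) + (((0:Tᗮ)):E)))) : T × Tᗮ) = 0
    rw [show (((0:T)):E) + (((0:Tᗮ)):E) = 0 by simp, hcrit, map_zero]
    rfl
  have h0tgt : (0 : T × Tᗮ) ∈ Φ.target := by
    have h := Φ.map_source h0src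
    rwa [hΦcoe, hφ0] at h
  have hψ0 : Φ.symm 0 = 0 := by
    have h := Φ.left_inv h0src
    rwa [hΦcoe, hφ0] at h
  -- invertibility of the derivative near 0
  have hfderiv0 : fderiv ℝ φ 0 = (D : T × Tᗮ →L[ℝ] T × Tᗮ) := hDs.hasFDerivAt.fderiv
  set Wu : Set (T × Tᗮ) := (fderiv ℝ φ) ⁻¹' {g | IsUnit g} with hWu
  have hWuOpen : IsOpen Wu := Units.isOpen.preimage (hφcd.continuous_fderiv (by norm_cast; omega))
  have h0Wu : (0 : T × Tᗮ) ∈ Wu := by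
    show IsUnit (fderiv ℝ φ 0)
    rw [hfderiv0]
    exact ⟨D.toUnit, rfl⟩
  have hWuEquiv : ∀ x ∈ Wu, ∃ e : (T × Tᗮ) ≃L[ℝ] (T × Tᗮ),
      (e : (T × Tᗮ) →L[ℝ] (T × Tᗮ)) = fderiv ℝ φ x := by
    intro x hx
    obtain ⟨u, hu⟩ := hx
    refine ⟨ContinuousLinearEquiv.unitsEquiv ℝ _ u, ?_⟩
    rw [← hu]
    rfl
  -- a rectangle inside the source where the derivative is invertible
  obtain ⟨U₀, hU₀n, V₀, hV₀n, hUV⟩ :=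
    mem_nhds_prod_iff.mp ((Φ.open_source.inter hWuOpen).mem_nhds ⟨h0src, h0Wu⟩)
  obtain ⟨U₁, hU₁sub, hU₁open, hU₁0⟩ := mem_nhds_iff.mp hU₀n
  obtain ⟨V₁, hV₁sub, hV₁open, hV₁0⟩ := mem_nhds_iff.mp hV₀n
  have hrect : U₁ ×ˢ V₁ ⊆ Φ.source ∩ Wu := (Set.prod_mono hU₁sub hV₁sub).trans hUV
  set O : Set (T × Tᗮ) := Φ.target ∩ Φ.symm ⁻¹' (U₁ ×ˢ V₁) with hO
  have hOopen : IsOpen O := Φ.isOpen_inter_preimage_symm (hU₁open.prod hV₁open)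
  set v : T → Tᗮ := fun u => (Φ.symm (u, 0)).2 with hv
  set U : Set T := U₁ ∩ {u | ((u, (0:Tᗮ)) : T × Tᗮ) ∈ O} with hU
  have hUopen : IsOpen U :=
    hU₁open.inter (hOopen.preimage (continuous_id.prodMk continuous_const))
  have hU0 : (0 : T) ∈ U := by
    refine ⟨hU₁0, ⟨h0tgt, ?_⟩⟩
    show Φ.symm ((0:T), (0:Tᗮ)) ∈ U₁ ×ˢ V₁
    rw [show (((0:T), (0:Tᗮ)) : T × Tᗮ) = 0 from rfl, hψ0]
    exact ⟨hU₁0, hV₁0⟩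
  have hmem : ∀ u ∈ U, Φ.symm (u, 0) ∈ U₁ ×ˢ V₁ := fun u hu => hu.2.2
  have htgt : ∀ u ∈ U, ((u, (0:Tᗮ)) : T × Tᗮ) ∈ Φ.target := fun u hu => hu.2.1
  have hback : ∀ u ∈ U, φ (Φ.symm (u, 0)) = (u, 0) := by
    intro u hu
    have h := Φ.right_inv (htgt u hu)
    rwa [hΦcoe] at h
  have hfst : ∀ u ∈ U, (Φ.symm (u, 0)).1 = u := fun u hu => congrArg Prod.fst (hback u hu)
  have hpair : ∀ u ∈ U, Φ.symm (u, 0) = (u, v u) := fun u hu => Prod.ext (hfst u hu) rfl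
  have hφuv : ∀ u ∈ U, φ (u, v u) = (u, 0) := by
    intro u hu
    rw [← hpair u hu]
    exact hback u hu
  have hzero : ∀ u ∈ U, P (gradient f ((u : E) + ((v u : Tᗮ) : E))) = 0 :=
    fun u hu => congrArg Prod.snd (hφuv u hu)
  have hvV : ∀ u ∈ U, v u ∈ V₁ := fun u hu => (hmem u hu).2
  -- the characterization
  have hiff : ∀ u ∈ U, ∀ w ∈ V₁, (P (gradient f ((u:E) + (w:E))) = 0 ↔ w = v u) := by
    intro u hu w hw
    constructor
    · intro h0
      have hsrc1 : ((u, w) : T × Tᗮ) ∈ Φ.source := (hrect ⟨hu.1, hw⟩).1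
      have hsrc2 : ((u, v u) : T × Tᗮ) ∈ Φ.source := by
        rw [← hpair u hu]
        exact Φ.map_target (htgt u hu)
      have hφeq : φ (u, w) = φ (u, v u) := by
        have e1 : φ (u, w) = ((u, (0:Tᗮ)) : T × Tᗮ) := by
          show ((u, P (gradient f ((u:E)+(w:E)))) : T × Tᗮ) = (u, 0)
          rw [h0]
        rw [e1, hφuv u hu]
      have h := Φ.injOn hsrc1 hsrc2 (by rw [hΦcoe]; exact hφeq)
      exact congrArg Prod.snd h
    · rintro rfl
      exact hzero u hu
  -- smoothness of v
  have hψcd : ∀ u ∈ U, ContDiffAt ℝ (p-1 : ℕ) (Φ.symm) (u, 0) := by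
    intro u hu
    have hxW : Φ.symm (u,0) ∈ Wu := (hrect (hmem u hu)).2
    obtain ⟨e, he⟩ := hWuEquiv _ hxW
    apply Φ.contDiffAt_symm (htgt u hu)
    · rw [he, hΦcoe]
      exact ((hφcd.differentiable (by norm_cast; omega)) _).hasFDerivAt
    · rw [hΦcoe]
      exact hφcd.contDiffAt
  have hvcd : ContDiffOn ℝ (p-1 : ℕ) v U := by
    intro u hu
    apply ContDiffAt.contDiffWithinAt
    have h1c : ContDiffAt ℝ (p-1:ℕ) (fun u : T => ((u, (0:Tᗮ)) : T × Tᗮ)) u :=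
      contDiffAt_id.prodMk contDiffAt_const
    exact contDiff_snd.contDiffAt.comp _ ((hψcd u hu).comp u h1c)
  have hv0 : v 0 = 0 := by
    show (Φ.symm ((0:T), (0:Tᗮ))).2 = 0
    rw [show (((0:T), (0:Tᗮ)) : T × Tᗮ) = 0 from rfl, hψ0]
    rfl
  -- derivative of v at 0
  have hψd : HasFDerivAt (Φ.symm) ((D.symm : (T×Tᗮ) →L[ℝ] (T×Tᗮ))) 0 := by
    have h := hDs.to_localInverse.hasFDerivAt
    rw [hφ0] at h
    exact h
  have hvd : HasFDerivAt v ((ContinuousLinearMap.snd ℝ T Tᗮ).comp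
      (((D.symm : (T×Tᗮ) →L[ℝ] (T×Tᗮ))).comp (ContinuousLinearMap.inl ℝ T Tᗮ))) 0 := by
    have hinl : HasFDerivAt (fun u : T => ((u, (0:Tᗮ)) : T × Tᗮ))
        (ContinuousLinearMap.inl ℝ T Tᗮ) 0 := (ContinuousLinearMap.inl ℝ T Tᗮ).hasFDerivAt
    have h2 : HasFDerivAt (fun u : T => Φ.symm (u, 0))
        (((D.symm : (T×Tᗮ) →L[ℝ] (T×Tᗮ))).comp (ContinuousLinearMap.inl ℝ T Tᗮ)) 0 :=
      HasFDerivAt.comp 0 hψd hinl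
    exact HasFDerivAt.comp 0 (ContinuousLinearMap.snd ℝ T Tᗮ).hasFDerivAt h2
  have hfv0 : fderiv ℝ v 0 = 0 := by
    rw [hvd.fderiv]
    apply ContinuousLinearMap.ext
    intro h
    show (D.symm ((h, (0:Tᗮ)) : T × Tᗮ)).2 = 0
    have hDh : D ((h, (0:Tᗮ)) : T × Tᗮ) = (h, 0) := by
      show ((h, Beq 0) : T × Tᗮ) = (h, 0)
      rw [map_zero]
    calc (D.symm ((h, (0:Tᗮ)) : T × Tᗮ)).2 = (D.symm (D (h,0))).2 := by rw [hDh]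
      _ = (((h, (0:Tᗮ)) : T×Tᗮ)).2 := by rw [D.symm_apply_apply]
      _ = 0 := rfl
  -- conclusion
  refine ⟨U, V₁, v, hUopen, hU0, hV₁open, hV₁0, hvcd, hv0, hfv0, hvV, hiff, ?_⟩
  ext x
  simp only [Set.mem_setOf_eq]
  constructor
  · rintro ⟨u, hu, w, hw, rfl, hPx⟩
    exact ⟨u, hu, by rw [(hiff u hu w hw).mp hPx]⟩
  · rintro ⟨u, hu, rfl⟩
    exact ⟨u, hu, v u, hvV u hu, rfl, (hiff u hu (v u) (hvV u hu)).mpr rfl⟩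
end

section
/- Let E be a finite-dimensional real inner product space, let p ≥ 2 be an integer, and let f : E → ℝ be C^p-smooth having a local minimizer at 0 (so ∇f(0) = 0). Let T := ker(∇²f(0)), let T⊥ be its orthogonal complement, and let v : U → V be the C^{p−1}-smooth graphical representation of the Morse ravine at 0, i.e. a map defined on a neighborhood U of 0 in T, taking values in a neighborhood V of 0 in T⊥, with v(0) = 0, Dv(0) = 0, and P_{T⊥}(∇f(u + v(u))) = 0 for all u ∈ U. Then there exist constants c₁, c₂ > 0 and a neighborhood W of 0 in E such that for all u ∈ U and w ∈ V with u + w ∈ W: c₁·‖w − v(u)‖² ≤ f(u + w) − f(u + v(u)) ≤ c₂·‖w − v(u)‖². In particular, the Morse ravine of f at 0 is a C^{p−1}-ravine: the retraction R(u + w) := u + v(u) satisfies f(x) − f(R(x)) ≥ c₁‖x − R(x)‖² near 0. -/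
open Set InnerProductSpace

set_option linter.unusedVariables false


set_option linter.unusedSectionVars false
set_option maxHeartbeats 1000000

section OneDim

lemma key1d_upper (ψ ψ' ψ'' : ℝ → ℝ)
    (hψ : ∀ t ∈ Icc (0:ℝ) 1, HasDerivAt ψ (ψ' t) t)
    (hψ' : ∀ t ∈ Icc (0:ℝ) 1, HasDerivAt ψ' (ψ'' t) t)
    (hψ'0 : ψ' 0 = 0) (b : ℝ) (hb : ∀ t ∈ Icc (0:ℝ) 1, ψ'' t ≤ b) :
    ψ 1 - ψ 0 ≤ b / 2 := by
  set χ : ℝ → ℝ := fun t => b * t ^ 2 / 2 - ψ t with hχ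
  have hχ' : ∀ t ∈ Icc (0:ℝ) 1, HasDerivAt (fun t => b * t - ψ' t) (b - ψ'' t) t := by
    intro t ht
    exact (((hasDerivAt_id t).const_mul b).sub (hψ' t ht)).congr_deriv (by simp)
  have mono1 : MonotoneOn (fun t => b * t - ψ' t) (Icc 0 1) := by
    apply monotoneOn_of_deriv_nonneg (convex_Icc 0 1)
    · exact ContinuousOn.sub (by fun_prop) (fun t ht => (hψ' t ht).continuousAt.continuousWithinAt)
    · intro t ht
      exact ((hχ' t (interior_subset ht)).differentiableAt).differentiableWithinAt
    · intro t ht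
      rw [interior_Icc] at ht
      rw [(hχ' t (Ioo_subset_Icc_self ht)).deriv]
      have := hb t (Ioo_subset_Icc_self ht)
      linarith
  have h1 : ∀ t ∈ Icc (0:ℝ) 1, 0 ≤ b * t - ψ' t := by
    intro t ht
    have := mono1 (left_mem_Icc.2 zero_le_one) ht ht.1
    simpa [hψ'0] using this
  have hχd : ∀ t ∈ Icc (0:ℝ) 1, HasDerivAt χ (b * t - ψ' t) t := by
    intro t ht
    have h2 : HasDerivAt (fun t : ℝ => b * t ^ 2 / 2) (b * t) t := by
      have := ((hasDerivAt_pow 2 t).const_mul b).div_const 2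
      simpa using this.congr_deriv (by ring)
    exact h2.sub (hψ t ht)
  have mono2 : MonotoneOn χ (Icc 0 1) := by
    apply monotoneOn_of_deriv_nonneg (convex_Icc 0 1)
    · exact fun t ht => (hχd t ht).continuousAt.continuousWithinAt
    · intro t ht
      exact ((hχd t (interior_subset ht)).differentiableAt).differentiableWithinAt
    · intro t ht
      rw [interior_Icc] at ht
      rw [(hχd t (Ioo_subset_Icc_self ht)).deriv]
      exact h1 t (Ioo_subset_Icc_self ht)
  have := mono2 (left_mem_Icc.2 zero_le_one) (right_mem_Icc.2 zero_le_one) zero_le_one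
  simp only [hχ] at this
  norm_num at this
  linarith

lemma key1d_lower (ψ ψ' ψ'' : ℝ → ℝ)
    (hψ : ∀ t ∈ Icc (0:ℝ) 1, HasDerivAt ψ (ψ' t) t)
    (hψ' : ∀ t ∈ Icc (0:ℝ) 1, HasDerivAt ψ' (ψ'' t) t)
    (hψ'0 : ψ' 0 = 0) (a : ℝ) (ha : ∀ t ∈ Icc (0:ℝ) 1, a ≤ ψ'' t) :
    a / 2 ≤ ψ 1 - ψ 0 := by
  have := key1d_upper (fun t => -ψ t) (fun t => -ψ' t) (fun t => -ψ'' t)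
    (fun t ht => (hψ t ht).neg) (fun t ht => (hψ' t ht).neg) (by simp [hψ'0]) (-a)
    (fun t ht => by simpa using ha t ht)
  linarith

end OneDim

section Helpers
variable {E : Type*} [NormedAddCommGroup E] [InnerProductSpace ℝ E] [CompleteSpace E]

lemma grad_inner (f : E → ℝ) (z y : E) : (inner ℝ (gradient f z) y : ℝ) = fderiv ℝ f z y :=
  toDual_symm_apply

lemma seg_deriv (p : ℕ) (hp : 2 ≤ p) (f : E → ℝ) (hf : ContDiff ℝ p f) (x d : E) (t : ℝ) :
    HasDerivAt (fun s => f (x + s • d)) ((inner ℝ (gradient f (x + t • d)) d : ℝ)) t ∧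
    HasDerivAt (fun s => (inner ℝ (gradient f (x + s • d)) d : ℝ))
      ((inner ℝ (fderiv ℝ (gradient f) (x + t • d) d) d : ℝ)) t := by
  have hg : ContDiff ℝ (p-1 : ℕ) (gradient f) := by
    have : gradient f = fun x => (toDual ℝ E).symm (fderiv ℝ f x) := rfl
    rw [this]
    apply (toDual ℝ E).symm.contDiff.comp
    apply hf.fderiv_right
    norm_cast; omega
  have hline : HasDerivAt (fun s : ℝ => x + s • d) d t := by
    simpa using ((hasDerivAt_id t).smul_const d).const_add x
  have hfd : DifferentiableAt ℝ f (x + t • d) :=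
    (hf.differentiable (by exact_mod_cast (by omega : p ≠ 0))).differentiableAt
  have hgd : DifferentiableAt ℝ (gradient f) (x + t • d) :=
    (hg.differentiable (by exact_mod_cast (by omega : p - 1 ≠ 0))).differentiableAt
  constructor
  · have := hfd.hasFDerivAt.comp_hasDerivAt t hline
    rw [grad_inner]
    exact this
  · have h1 : HasDerivAt (fun s => gradient f (x + s • d))
        (fderiv ℝ (gradient f) (x + t • d) d) t :=
      by have := hgd.hasFDerivAt.comp_hasDerivAt t hline; exact this
    have h2 := ((innerSL ℝ d).hasFDerivAt).comp_hasDerivAt t h1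
    simpa [Function.comp_def, real_inner_comm] using h2

lemma grad_contDiff (p : ℕ) (hp : 2 ≤ p) (f : E → ℝ) (hf : ContDiff ℝ p f) :
    ContDiff ℝ (p-1 : ℕ) (gradient f) := by
  have : gradient f = fun x => (toDual ℝ E).symm (fderiv ℝ f x) := rfl
  rw [this]
  apply (toDual ℝ E).symm.contDiff.comp
  apply hf.fderiv_right
  norm_cast; omega

lemma hess_cont (p : ℕ) (hp : 2 ≤ p) (f : E → ℝ) (hf : ContDiff ℝ p f) :
    Continuous (fderiv ℝ (gradient f)) := by
  have hg := grad_contDiff p hp f hf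
  exact hg.continuous_fderiv (by exact_mod_cast (by omega : p - 1 ≠ 0))

lemma hessian_psd (p : ℕ) (hp : 2 ≤ p) (f : E → ℝ) (hf : ContDiff ℝ p f)
    (hmin : IsLocalMin f 0) (hcrit : gradient f 0 = 0) (x : E) :
    0 ≤ (inner ℝ (fderiv ℝ (gradient f) 0 x) x : ℝ) := by
  set A := fderiv ℝ (gradient f) 0 with hA
  by_contra hneg
  push_neg at hneg
  set c : ℝ := -(inner ℝ (A x) x : ℝ) with hc
  have hcpos : 0 < c := by simp [hc]; linarith
  -- continuity of the Hessian at 0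
  have hB := hess_cont p hp f hf
  have hcont := (hB.continuousAt (x := 0)).tendsto
  rw [Metric.tendsto_nhds_nhds] at hcont
  obtain ⟨ε, hεpos, hε⟩ := hcont (c / (2 * (‖x‖^2 + 1))) (by positivity)
  -- local min radius
  obtain ⟨r, hrpos, hr⟩ := Metric.eventually_nhds_iff.mp hmin
  -- pick scaling
  set t : ℝ := min ε r / (2 * (‖x‖ + 1)) with ht
  have htpos : 0 < t := by
    apply div_pos (lt_min hεpos hrpos); positivity
  set d : E := t • x with hd
  have hdsmall : ∀ s ∈ Icc (0:ℝ) 1, dist (s • d) 0 < ε := by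
    intro s hs
    rw [dist_zero_right, norm_smul, norm_smul]
    have h1 : ‖x‖ < ‖x‖ + 1 := by linarith
    have : t * ‖x‖ < min ε r / 2 := by
      rw [ht, div_mul_eq_mul_div, div_lt_div_iff₀ (by positivity) (by norm_num)]
      have := lt_min hεpos hrpos
      nlinarith [norm_nonneg x, le_min_iff.mp (le_refl (min ε r))]
    have hmin2 : min ε r / 2 < ε := by
      have := min_le_left ε r; have := lt_min hεpos hrpos; linarith
    have hs1 : ‖s‖ ≤ 1 := by rw [Real.norm_eq_abs, abs_le]; exact ⟨by linarith [hs.1], hs.2⟩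
    calc ‖s‖ * (‖t‖ * ‖x‖) ≤ 1 * (‖t‖ * ‖x‖) := by
          apply mul_le_mul_of_nonneg_right hs1; positivity
      _ = t * ‖x‖ := by rw [one_mul, Real.norm_eq_abs, abs_of_pos htpos]
      _ < ε := lt_trans this hmin2
  -- the second derivative along d is ≤ -c*t^2/2
  have hbound : ∀ s ∈ Icc (0:ℝ) 1,
      (inner ℝ (fderiv ℝ (gradient f) ((0:E) + s • d) d) d : ℝ) ≤ -(c * t^2) / 2 := by
    intro s hs
    have hz := hε (hdsmall s hs)
    rw [dist_eq_norm] at hz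
    set B := fderiv ℝ (gradient f) (s • d) with hBz
    have expand : (inner ℝ (B d) d : ℝ) = t^2 * ((inner ℝ (A x) x : ℝ) + (inner ℝ ((B - A) x) x : ℝ)) := by
      simp [hd, inner_smul_left, inner_smul_right, ContinuousLinearMap.map_smul,
        ContinuousLinearMap.sub_apply, inner_sub_left]
      ring
    have hBA : (inner ℝ ((B - A) x) x : ℝ) ≤ ‖B - A‖ * ‖x‖ * ‖x‖ := by
      calc (inner ℝ ((B - A) x) x : ℝ) ≤ ‖(B - A) x‖ * ‖x‖ := real_inner_le_norm _ _
        _ ≤ ‖B - A‖ * ‖x‖ * ‖x‖ :=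
          mul_le_mul_of_nonneg_right ((B - A).le_opNorm x) (norm_nonneg x)
    have hBA2 : ‖B - A‖ * ‖x‖ * ‖x‖ ≤ c / 2 := by
      have h1 : ‖B - A‖ ≤ c / (2 * (‖x‖^2 + 1)) := le_of_lt hz
      have h2 : (0:ℝ) ≤ ‖x‖ * ‖x‖ := by positivity
      have h4 : c / (2*(‖x‖^2+1)) * (‖x‖*‖x‖) ≤ c/2 := by
        rw [div_mul_eq_mul_div, div_le_div_iff₀ (by positivity) two_pos]
        nlinarith [sq_nonneg ‖x‖]
      calc ‖B - A‖ * ‖x‖ * ‖x‖ = ‖B - A‖ * (‖x‖*‖x‖) := by ring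
        _ ≤ c / (2*(‖x‖^2+1)) * (‖x‖*‖x‖) := mul_le_mul_of_nonneg_right h1 h2
        _ ≤ c/2 := h4
    have : (inner ℝ (B d) d : ℝ) ≤ t^2 * (-c + c/2) := by
      rw [expand]
      apply mul_le_mul_of_nonneg_left _ (by positivity)
      have : (inner ℝ (A x) x : ℝ) = -c := by simp [hc]
      linarith
    simp only [zero_add]
    rw [← hBz]  -- ensure same form
    calc (inner ℝ (B d) d : ℝ) ≤ t^2 * (-c + c/2) := this
      _ = -(c * t^2)/2 := by ring
  -- apply the 1D lemma along s ↦ f(s • d)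
  have hseg := fun s (_ : s ∈ Icc (0:ℝ) 1) => seg_deriv p hp f hf 0 d s
  have hkey := key1d_upper (fun s => f ((0:E) + s • d))
    (fun s => (inner ℝ (gradient f ((0:E) + s • d)) d : ℝ))
    (fun s => (inner ℝ (fderiv ℝ (gradient f) ((0:E) + s • d) d) d : ℝ))
    (fun s hs => (hseg s hs).1) (fun s hs => (hseg s hs).2)
    (by simp [hcrit]) (-(c * t^2)/2) hbound
  have hfd : f 0 ≤ f d := by
    apply hr
    rw [dist_zero_right, hd, norm_smul, Real.norm_eq_abs, abs_of_pos htpos]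
    have : t * ‖x‖ < min ε r / 2 := by
      rw [ht, div_mul_eq_mul_div, div_lt_div_iff₀ (by positivity) (by norm_num)]
      nlinarith [norm_nonneg x, lt_min hεpos hrpos]
    have := min_le_right ε r
    linarith [lt_min hεpos hrpos]
  simp only [zero_add, one_smul, zero_smul] at hkey
  have hct : 0 < c * t^2 := by positivity
  nlinarith [hkey, hfd, hct]

lemma hessian_symm (p : ℕ) (hp : 2 ≤ p) (f : E → ℝ) (hf : ContDiff ℝ p f) (x y : E) :
    (inner ℝ (fderiv ℝ (gradient f) 0 x) y : ℝ) = (inner ℝ (fderiv ℝ (gradient f) 0 y) x : ℝ) := by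
  have hdf : ContDiff ℝ (p-1:ℕ) (fderiv ℝ f) := by
    apply hf.fderiv_right; norm_cast; omega
  have hf' : ∀ z, HasFDerivAt f (fderiv ℝ f z) z := fun z =>
    ((hf.differentiable (by exact_mod_cast (by omega : p ≠ 0))) z).hasFDerivAt
  have hx : HasFDerivAt (fderiv ℝ f) (fderiv ℝ (fderiv ℝ f) 0) 0 :=
    ((hdf.differentiable (by exact_mod_cast (by omega : p - 1 ≠ 0))) 0).hasFDerivAt
  have hsym := second_derivative_symmetric hf' hx
  -- express fderiv of gradient via fderiv of fderiv
  set L : (E →L[ℝ] ℝ) →L[ℝ] E :=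
    (toDual ℝ E).symm.toContinuousLinearEquiv.toContinuousLinearMap with hL
  have hgrad : gradient f = fun z => L (fderiv ℝ f z) := by
    ext z; simp [gradient, hL]
  have hcomp : HasFDerivAt (gradient f) (L.comp (fderiv ℝ (fderiv ℝ f) 0)) 0 := by
    rw [hgrad]
    exact L.hasFDerivAt.comp 0 hx
  rw [hcomp.fderiv]
  have happ : ∀ z w : E, (inner ℝ ((L.comp (fderiv ℝ (fderiv ℝ f) 0)) z) w : ℝ)
      = fderiv ℝ (fderiv ℝ f) 0 z w := by
    intro z w
    simp only [ContinuousLinearMap.coe_comp', Function.comp_apply, hL,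
      ContinuousLinearEquiv.coe_coe, LinearIsometryEquiv.coe_toContinuousLinearEquiv]
    exact toDual_symm_apply
  rw [happ, happ, hsym x y]

end Helpers

section FD
variable {E : Type*} [NormedAddCommGroup E] [InnerProductSpace ℝ E] [FiniteDimensional ℝ E]

lemma quad_zero (A : E →L[ℝ] E) (hpsd : ∀ x : E, 0 ≤ (inner ℝ (A x) x : ℝ))
    (hsym : ∀ x y : E, (inner ℝ (A x) y : ℝ) = (inner ℝ (A y) x : ℝ))
    (d : E) (hd : (inner ℝ (A d) d : ℝ) = 0) : A d = 0 := by
  by_contra hAd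
  set y := A d with hy
  have hyn : 0 < (inner ℝ (A d) (A d) : ℝ) := by
    rw [real_inner_self_eq_norm_sq]
    exact pow_pos (norm_pos_iff.mpr hAd) 2
  have key : ∀ s : ℝ, 0 ≤ -2*s*(inner ℝ (A d) (A d) : ℝ) + s^2 * (inner ℝ (A y) y : ℝ) := by
    intro s
    have h0 := hpsd (d - s • y)
    have : (inner ℝ (A (d - s • y)) (d - s • y) : ℝ)
        = (inner ℝ (A d) d : ℝ) - 2*s*(inner ℝ (A d) y : ℝ) + s^2 * (inner ℝ (A y) y : ℝ) := by
      rw [map_sub, map_smul, inner_sub_left, inner_sub_right, inner_sub_right,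
        inner_smul_left, inner_smul_right, inner_smul_left, inner_smul_right]
      have := hsym y d
      simp only [RCLike.star_def, starRingEnd_apply, star_trivial]
      rw [hsym y d]
      ring
    rw [this, hd, hy] at h0
    linarith
  rcases le_or_gt (inner ℝ (A y) y : ℝ) 0 with h | h
  · have := key 1; nlinarith
  · have hkey := key ((inner ℝ (A d) (A d) : ℝ) / (inner ℝ (A y) y : ℝ))
    have hne : (inner ℝ (A y) y : ℝ) ≠ 0 := ne_of_gt h
    have hval : -2*((inner ℝ (A d) (A d) : ℝ) / (inner ℝ (A y) y : ℝ))*(inner ℝ (A d) (A d) : ℝ)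
        + ((inner ℝ (A d) (A d) : ℝ) / (inner ℝ (A y) y : ℝ))^2 * (inner ℝ (A y) y : ℝ)
        = -((inner ℝ (A d) (A d) : ℝ)^2 / (inner ℝ (A y) y : ℝ)) := by
      field_simp; ring
    rw [hval] at hkey
    have : 0 < (inner ℝ (A d) (A d) : ℝ)^2 / (inner ℝ (A y) y : ℝ) :=
      div_pos (pow_pos hyn 2) h
    linarith

lemma posdef_on_orth (A : E →L[ℝ] E) (hpsd : ∀ x : E, 0 ≤ (inner ℝ (A x) x : ℝ))
    (hsym : ∀ x y : E, (inner ℝ (A x) y : ℝ) = (inner ℝ (A y) x : ℝ))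
    (T : Submodule ℝ E) (hT : T = LinearMap.ker (A : E →ₗ[ℝ] E)) :
    ∃ m : ℝ, 0 < m ∧ ∀ d : Tᗮ, m * ‖d‖^2 ≤ (inner ℝ (A d) (d : E) : ℝ) := by
  have hpos : ∀ d : Tᗮ, d ≠ 0 → 0 < (inner ℝ (A d) (d : E) : ℝ) := by
    intro d hd
    rcases lt_or_eq_of_le (hpsd (d : E)) with h | h
    · exact h
    · exfalso
      have hker : A d = 0 := quad_zero A hpsd hsym _ h.symm
      have hmemT : (d : E) ∈ T := by
        have hmem2 : (d : E) ∈ LinearMap.ker (A : E →ₗ[ℝ] E) := hker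
        rwa [← hT] at hmem2
      have : (inner ℝ (d : E) (d : E) : ℝ) = 0 :=
        Submodule.inner_right_of_mem_orthogonal hmemT d.2
      exact hd (Subtype.ext (inner_self_eq_zero.mp this))
  by_cases hS : ∃ e : Tᗮ, ‖e‖ = 1
  · have hcomp : IsCompact (Metric.sphere (0 : Tᗮ) 1) := isCompact_sphere _ _
    have hne : (Metric.sphere (0 : Tᗮ) 1).Nonempty := by
      obtain ⟨e, he⟩ := hS; exact ⟨e, by simpa using he⟩
    have hcont : Continuous (fun e : Tᗮ => (inner ℝ (A e) (e : E) : ℝ)) := by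
      continuity
    obtain ⟨e₀, he₀, hmin⟩ := hcomp.exists_isMinOn hne hcont.continuousOn
    have he₀1 : ‖e₀‖ = 1 := by simpa using he₀
    have hm : 0 < (inner ℝ (A e₀) (e₀ : E) : ℝ) := by
      apply hpos; intro h0; rw [h0] at he₀1; simp at he₀1
    refine ⟨_, hm, fun d => ?_⟩
    by_cases hd0 : d = 0
    · simp [hd0]
    · set e : Tᗮ := ‖d‖⁻¹ • d with he
      have hdn : (0:ℝ) < ‖d‖ := norm_pos_iff.2 hd0
      have hee : ‖e‖ = 1 := by
        rw [he, norm_smul, norm_inv, norm_norm, inv_mul_cancel₀ (ne_of_gt hdn)]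
      have hmem : e ∈ Metric.sphere (0 : Tᗮ) 1 := by simpa using hee
      have h1 := hmin hmem
      have hscale : (inner ℝ (A e) (e : E) : ℝ) = ‖d‖⁻¹^2 * (inner ℝ (A d) (d : E) : ℝ) := by
        rw [he]
        push_cast
        rw [map_smul, inner_smul_left, inner_smul_right]
        simp only [RCLike.star_def, starRingEnd_apply, star_trivial]
        ring
      have h2 : (inner ℝ (A e₀) (e₀ : E) : ℝ) ≤ ‖d‖⁻¹^2 * (inner ℝ (A d) (d : E) : ℝ) := by
        rw [← hscale]; exact h1
      have h3 : ‖d‖^2 * (inner ℝ (A e₀) (e₀ : E) : ℝ) ≤ (inner ℝ (A d) (d : E) : ℝ) := by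
        have := mul_le_mul_of_nonneg_left h2 (le_of_lt (by positivity : (0:ℝ) < ‖d‖^2))
        have hone : ‖d‖^2 * ‖d‖⁻¹^2 = 1 := by
          rw [← mul_pow, mul_inv_cancel₀ (ne_of_gt hdn), one_pow]
        calc ‖d‖^2 * (inner ℝ (A e₀) (e₀ : E) : ℝ) ≤ ‖d‖^2 * (‖d‖⁻¹^2 * (inner ℝ (A d) (d : E) : ℝ)) := this
          _ = (‖d‖^2 * ‖d‖⁻¹^2) * (inner ℝ (A d) (d : E) : ℝ) := by ring
          _ = (inner ℝ (A d) (d : E) : ℝ) := by rw [hone, one_mul]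
      linarith [h3]
  · push_neg at hS
    refine ⟨1, one_pos, fun d => ?_⟩
    by_cases hd0 : d = 0
    · simp [hd0]
    · exfalso
      have hdn : (0:ℝ) < ‖d‖ := norm_pos_iff.2 hd0
      have : ‖(‖d‖⁻¹ • d : Tᗮ)‖ = 1 := by
        rw [norm_smul, norm_inv, norm_norm, inv_mul_cancel₀ (ne_of_gt hdn)]
      exact (hS _) this

end FD

/-- **The Morse ravine is a ravine (Morse lemma with parameters).**
If `f : E → ℝ` is `C^p`-smooth (`p ≥ 2`) with a local minimizer at `0`,
`T := ker(∇²f(0))`, and `v : U → V` is the `C^{p-1}` graphical representation of the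
Morse ravine at `0` (so `v 0 = 0`, `Dv(0) = 0`, and `P_{Tᴗ}(∇f(u + v u)) = 0` on `U`),
then there are constants `c₁, c₂ > 0` and a neighborhood `W` of `0` such that
`c₁‖w − v u‖² ≤ f(u + w) − f(u + v u) ≤ c₂‖w − v u‖²` whenever `u ∈ U`, `w ∈ V`
and `u + w ∈ W`. -/
theorem morse_ravine_is_ravine
    {E : Type*} [NormedAddCommGroup E] [InnerProductSpace ℝ E] [FiniteDimensional ℝ E]
    (p : ℕ) (hp : 2 ≤ p) (f : E → ℝ) (hf : ContDiff ℝ p f)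
    (hmin : IsLocalMin f 0) (hcrit : gradient f 0 = 0)
    (T : Submodule ℝ E) (hT : T = LinearMap.ker (fderiv ℝ (gradient f) 0 : E →ₗ[ℝ] E))
    (U : Set T) (hU : IsOpen U) (hU0 : (0 : T) ∈ U)
    (V : Set Tᗮ) (hV : IsOpen V) (hV0 : (0 : Tᗮ) ∈ V)
    (v : T → Tᗮ) (hv : ContDiffOn ℝ (p - 1 : ℕ) v U)
    (hv0 : v 0 = 0) (hdv : fderiv ℝ v 0 = 0)
    (hvV : ∀ u ∈ U, v u ∈ V)
    (hgraph : ∀ u ∈ U, Tᗮ.orthogonalProjectionOnto (gradient f ((u : E) + ((v u : Tᗮ) : E))) = 0) :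
    ∃ c₁ c₂ : ℝ, 0 < c₁ ∧ 0 < c₂ ∧ ∃ W ∈ nhds (0 : E),
      ∀ u ∈ U, ∀ w ∈ V, (u : E) + (w : E) ∈ W →
        c₁ * ‖w - v u‖ ^ 2 ≤ f ((u : E) + (w : E)) - f ((u : E) + ((v u : Tᗮ) : E)) ∧
        f ((u : E) + (w : E)) - f ((u : E) + ((v u : Tᗮ) : E)) ≤ c₂ * ‖w - v u‖ ^ 2 := by
  classical
  set A : E →L[ℝ] E := fderiv ℝ (gradient f) 0 with hA
  obtain ⟨m, hm, hquad⟩ := posdef_on_orth A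
    (hessian_psd p hp f hf hmin hcrit) (hessian_symm p hp f hf) T hT
  -- continuity of the Hessian at 0 : get δ with ‖B z - A‖ ≤ m/2 for ‖z‖ < δ
  have hB := hess_cont p hp f hf
  have hcont := (hB.continuousAt (x := 0)).tendsto
  rw [Metric.tendsto_nhds_nhds] at hcont
  obtain ⟨δ, hδpos, hδ⟩ := hcont (m/2) (by positivity)
  -- continuity of v at 0
  have hvc : ContinuousAt v 0 := (hv.continuousOn.continuousAt (hU.mem_nhds hU0))
  rw [Metric.continuousAt_iff] at hvc
  obtain ⟨δ₁, hδ₁pos, hδ₁⟩ := hvc (δ/4) (by positivity)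
  refine ⟨m/4, (‖A‖ + m/2)/2, by positivity, by positivity,
    Metric.ball (0:E) (min δ₁ (δ/4)), Metric.ball_mem_nhds _ (by positivity), ?_⟩
  intro u hu w hw hW
  rw [Metric.mem_ball, dist_zero_right] at hW
  -- basic norms
  have horth : (inner ℝ (u : E) (w : E) : ℝ) = 0 :=
    Submodule.inner_right_of_mem_orthogonal u.2 w.2
  have hnorm2 : ‖(u:E) + (w:E)‖^2 = ‖(u:E)‖^2 + ‖(w:E)‖^2 := by
    rw [norm_add_sq_real, horth]; ring
  have hun : ‖(u:E)‖ ≤ ‖(u:E) + (w:E)‖ := by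
    have h1 : ‖(u:E)‖^2 ≤ ‖(u:E) + (w:E)‖^2 := by
      rw [hnorm2]; exact le_add_of_nonneg_right (sq_nonneg _)
    exact (pow_le_pow_iff_left₀ (norm_nonneg _) (norm_nonneg _) two_ne_zero).mp h1
  have hwn : ‖(w:E)‖ ≤ ‖(u:E) + (w:E)‖ := by
    have h1 : ‖(w:E)‖^2 ≤ ‖(u:E) + (w:E)‖^2 := by
      rw [hnorm2]; exact le_add_of_nonneg_left (sq_nonneg _)
    exact (pow_le_pow_iff_left₀ (norm_nonneg _) (norm_nonneg _) two_ne_zero).mp h1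
  have huδ₁ : ‖(u:E)‖ < δ₁ := lt_of_le_of_lt hun (lt_of_lt_of_le hW (min_le_left _ _))
  have huδ4 : ‖(u:E)‖ < δ/4 := lt_of_le_of_lt hun (lt_of_lt_of_le hW (min_le_right _ _))
  have hwδ4 : ‖(w:E)‖ < δ/4 := lt_of_le_of_lt hwn (lt_of_lt_of_le hW (min_le_right _ _))
  have hvu : ‖((v u : Tᗮ) : E)‖ < δ/4 := by
    have := hδ₁ (show dist u 0 < δ₁ by rwa [dist_zero_right])
    rwa [hv0, dist_zero_right] at this
  -- the segment stays in the δ-ball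
  set x : E := (u : E) + ((v u : Tᗮ) : E) with hx
  set dd : Tᗮ := w - v u with hdd
  set d : E := (dd : E) with hd
  have hseg_norm : ∀ s ∈ Icc (0:ℝ) 1, dist (x + s • d) 0 < δ := by
    intro s hs
    rw [dist_zero_right]
    have h1 : ‖s • d‖ ≤ ‖d‖ := by
      rw [norm_smul, Real.norm_eq_abs, abs_of_nonneg hs.1]
      nlinarith [norm_nonneg d, hs.2]
    have h2 : ‖d‖ ≤ ‖(w:E)‖ + ‖((v u : Tᗮ) : E)‖ := by
      rw [hd, hdd]
      push_cast
      exact norm_sub_le _ _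
    calc ‖x + s • d‖ ≤ ‖x‖ + ‖s • d‖ := norm_add_le _ _
      _ ≤ (‖(u:E)‖ + ‖((v u : Tᗮ) : E)‖) + (‖(w:E)‖ + ‖((v u : Tᗮ) : E)‖) := by
          have := norm_add_le (u:E) ((v u : Tᗮ) : E)
          have := le_trans h1 h2
          rw [hx]; push_cast
          linarith [norm_add_le (u:E) ((v u : Tᗮ) : E)]
      _ < δ := by linarith
  -- second-derivative bounds along the segment
  have hnd : ‖d‖ = ‖w - v u‖ := rfl
  have hbounds : ∀ s ∈ Icc (0:ℝ) 1,
      m/2 * ‖w - v u‖^2 ≤ (inner ℝ (fderiv ℝ (gradient f) (x + s • d) d) d : ℝ) ∧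
      (inner ℝ (fderiv ℝ (gradient f) (x + s • d) d) d : ℝ) ≤ (‖A‖ + m/2) * ‖w - v u‖^2 := by
    intro s hs
    set Bz := fderiv ℝ (gradient f) (x + s • d) with hBz
    have hdist := hδ (hseg_norm s hs)
    rw [dist_eq_norm, ← hA] at hdist
    have hsplit : (inner ℝ (Bz d) d : ℝ) = (inner ℝ (A d) d : ℝ) + (inner ℝ ((Bz - A) d) d : ℝ) := by
      rw [ContinuousLinearMap.sub_apply, inner_sub_left]
      ring_nf
    have herr : |(inner ℝ ((Bz - A) d) d : ℝ)| ≤ m/2 * ‖d‖^2 := by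
      calc |(inner ℝ ((Bz - A) d) d : ℝ)| ≤ ‖(Bz - A) d‖ * ‖d‖ := abs_real_inner_le_norm _ _
        _ ≤ (‖Bz - A‖ * ‖d‖) * ‖d‖ :=
            mul_le_mul_of_nonneg_right (ContinuousLinearMap.le_opNorm _ _) (norm_nonneg _)
        _ ≤ (m/2 * ‖d‖) * ‖d‖ := by
            have := mul_le_mul_of_nonneg_right (le_of_lt hdist) (norm_nonneg d)
            exact mul_le_mul_of_nonneg_right
              (mul_le_mul_of_nonneg_right (le_of_lt hdist) (norm_nonneg d)) (norm_nonneg d)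
        _ = m/2 * ‖d‖^2 := by ring
    have hAd_low : m * ‖w - v u‖^2 ≤ (inner ℝ (A d) d : ℝ) := by
      have h := hquad dd
      have hcoe : ‖dd‖ = ‖w - v u‖ := by rw [hdd]
      rw [hcoe] at h
      exact h
    have hAd_up : (inner ℝ (A d) d : ℝ) ≤ ‖A‖ * ‖w - v u‖^2 := by
      calc (inner ℝ (A d) d : ℝ) ≤ ‖A d‖ * ‖d‖ := real_inner_le_norm _ _
        _ ≤ (‖A‖ * ‖d‖) * ‖d‖ :=
            mul_le_mul_of_nonneg_right (ContinuousLinearMap.le_opNorm _ _) (norm_nonneg _)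
        _ = ‖A‖ * ‖d‖^2 := by ring
        _ = ‖A‖ * ‖w - v u‖^2 := by rw [hnd]
    have habs := abs_le.mp herr
    rw [hnd] at herr habs
    constructor
    · rw [hsplit]; linarith [habs.1]
    · rw [hsplit]; linarith [habs.2]
  -- first derivative vanishes at s = 0
  have hcrit0 : (inner ℝ (gradient f x) d : ℝ) = 0 := by
    have hP : Tᗮ.orthogonalProjectionOnto (gradient f x) = 0 := hgraph u hu
    have hmem : gradient f x ∈ Tᗮᗮ := by
      exact Submodule.orthogonalProjectionOnto_eq_zero_iff.mp hP
    have : (inner ℝ d (gradient f x) : ℝ) = 0 :=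
      Submodule.inner_right_of_mem_orthogonal (K := Tᗮ) dd.2 hmem
    rwa [real_inner_comm] at this
  -- apply the 1D estimates
  have hseg := fun s (_ : s ∈ Icc (0:ℝ) 1) => seg_deriv p hp f hf x d s
  have hψ'0 : (inner ℝ (gradient f (x + (0:ℝ) • d)) d : ℝ) = 0 := by
    rw [zero_smul, add_zero]; exact hcrit0
  have hlow := key1d_lower (fun s => f (x + s • d))
    (fun s => (inner ℝ (gradient f (x + s • d)) d : ℝ))
    (fun s => (inner ℝ (fderiv ℝ (gradient f) (x + s • d) d) d : ℝ))
    (fun s hs => (hseg s hs).1) (fun s hs => (hseg s hs).2) hψ'0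
    (m/2 * ‖w - v u‖^2) (fun s hs => (hbounds s hs).1)
  have hup := key1d_upper (fun s => f (x + s • d))
    (fun s => (inner ℝ (gradient f (x + s • d)) d : ℝ))
    (fun s => (inner ℝ (fderiv ℝ (gradient f) (x + s • d) d) d : ℝ))
    (fun s hs => (hseg s hs).1) (fun s hs => (hseg s hs).2) hψ'0
    ((‖A‖ + m/2) * ‖w - v u‖^2) (fun s hs => (hbounds s hs).2)
  have hx1 : x + (1:ℝ) • d = (u : E) + (w : E) := by
    rw [one_smul, hx, hd, hdd]
    push_cast
    abel
  have hx0 : x + (0:ℝ) • d = (u : E) + ((v u : Tᗮ) : E) := by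
    rw [zero_smul, add_zero, hx]
  rw [hx1, hx0] at hlow hup
  rw [show (x : E) = (u : E) + ((v u : Tᗮ) : E) from hx,
    show (dd : Tᗮ) = w - v u from hdd]
  constructor
  · calc m/4 * ‖w - v u‖^2 = (m/2 * ‖w - v u‖^2) / 2 := by ring
      _ ≤ _ := hlow
  · calc f ((u : E) + (w : E)) - f ((u : E) + ((v u : Tᗮ) : E))
        ≤ ((‖A‖ + m/2) * ‖w - v u‖^2) / 2 := hup
      _ = (‖A‖ + m/2)/2 * ‖w - v u‖^2 := by ring
end

section
/- Let E be a finite-dimensional real inner product space, let M ⊆ E, let x̄ ∈ M, and let U be an open neighborhood of x̄. Suppose P : U → E is a C¹-smooth nearest-point projection onto M, i.e. P(x) ∈ M and ‖x − P(x)‖ = dist(x, M) for all x ∈ U, and P(x) = x for x ∈ M ∩ U. Suppose R : U → E is C¹-smooth with R(x) ∈ M for all x ∈ U, R(x) = x for all x ∈ M ∩ U, and DR(x̄) = DP(x̄) (the Fréchet derivatives at x̄ coincide). Then ‖R(x) − P(x)‖ = o(dist(x, M)) as x → x̄; that is, for every ε > 0 there is δ > 0 such that ‖x − x̄‖ < δ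 implies ‖R(x) − P(x)‖ ≤ ε · dist(x, M). In particular, there exist constants 0 < c ≤ C and δ > 0 such that c · dist(x, M) ≤ ‖x − R(x)‖ ≤ C · dist(x, M) whenever ‖x − x̄‖ < δ. -/
/-- **Retractions as approximate projections.**
If `P` is a `C¹` nearest-point projection onto `M ⊆ E` on a neighborhood `U` of
`xb ∈ M`, and `R` is a `C¹` map into `M` that restricts to the identity on `M ∩ U`
with `DR(xb) = DP(xb)`, then `‖R x − P x‖ = o(dist(x, M))` as `x → xb`; in particular
`‖x − R x‖ = Θ(dist(x, M))` near `xb`. -/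
theorem retraction_approx_projection
    {E : Type*} [NormedAddCommGroup E] [InnerProductSpace ℝ E] [FiniteDimensional ℝ E]
    (M : Set E) (xb : E) (hxbM : xb ∈ M)
    (U : Set E) (hU : IsOpen U) (hxbU : xb ∈ U)
    (P : E → E) (hP : ContDiffOn ℝ 1 P U)
    (hPM : ∀ x ∈ U, P x ∈ M)
    (hPdist : ∀ x ∈ U, ‖x - P x‖ = Metric.infDist x M)
    (hPid : ∀ x ∈ M ∩ U, P x = x)
    (R : E → E) (hR : ContDiffOn ℝ 1 R U)
    (hRM : ∀ x ∈ U, R x ∈ M)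
    (hRid : ∀ x ∈ M ∩ U, R x = x)
    (hDR : fderiv ℝ R xb = fderiv ℝ P xb) :
    (∀ ε > (0 : ℝ), ∃ δ > (0 : ℝ), ∀ x, ‖x - xb‖ < δ →
        ‖R x - P x‖ ≤ ε * Metric.infDist x M) ∧
    ∃ c C δ : ℝ, 0 < c ∧ c ≤ C ∧ 0 < δ ∧
      ∀ x, ‖x - xb‖ < δ →
        c * Metric.infDist x M ≤ ‖x - R x‖ ∧ ‖x - R x‖ ≤ C * Metric.infDist x M := by
  have hPx : ∀ x ∈ U, DifferentiableAt ℝ P x := fun x hx =>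
    (hP.differentiableOn one_ne_zero).differentiableAt (hU.mem_nhds hx)
  have hRx : ∀ x ∈ U, DifferentiableAt ℝ R x := fun x hx =>
    (hR.differentiableOn one_ne_zero).differentiableAt (hU.mem_nhds hx)
  have hg : ContinuousOn (fun y => fderiv ℝ R y - fderiv ℝ P y) U :=
    (hR.continuousOn_fderiv_of_isOpen hU le_rfl).sub
      (hP.continuousOn_fderiv_of_isOpen hU le_rfl)
  have hgc : Filter.Tendsto (fun y => fderiv ℝ R y - fderiv ℝ P y) (nhds xb) (nhds 0) := by
    have := hg.continuousAt (hU.mem_nhds hxbU)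
    rw [ContinuousAt] at this
    simpa [hDR] using this
  have hPxb : P xb = xb := hPid xb ⟨hxbM, hxbU⟩
  have hPcont : ContinuousAt P xb := (hPx xb hxbU).continuousAt
  -- key estimate
  have key : ∀ ε > (0:ℝ), ∃ δ > (0:ℝ), Metric.ball xb δ ⊆ U ∧
      ∀ x, ‖x - xb‖ < δ → ‖R x - P x‖ ≤ ε * Metric.infDist x M := by
    intro ε hε
    have h1 : {y | ‖fderiv ℝ R y - fderiv ℝ P y‖ < ε} ∈ nhds xb := by
      filter_upwards [hgc (Metric.ball_mem_nhds 0 hε)] with y hy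
      simpa [Metric.mem_ball, dist_zero_right] using hy
    obtain ⟨δ₁, hδ₁pos, hδ₁⟩ := Metric.mem_nhds_iff.1 (Filter.inter_mem h1 (hU.mem_nhds hxbU))
    have hball : Metric.ball xb δ₁ ⊆ U := fun y hy => (hδ₁ hy).2
    have hder : ∀ y ∈ Metric.ball xb δ₁, ‖fderiv ℝ R y - fderiv ℝ P y‖ ≤ ε :=
      fun y hy => le_of_lt (hδ₁ hy).1
    -- continuity of P : choose δ₂ so that P maps ball δ₂ into ball δ₁
    obtain ⟨δ₂, hδ₂pos, hδ₂⟩ : ∃ δ₂ > 0, ∀ x, dist x xb < δ₂ → dist (P x) xb < δ₁ := by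
      have := Metric.continuousAt_iff.1 hPcont δ₁ hδ₁pos
      obtain ⟨d, hd, hdp⟩ := this
      exact ⟨d, hd, fun x hx => by simpa [hPxb] using hdp hx⟩
    refine ⟨min δ₁ δ₂, lt_min hδ₁pos hδ₂pos,
      fun y hy => hball (Metric.mem_ball.2 (lt_of_lt_of_le (Metric.mem_ball.1 hy) (min_le_left _ _))),
      fun x hx => ?_⟩
    have hxball : x ∈ Metric.ball xb δ₁ := by
      rw [Metric.mem_ball, dist_eq_norm]
      exact lt_of_lt_of_le hx (min_le_left _ _)
    have hxU : x ∈ U := hball hxball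
    have hPxball : P x ∈ Metric.ball xb δ₁ := by
      rw [Metric.mem_ball]
      exact hδ₂ x (by rw [dist_eq_norm]; exact lt_of_lt_of_le hx (min_le_right _ _))
    have hPxU : P x ∈ U := hball hPxball
    -- F := R - P vanishes at P x
    have hF0 : R (P x) - P (P x) = 0 := by
      rw [hRid (P x) ⟨hPM x hxU, hPxU⟩, hPid (P x) ⟨hPM x hxU, hPxU⟩, sub_self]
    have hdiff : ∀ y ∈ Metric.ball xb δ₁, DifferentiableAt ℝ (fun z => R z - P z) y :=
      fun y hy => (hRx y (hball hy)).sub (hPx y (hball hy))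
    have hfd : ∀ y ∈ Metric.ball xb δ₁, ‖fderiv ℝ (fun z => R z - P z) y‖ ≤ ε := by
      intro y hy
      rw [fderiv_fun_sub (hRx y (hball hy)) (hPx y (hball hy))]
      exact hder y hy
    have := (convex_ball xb δ₁).norm_image_sub_le_of_norm_fderiv_le hdiff hfd hPxball hxball
    calc ‖R x - P x‖ = ‖(R x - P x) - (R (P x) - P (P x))‖ := by rw [hF0, sub_zero]
      _ ≤ ε * ‖x - P x‖ := this
      _ = ε * Metric.infDist x M := by rw [hPdist x hxU]
  constructor
  · intro ε hε
    obtain ⟨δ, hδ, _, h⟩ := key ε hε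
    exact ⟨δ, hδ, h⟩
  · obtain ⟨δ, hδ, hballU, h⟩ := key (1/2) (by norm_num)
    refine ⟨1/2, 3/2, δ, by norm_num, by norm_num, hδ, fun x hx => ?_⟩
    have hxU : x ∈ U := hballU (Metric.mem_ball.2 (by rwa [dist_eq_norm]))
    have hd : ‖x - P x‖ = Metric.infDist x M := hPdist x hxU
    have h1 : ‖R x - P x‖ ≤ (1/2) * Metric.infDist x M := h x hx
    have h2 : ‖x - P x‖ - ‖x - R x‖ ≤ ‖(x - P x) - (x - R x)‖ := norm_sub_norm_le _ _
    have h3 : ‖(x - P x) - (x - R x)‖ = ‖R x - P x‖ := congrArg norm (by abel)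
    have h4 : ‖x - R x‖ ≤ ‖x - P x‖ + ‖(x - P x) - (x - R x)‖ := by
      have := norm_sub_le (x - P x) ((x - P x) - (x - R x))
      simpa using this
    constructor <;> [skip; skip] <;> rw [← hd] at h1 ⊢ <;> rw [h3] at h2 h4 <;> linarith
end

section
/- Let E be a finite-dimensional real inner product space, f : E → ℝ a function with minimal value f* attained on its set of minimizers S, and x̄ ∈ S. Let M ⊆ E, let U be a neighborhood of x̄, and let R : U → M be a map continuous at x̄ with R(x̄) = x̄ satisfying the ravine inequality f(x) − f(R(x)) ≥ C_lb · ‖x − R(x)‖² for all x ∈ U, for some constant C_lb > 0. Fix a real number p > 2, and suppose there exist δ > 0 and D_lb > 0 such that f(y) − f* ≥ D_lb · dist^p(y, S) for all y ∈ M with ‖y − x̄‖ < δ. Then there exist δ′ > 0 and D′_lb > 0 such that f(x) − f* ≥ D′_lb · dist^p(x, S) for all x with ‖x − x̄‖ < δ′. -/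
lemma real_rpow_add_le {a b p : ℝ} (ha : 0 ≤ a) (hb : 0 ≤ b) (hp : 1 ≤ p) :
    (a + b) ^ p ≤ 2 ^ (p - 1) * (a ^ p + b ^ p) := by
  lift a to NNReal using ha
  lift b to NNReal using hb
  have := NNReal.rpow_add_le_mul_rpow_add_rpow a b hp
  exact_mod_cast this

/-- **Extending growth from the ravine.**
Suppose `f : E → ℝ` has minimal value `fstar`, attained exactly on `S`, and that `f`
admits a ravine `M` at `xb ∈ S` with retraction `R` (continuous at `xb`, `R xb = xb`,
`f x − f (R x) ≥ Clb‖x − R x‖²` on a neighborhood `U`).  If `f` grows like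
`dist^p(·, S)` (`p > 2`) on `M` near `xb`, then it grows like `dist^p(·, S)` on a
full neighborhood of `xb`. -/
theorem growth_extends_from_ravine
    {E : Type*} [NormedAddCommGroup E] [InnerProductSpace ℝ E] [FiniteDimensional ℝ E]
    (f : E → ℝ) (fstar : ℝ) (hmin : ∀ x, fstar ≤ f x)
    (S : Set E) (hS : S = {x | f x = fstar}) (xb : E) (hxb : xb ∈ S)
    (M : Set E) (U : Set E) (hU : U ∈ nhds xb)
    (R : E → E) (hRM : ∀ x ∈ U, R x ∈ M)
    (hRc : ContinuousAt R xb) (hRxb : R xb = xb)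
    (Clb : ℝ) (hClb : 0 < Clb)
    (hrav : ∀ x ∈ U, Clb * ‖x - R x‖ ^ 2 ≤ f x - f (R x))
    (p : ℝ) (hp : 2 < p)
    (δ Dlb : ℝ) (hδ : 0 < δ) (hDlb : 0 < Dlb)
    (hgrowth : ∀ y ∈ M, ‖y - xb‖ < δ → Dlb * Metric.infDist y S ^ p ≤ f y - fstar) :
    ∃ δ' Dlb' : ℝ, 0 < δ' ∧ 0 < Dlb' ∧
      ∀ x, ‖x - xb‖ < δ' → Dlb' * Metric.infDist x S ^ p ≤ f x - fstar := by
  -- continuity of R at xb, landing in the small ball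
  have hcont : Filter.Tendsto R (nhds xb) (nhds xb) := by
    have := hRc
    rwa [ContinuousAt, hRxb] at this
  have hball : Metric.ball xb (min δ (1/2)) ∈ nhds xb :=
    Metric.ball_mem_nhds _ (lt_min hδ (by norm_num))
  have hV : U ∩ R ⁻¹' Metric.ball xb (min δ (1/2)) ∩ Metric.ball xb (1/2) ∈ nhds xb :=
    Filter.inter_mem (Filter.inter_mem hU (hcont hball))
      (Metric.ball_mem_nhds _ (by norm_num))
  obtain ⟨δ', hδ'pos, hδ'sub⟩ := Metric.mem_nhds_iff.1 hV
  set c := min Clb Dlb with hc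
  have hcpos : 0 < c := lt_min hClb hDlb
  have h2p : (0:ℝ) < 2 ^ (p - 1) := Real.rpow_pos_of_pos (by norm_num) _
  refine ⟨δ', c / 2 ^ (p - 1), hδ'pos, div_pos hcpos h2p, fun x hx => ?_⟩
  have hxV : x ∈ U ∩ R ⁻¹' Metric.ball xb (min δ (1/2)) ∩ Metric.ball xb (1/2) := by
    apply hδ'sub
    simpa [Metric.mem_ball, dist_eq_norm] using hx
  obtain ⟨⟨hxU, hxR⟩, hx12⟩ := hxV
  rw [Set.mem_preimage, Metric.mem_ball, dist_eq_norm] at hxR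
  rw [Metric.mem_ball, dist_eq_norm] at hx12
  set a := ‖x - R x‖ with ha
  set d := Metric.infDist (R x) S with hd
  have ha0 : 0 ≤ a := norm_nonneg _
  have hd0 : 0 ≤ d := Metric.infDist_nonneg
  have ha1 : a ≤ 1 := by
    have : a ≤ ‖x - xb‖ + ‖R x - xb‖ := by
      have : x - R x = (x - xb) - (R x - xb) := by abel
      rw [ha, this]
      exact norm_sub_le _ _
    have h2 : ‖R x - xb‖ < 1/2 := lt_of_lt_of_le hxR (min_le_right _ _)
    linarith
  -- a ^ p ≤ a ^ 2
  have hap : a ^ p ≤ a ^ (2:ℕ) := by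
    rcases eq_or_lt_of_le ha0 with h | h
    · rw [← h]
      rw [Real.zero_rpow (by positivity)]
      positivity
    · calc a ^ p ≤ a ^ (2:ℝ) := Real.rpow_le_rpow_of_exponent_ge h ha1 hp.le
        _ = a ^ (2:ℕ) := by norm_num
  have h1 : Clb * a ^ (2:ℕ) ≤ f x - f (R x) := hrav x hxU
  have h2 : Dlb * d ^ p ≤ f (R x) - fstar :=
    hgrowth (R x) (hRM x hxU) (lt_of_lt_of_le hxR (min_le_left _ _))
  have hsum : c * (a ^ p + d ^ p) ≤ f x - fstar := by
    have e1 : c * a ^ p ≤ Clb * a ^ (2:ℕ) := by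
      have := mul_le_mul (min_le_left Clb Dlb) hap (by positivity) hClb.le
      simpa using this
    have e2 : c * d ^ p ≤ Dlb * d ^ p := by
      apply mul_le_mul_of_nonneg_right (min_le_right _ _) (by positivity)
    nlinarith
  have hdist : Metric.infDist x S ≤ a + d := by
    have := Metric.infDist_le_infDist_add_dist (x := x) (y := R x) (s := S)
    rw [dist_eq_norm] at this
    linarith
  have hi0 : 0 ≤ Metric.infDist x S := Metric.infDist_nonneg
  have hpow : Metric.infDist x S ^ p ≤ 2 ^ (p - 1) * (a ^ p + d ^ p) :=
    le_trans (Real.rpow_le_rpow hi0 hdist (by linarith))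
      (real_rpow_add_le ha0 hd0 (by linarith))
  calc c / 2 ^ (p - 1) * Metric.infDist x S ^ p
      ≤ c / 2 ^ (p - 1) * (2 ^ (p - 1) * (a ^ p + d ^ p)) := by
        apply mul_le_mul_of_nonneg_left hpow (by positivity)
    _ = c * (a ^ p + d ^ p) := by field_simp
    _ ≤ f x - fstar := hsum
end

section
/- Let E be a finite-dimensional real inner product space, M ⊆ E a closed set, x̄ ∈ M, and U an open neighborhood of x̄. Let f : E → ℝ be C²-smooth with ∇f Lipschitz continuous on U. Assume that the squared distance function φ(x) := dist(x, M)² is differentiable on U with ∇φ Lipschitz continuous on U and ‖∇φ(x)‖ = 2 · dist(x, M) for x ∈ U. Let R : U → E be C²-smooth with R(x) ∈ M for all x ∈ U, and suppose there are constants 0 < c₁ ≤ c₂ with c₁ · dist²(x, M) ≤ f(x) − f(R(x)) ≤ c₂ · dist²(x, M) for all x ∈ U. Then there exist C > 0 and δ > 0 such that ‖∇f(x) − ∇(f ∘ R)(x)‖ ≤ C · dist(x, M) for all x with ‖x − x̄‖ < δ. -/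
open InnerProductSpace Metric

set_option maxHeartbeats 1000000 in
/-- **Gradient control near a ravine.**
Let `M ⊆ E` be closed, `xb ∈ M`, `U` an open neighborhood of `xb`, and `f : E → ℝ`
`C²`-smooth with `∇f` Lipschitz on `U`.  Assume the squared distance
`φ(x) = dist²(x, M)` is differentiable on `U` with `∇φ` Lipschitz on `U` and
`‖∇φ(x)‖ = 2 dist(x, M)`.  If `R : U → M` is `C²` and
`c₁ dist²(x,M) ≤ f x − f (R x) ≤ c₂ dist²(x,M)` on `U`, then
`‖∇f(x) − ∇(f ∘ R)(x)‖ ≤ C · dist(x, M)` near `xb`. -/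
theorem gradient_control
    {E : Type*} [NormedAddCommGroup E] [InnerProductSpace ℝ E] [FiniteDimensional ℝ E]
    (M : Set E) (hM : IsClosed M) (xb : E) (hxbM : xb ∈ M)
    (U : Set E) (hU : IsOpen U) (hxbU : xb ∈ U)
    (f : E → ℝ) (hf : ContDiff ℝ 2 f)
    (Lf : NNReal) (hfLip : LipschitzOnWith Lf (gradient f) U)
    (hφdiff : ∀ x ∈ U, DifferentiableAt ℝ (fun y => Metric.infDist y M ^ 2) x)
    (Lφ : NNReal)
    (hφLip : LipschitzOnWith Lφ (gradient (fun y => Metric.infDist y M ^ 2)) U)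
    (hφgrad : ∀ x ∈ U,
      ‖gradient (fun y => Metric.infDist y M ^ 2) x‖ = 2 * Metric.infDist x M)
    (R : E → E) (hR : ContDiffOn ℝ 2 R U) (hRM : ∀ x ∈ U, R x ∈ M)
    (c₁ c₂ : ℝ) (hc₁ : 0 < c₁) (hc₁₂ : c₁ ≤ c₂)
    (hrav : ∀ x ∈ U, c₁ * Metric.infDist x M ^ 2 ≤ f x - f (R x) ∧
      f x - f (R x) ≤ c₂ * Metric.infDist x M ^ 2) :
    ∃ C > (0 : ℝ), ∃ δ > (0 : ℝ), ∀ x, ‖x - xb‖ < δ →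
      ‖gradient f x - gradient (f ∘ R) x‖ ≤ C * Metric.infDist x M := by
  have hc₂ : (0:ℝ) < c₂ := hc₁.trans_le hc₁₂
  set g : E → ℝ := fun y => f y - f (R y) with hgdef
  have hfR : ContDiffOn ℝ 2 (f ∘ R) U := hf.comp_contDiffOn hR
  have hgC2 : ContDiffOn ℝ 2 g U := hf.contDiffOn.sub hfR
  have hfRdiff : ∀ x ∈ U, DifferentiableAt ℝ (f ∘ R) x := fun x hx =>
    (hfR.differentiableOn (by norm_num)).differentiableAt (hU.mem_nhds hx)
  have hfdiff : Differentiable ℝ f := hf.differentiable (by norm_num)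
  have hgdiff : ∀ x ∈ U, DifferentiableAt ℝ g x := fun x hx =>
    (hfdiff x).sub (hfRdiff x hx)
  have hgradsub : ∀ x ∈ U, gradient g x = gradient f x - gradient (f ∘ R) x := by
    intro x hx
    unfold gradient
    rw [show fderiv ℝ g x = fderiv ℝ f x - fderiv ℝ (f ∘ R) x from
      fderiv_sub (hfdiff x) (hfRdiff x hx), map_sub]
  -- gradient g is C¹ on U
  have hgrad1 : ContDiffOn ℝ 1 (gradient g) U := by
    have h1 : ContDiffOn ℝ 1 (fun x => fderivWithin ℝ g U x) U :=
      hgC2.fderivWithin hU.uniqueDiffOn (by norm_num)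
    have h2 : ContDiffOn ℝ 1 (fun x => fderiv ℝ g x) U :=
      h1.congr fun x hx => (fderivWithin_of_isOpen hU hx).symm
    exact ((toDual ℝ E).symm.contDiff).comp_contDiffOn h2
  obtain ⟨K, t, ht, hK⟩ :=
    (hgrad1.contDiffAt (hU.mem_nhds hxbU)).exists_lipschitzOnWith
  obtain ⟨ε, hε, hball⟩ := Metric.mem_nhds_iff.1 (Filter.inter_mem ht (hU.mem_nhds hxbU))
  set L : ℝ := (K:ℝ) + 1 with hLdef
  have hL : (0:ℝ) < L := by rw [hLdef]; positivity
  clear_value L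
  have hLip : ∀ z ∈ ball xb ε, ∀ w ∈ ball xb ε,
      ‖gradient g z - gradient g w‖ ≤ L * ‖z - w‖ := by
    intro z hz w hw
    have := hK.dist_le_mul z (hball hz).1 w (hball hw).1
    rw [dist_eq_norm, dist_eq_norm] at this
    calc ‖gradient g z - gradient g w‖ ≤ (K:ℝ) * ‖z - w‖ := this
      _ ≤ L * ‖z - w‖ := by
          apply mul_le_mul_of_nonneg_right _ (norm_nonneg _)
          rw [hLdef]; linarith
  have hgxb : g xb = 0 := by
    have h := hrav xb hxbU
    rw [Metric.infDist_zero_of_mem hxbM] at h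
    have h1 := h.1; have h2 := h.2
    simp only [hgdef]; linarith
  have hmin : IsLocalMin g xb := by
    filter_upwards [hU.mem_nhds hxbU] with y hy
    have h1 := (hrav y hy).1
    have h2 := sq_nonneg (Metric.infDist y M)
    rw [hgxb]; simp only [hgdef]; nlinarith
  have hgradxb : gradient g xb = 0 := by
    unfold gradient; rw [hmin.fderiv_eq_zero, map_zero]
  clear_value g
  refine ⟨2 * Real.sqrt (L * c₂), by positivity, ε / 2, by positivity, ?_⟩
  intro x hx
  have hxball : x ∈ ball xb ε := by
    rw [mem_ball, dist_eq_norm]; linarith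
  have hxU : x ∈ U := (hball hxball).2
  set d : ℝ := Metric.infDist x M with hddef
  clear_value d
  have hd0 : (0:ℝ) ≤ d := by rw [hddef]; exact Metric.infDist_nonneg
  set v : E := gradient g x with hvdef
  clear_value v
  have hvnorm : ‖v‖ ≤ L * (ε / 2) := by
    have h := hLip x hxball xb (Metric.mem_ball_self hε)
    rw [hgradxb, sub_zero, ← hvdef] at h
    have hn : ‖x - xb‖ ≤ ε / 2 := hx.le
    calc ‖v‖ ≤ L * ‖x - xb‖ := h
      _ ≤ L * (ε / 2) := mul_le_mul_of_nonneg_left hn hL.le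
  set τ : ℝ := 1 / (2 * L) with hτdef
  have hτ : (0:ℝ) < τ := by rw [hτdef]; positivity
  clear_value τ
  set y : E := x - τ • v with hydef
  clear_value y
  have hyx : y - x = -(τ • v) := by simp [hydef]
  have hyxnorm : ‖y - x‖ = τ * ‖v‖ := by
    rw [hyx, norm_neg, norm_smul, Real.norm_eq_abs, abs_of_pos hτ]
  have hyball : y ∈ ball xb ε := by
    rw [mem_ball, dist_eq_norm]
    have h0 : y - xb = (x - xb) + (y - x) := by abel
    have h1 : ‖y - xb‖ ≤ ‖x - xb‖ + ‖y - x‖ := by rw [h0]; exact norm_add_le _ _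
    have h2 : τ * ‖v‖ ≤ τ * (L * (ε/2)) := mul_le_mul_of_nonneg_left hvnorm hτ.le
    have h3 : τ * (L * (ε/2)) = ε / 4 := by
      rw [hτdef]; field_simp; ring
    rw [hyxnorm] at h1
    linarith
  have hyU : y ∈ U := (hball hyball).2
  have hseg : segment ℝ x y ⊆ ball xb ε := (convex_ball xb ε).segment_subset hxball hyball
  -- descent inequality
  have hdesc : ‖g y - g x - (fderiv ℝ g x) (y - x)‖ ≤ (L * ‖y - x‖) * ‖y - x‖ := by
    apply (convex_segment x y).norm_image_sub_le_of_norm_hasFDerivWithin_le'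
      (f' := fun z => fderiv ℝ g z)
      (fun z hz => ((hgdiff z (hball (hseg hz)).2).hasFDerivAt).hasFDerivWithinAt)
      ?_ (left_mem_segment ℝ x y) (right_mem_segment ℝ x y)
    intro z hz
    have h1 : ‖fderiv ℝ g z - fderiv ℝ g x‖ = ‖gradient g z - gradient g x‖ := by
      unfold gradient
      rw [← map_sub, LinearIsometryEquiv.norm_map]
    have h2 : ‖gradient g z - gradient g x‖ ≤ L * ‖z - x‖ :=
      hLip z (hseg hz) x hxball
    have h3 : ‖z - x‖ ≤ ‖y - x‖ := by
      obtain ⟨a, b, ha, hb, hab, rfl⟩ := hz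
      have : a • x + b • y - x = b • (y - x) := by
        have ha1 : a = 1 - b := by linarith
        rw [ha1]; module
      rw [this, norm_smul, Real.norm_eq_abs, abs_of_nonneg hb]
      nlinarith [norm_nonneg (y - x)]
    rw [h1]
    calc ‖gradient g z - gradient g x‖ ≤ L * ‖z - x‖ := h2
      _ ≤ L * ‖y - x‖ := by nlinarith
  have happ : (fderiv ℝ g x) (y - x) = -(τ * ‖v‖^2) := by
    have hfd : fderiv ℝ g x = toDual ℝ E v := by
      rw [hvdef]; unfold gradient; rw [LinearIsometryEquiv.apply_symm_apply]
    rw [hfd, toDual_apply_apply, hyx, inner_neg_right, real_inner_smul_right,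
      real_inner_self_eq_norm_sq]
  have hgy0 : 0 ≤ g y := by
    have h1 := (hrav y hyU).1
    have h2 := sq_nonneg (Metric.infDist y M)
    simp only [hgdef]; nlinarith
  have hgx : g x ≤ c₂ * d ^ 2 := by
    rw [hddef, hgdef]; exact (hrav x hxU).2
  -- combine
  have habs : |g y - g x + τ * ‖v‖^2| ≤ L * (τ * ‖v‖)^2 := by
    have := hdesc
    rw [happ, hyxnorm, Real.norm_eq_abs] at this
    calc |g y - g x + τ * ‖v‖^2| = |g y - g x - -(τ * ‖v‖^2)| := by ring_nf
      _ ≤ L * (τ * ‖v‖) * (τ * ‖v‖) := this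
      _ = L * (τ * ‖v‖)^2 := by ring
  have hkey : ‖v‖^2 ≤ 4 * L * c₂ * d^2 := by
    have h1 : g y - g x + τ * ‖v‖^2 ≤ L * (τ * ‖v‖)^2 := (abs_le.1 habs).2
    have hLτ : L * τ = 1/2 := by
      rw [hτdef]; field_simp
    have hLτ2 : L * (τ * ‖v‖)^2 = τ * ‖v‖^2 / 2 := by
      calc L * (τ * ‖v‖)^2 = (L * τ) * (τ * ‖v‖^2) := by ring
        _ = τ * ‖v‖^2 / 2 := by rw [hLτ]; ring
    rw [hLτ2] at h1
    have h2 : τ * ‖v‖^2 / 2 ≤ c₂ * d^2 := by nlinarith [h1, hgy0, hgx]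
    have h4 : ‖v‖^2 = (τ * ‖v‖^2 / 2) * (4*L) := by
      calc ‖v‖^2 = (L * τ) * (2 * ‖v‖^2) := by rw [hLτ]; ring
        _ = (τ * ‖v‖^2 / 2) * (4*L) := by ring
    rw [h4]
    calc (τ * ‖v‖^2 / 2) * (4*L) ≤ (c₂ * d^2) * (4*L) :=
        mul_le_mul_of_nonneg_right h2 (by positivity)
      _ = 4 * L * c₂ * d^2 := by ring
  have hfinal : ‖v‖ ≤ 2 * Real.sqrt (L * c₂) * d := by
    have hrhs : (0:ℝ) ≤ 2 * Real.sqrt (L * c₂) * d :=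
      mul_nonneg (by positivity) hd0
    have hsq : (2 * Real.sqrt (L * c₂) * d)^2 = 4 * L * c₂ * d^2 := by
      rw [mul_pow, mul_pow, Real.sq_sqrt (by positivity)]; ring
    have : ‖v‖^2 ≤ (2 * Real.sqrt (L * c₂) * d)^2 := by rw [hsq]; exact hkey
    exact le_of_pow_le_pow_left₀ two_ne_zero hrhs this
  rw [← hgradsub x hxU, ← hvdef]
  exact hfinal
end

section
/- Let E be a finite-dimensional real inner product space, and let f : E → ℝ be C²-smooth with a local minimizer x̄. Let U be a neighborhood of x̄ and let R : U → E be a map continuous at x̄ with R(x̄) = x̄ such that f(x) − f(R(x)) ≥ C_lb · ‖x − R(x)‖² for all x ∈ U, for some constant C_lb > 0. Then for every constant C_a with 0 < C_a < C_lb there exists δ > 0 such that ⟨∇f(x), x − R(x)⟩ ≥ C_a · ‖x − R(x)‖² for all x with ‖x − x̄‖ < δ. -/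
open scoped RealInnerProductSpace
open Set Filter Topology

section Aux

variable {E : Type*} [NormedAddCommGroup E] [InnerProductSpace ℝ E]

private lemma line_hasDerivAt (x v : E) (t : ℝ) :
    HasDerivAt (fun s : ℝ => x + s • v) v t := by
  simpa using ((hasDerivAt_id t).smul_const v).const_add x

set_option maxHeartbeats 1000000 in
/-- Second-order mean value theorem along a segment. -/
private lemma segment_taylor {f : E → ℝ} (hf : ContDiff ℝ 2 f) (x v : E) :
    ∃ c ∈ Ioo (0:ℝ) 1, ∃ d ∈ Ioo (0:ℝ) c,
      f (x + v) - f x - fderiv ℝ f x v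
        = ((fderiv ℝ (fderiv ℝ f) (x + d • v)) v) v * c := by
  have hfd : Differentiable ℝ f := hf.differentiable (by norm_num)
  have hF : ContDiff ℝ 1 (fderiv ℝ f) := hf.fderiv_right (by norm_num)
  have hFd : Differentiable ℝ (fderiv ℝ f) := hF.differentiable (by norm_num)
  set g : ℝ → ℝ := fun t => f (x + t • v) with hg_def
  set g1 : ℝ → ℝ := fun t => fderiv ℝ f (x + t • v) v with hg1_def
  set g2 : ℝ → ℝ := fun t => ((fderiv ℝ (fderiv ℝ f) (x + t • v)) v) v with hg2_def
  have hg : ∀ t : ℝ, HasDerivAt g (g1 t) t := fun t =>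
    (hfd (x + t • v)).hasFDerivAt.comp_hasDerivAt t (line_hasDerivAt x v t)
  have hg1 : ∀ t : ℝ, HasDerivAt g1 (g2 t) t := by
    intro t
    have h1 : HasDerivAt (fun s : ℝ => fderiv ℝ f (x + s • v))
        ((fderiv ℝ (fderiv ℝ f) (x + t • v)) v) t :=
      (hFd (x + t • v)).hasFDerivAt.comp_hasDerivAt t (line_hasDerivAt x v t)
    have := h1.clm_apply (hasDerivAt_const t v)
    simpa using this
  obtain ⟨c, hc, hceq⟩ :=
    exists_hasDerivAt_eq_slope g g1 one_pos
      (fun t _ => (hg t).continuousAt.continuousWithinAt) (fun t _ => hg t)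
  obtain ⟨d, hd, hdeq⟩ :=
    exists_hasDerivAt_eq_slope g1 g2 hc.1
      (fun t _ => (hg1 t).continuousAt.continuousWithinAt) (fun t _ => hg1 t)
  refine ⟨c, hc, d, hd, ?_⟩
  have h10 : g 1 - g 0 = g1 c := by
    rw [hceq]; field_simp; ring
  have hcne : (c:ℝ) ≠ 0 := ne_of_gt hc.1
  have hc0 : g1 c - g1 0 = g2 d * c := by
    rw [hdeq]
    field_simp
    ring
  have e1 : g 1 = f (x + v) := by simp [hg_def]
  have e0 : g 0 = f x := by simp [hg_def]
  have e2 : g1 0 = fderiv ℝ f x v := by simp [hg1_def]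
  have e3 : g2 d = ((fderiv ℝ (fderiv ℝ f) (x + d • v)) v) v := rfl
  rw [← e1, ← e0, ← e2, ← e3]
  linarith

set_option maxHeartbeats 1000000 in
/-- At a local minimum of a `C²` function the Hessian is positive semidefinite. -/
private lemma hessian_nonneg {f : E → ℝ} (hf : ContDiff ℝ 2 f) {xb : E}
    (hmin : IsLocalMin f xb) (w : E) :
    0 ≤ ((fderiv ℝ (fderiv ℝ f) xb) w) w := by
  have hF : ContDiff ℝ 1 (fderiv ℝ f) := hf.fderiv_right (by norm_num)
  have hH : Continuous (fderiv ℝ (fderiv ℝ f)) := hF.continuous_fderiv one_ne_zero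
  have hgrad0 : fderiv ℝ f xb = 0 := hmin.fderiv_eq_zero
  set φ : ℝ → ℝ := fun s => ((fderiv ℝ (fderiv ℝ f) (xb + s • w)) w) w with hφ_def
  have hφc : Continuous φ := by
    have h1 : Continuous fun s : ℝ => (xb + s • w) := by continuity
    exact ((hH.comp h1).clm_apply continuous_const).clm_apply continuous_const
  by_contra hneg
  push_neg at hneg
  have hφ0 : φ 0 < 0 := by simpa [hφ_def] using hneg
  have hev : ∀ᶠ s in 𝓝 (0:ℝ), φ s < 0 :=
    hφc.continuousAt.eventually_lt continuousAt_const hφ0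
  obtain ⟨η, hη, hηlt⟩ := Metric.eventually_nhds_iff.1 hev
  obtain ⟨r, hr, hrmin⟩ := Metric.eventually_nhds_iff.1 hmin
  set t : ℝ := min (η / 2) (r / (2 * (‖w‖ + 1))) with ht_def
  have hwpos : (0:ℝ) < ‖w‖ + 1 := by positivity
  have ht : 0 < t := lt_min (by positivity) (by positivity)
  obtain ⟨c, hc, d, hd, heq⟩ := segment_taylor hf xb (t • w)
  have hmem : f xb ≤ f (xb + t • w) := by
    apply hrmin
    have : ‖t • w‖ ≤ t * (‖w‖ + 1) := by
      rw [norm_smul, Real.norm_eq_abs, abs_of_pos ht]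
      nlinarith [norm_nonneg w]
    have ht2 : t ≤ r / (2 * (‖w‖ + 1)) := min_le_right _ _
    have : ‖t • w‖ < r := by
      calc ‖t • w‖ ≤ t * (‖w‖ + 1) := this
        _ ≤ (r / (2 * (‖w‖ + 1))) * (‖w‖ + 1) := by nlinarith
        _ = r / 2 := by field_simp
        _ < r := by linarith
    simpa [dist_eq_norm] using this
  have hlhs : 0 ≤ f (xb + t • w) - f xb - fderiv ℝ f xb (t • w) := by
    rw [hgrad0]; simpa using hmem
  rw [heq] at hlhs
  -- the Hessian point is xb + (d*t) • w with 0 < d*t < t ≤ η/2 < η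
  have hpt : xb + d • t • w = xb + (d * t) • w := by rw [smul_smul]
  have hφval : φ (d * t) < 0 := by
    apply hηlt
    have hdt : 0 < d * t := mul_pos hd.1 ht
    have hdt2 : d * t < t := by nlinarith [hd.2, hc.2, ht]
    have : d * t < η := lt_of_lt_of_le (lt_of_lt_of_le hdt2 (min_le_left _ _)) (by linarith)
    simp only [Real.dist_eq, sub_zero]
    rw [abs_of_pos hdt]; exact this
  have hexp : ((fderiv ℝ (fderiv ℝ f) (xb + d • t • w)) (t • w)) (t • w)
      = t ^ 2 * φ (d * t) := by
    rw [hpt]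
    simp [hφ_def, map_smul, smul_smul]
    ring
  rw [hexp] at hlhs
  have ht2 : (0:ℝ) < t ^ 2 := by positivity
  nlinarith [mul_neg_of_pos_of_neg (mul_pos ht2 hc.1) hφval]

end Aux

set_option maxHeartbeats 1000000 in
/-- **Aiming towards the ravine.**
Let `f : E → ℝ` be `C²`-smooth with a local minimizer `xb`, and let `R` be a map
continuous at `xb` with `R xb = xb` satisfying the ravine inequality
`f x − f (R x) ≥ Clb‖x − R x‖²` on a neighborhood `U` of `xb`.  Then for every
`0 < Ca < Clb` there is `δ > 0` such that
`⟨∇f(x), x − R x⟩ ≥ Ca‖x − R x‖²` whenever `‖x − xb‖ < δ`. -/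
theorem aiming_toward_ravine
    {E : Type*} [NormedAddCommGroup E] [InnerProductSpace ℝ E] [FiniteDimensional ℝ E]
    (f : E → ℝ) (hf : ContDiff ℝ 2 f) (xb : E) (hmin : IsLocalMin f xb)
    (U : Set E) (hU : U ∈ nhds xb)
    (R : E → E) (hRc : ContinuousAt R xb) (hRxb : R xb = xb)
    (Clb : ℝ) (hClb : 0 < Clb)
    (hrav : ∀ x ∈ U, Clb * ‖x - R x‖ ^ 2 ≤ f x - f (R x)) :
    ∀ Ca : ℝ, 0 < Ca → Ca < Clb →
      ∃ δ > (0 : ℝ), ∀ x, ‖x - xb‖ < δ →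
        Ca * ‖x - R x‖ ^ 2 ≤ ⟪gradient f x, x - R x⟫ := by
  intro Ca hCa hCalt
  set ε : ℝ := Clb - Ca with hε_def
  have hε : 0 < ε := by linarith
  have hfd : Differentiable ℝ f := hf.differentiable (by norm_num)
  have hF : ContDiff ℝ 1 (fderiv ℝ f) := hf.fderiv_right (by norm_num)
  have hH : Continuous (fderiv ℝ (fderiv ℝ f)) := hF.continuous_fderiv one_ne_zero
  set H := fderiv ℝ (fderiv ℝ f) with hH_def
  -- near xb the Hessian differs from H xb by less than ε in operator norm
  have hHev : ∀ᶠ z in 𝓝 xb, ‖H z - H xb‖ < ε := by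
    have h2 : @Continuous E (E →L[ℝ] E →L[ℝ] ℝ) _
        (PseudoMetricSpace.toUniformSpace.toTopologicalSpace) H := hH
    have := Metric.tendsto_nhds.1 (h2.tendsto xb) ε hε
    filter_upwards [this] with z hz
    have := dist_eq_norm (H z) (H xb)
    linarith
  obtain ⟨r₁, hr₁, hr₁lt⟩ := Metric.eventually_nhds_iff.1 hHev
  obtain ⟨r₂, hr₂, hr₂U⟩ := Metric.mem_nhds_iff.1 hU
  set r : ℝ := min r₁ r₂ with hr_def
  have hr : 0 < r := lt_min hr₁ hr₂
  -- continuity of R at xb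
  have hRev : ∀ᶠ x in 𝓝 xb, dist (R x) xb < r := by
    have : ∀ᶠ y in 𝓝 (R xb), dist y xb < r := by
      rw [hRxb]; exact Metric.ball_mem_nhds _ hr
    exact hRc.eventually this
  obtain ⟨δ₁, hδ₁, hδ₁lt⟩ := Metric.eventually_nhds_iff.1 hRev
  refine ⟨min δ₁ r, lt_min hδ₁ hr, ?_⟩
  intro x hx
  have hxr : ‖x - xb‖ < r := lt_of_lt_of_le hx (min_le_right _ _)
  have hRxr : ‖R x - xb‖ < r := by
    have hx1 : dist x xb < δ₁ := by
      simpa [dist_eq_norm] using lt_of_lt_of_le hx (min_le_left _ _)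
    simpa [dist_eq_norm] using hδ₁lt hx1
  have hxU : x ∈ U := by
    apply hr₂U
    simp only [Metric.mem_ball, dist_eq_norm]
    exact lt_of_lt_of_le hxr (min_le_right _ _)
  set v : E := R x - x with hv_def
  obtain ⟨c, hc, d, hd, heq⟩ := segment_taylor hf x v
  have hxv : x + v = R x := by simp [hv_def]
  -- the intermediate point z is in the ball of radius r₁
  set z : E := x + d • v with hz_def
  have hzr : ‖z - xb‖ < r₁ := by
    have hd0 : 0 ≤ d := le_of_lt hd.1
    have hd1 : d ≤ 1 := le_of_lt (lt_trans hd.2 hc.2)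
    have hzexp : z - xb = (1 - d) • (x - xb) + d • (R x - xb) := by
      simp only [hz_def, hv_def]
      module
    calc ‖z - xb‖ ≤ ‖(1 - d) • (x - xb)‖ + ‖d • (R x - xb)‖ := by
          rw [hzexp]; exact norm_add_le _ _
      _ = (1 - d) * ‖x - xb‖ + d * ‖R x - xb‖ := by
          rw [norm_smul, norm_smul, Real.norm_eq_abs, Real.norm_eq_abs,
            abs_of_nonneg (by linarith), abs_of_nonneg hd0]
      _ < (1 - d) * r + d * r := by
          rcases eq_or_lt_of_le hd1 with h1 | h1
          · simp [← h1] at *; nlinarith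
          · have := mul_lt_mul_of_pos_left hxr (by linarith : (0:ℝ) < 1 - d)
            have := mul_lt_mul_of_pos_left hRxr hd.1
            nlinarith
      _ = r := by ring
      _ ≤ r₁ := min_le_left _ _
  -- Hessian lower bound at z
  have hHz : -(ε * ‖v‖ ^ 2) ≤ ((H z) v) v := by
    have h1 : ‖H z - H xb‖ < ε := hr₁lt (by simpa [dist_eq_norm] using hzr)
    have h2 : 0 ≤ ((H xb) v) v := hessian_nonneg hf hmin v
    have h3 : |((H z - H xb) v) v| ≤ ‖H z - H xb‖ * ‖v‖ * ‖v‖ := by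
      calc |((H z - H xb) v) v| ≤ ‖((H z - H xb) v)‖ * ‖v‖ := by
            simpa [Real.norm_eq_abs] using ((H z - H xb) v).le_opNorm v
        _ ≤ ‖H z - H xb‖ * ‖v‖ * ‖v‖ :=
            mul_le_mul_of_nonneg_right ((H z - H xb).le_opNorm v) (norm_nonneg v)
    have h4 : ((H z) v) v = ((H xb) v) v + ((H z - H xb) v) v := by
      simp [ContinuousLinearMap.sub_apply]
    have h5 : |((H z - H xb) v) v| ≤ ε * ‖v‖ ^ 2 := by
      have hn : (0:ℝ) ≤ ‖v‖ := norm_nonneg v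
      calc |((H z - H xb) v) v| ≤ ‖H z - H xb‖ * ‖v‖ * ‖v‖ := h3
        _ ≤ ε * ‖v‖ ^ 2 := by nlinarith
    have := abs_le.1 h5
    linarith
  -- combine
  have heq' : f (R x) - f x - fderiv ℝ f x v = ((H z) v) v * c := by
    rw [← hxv]; exact heq
  have hkey : -(ε * ‖v‖ ^ 2) ≤ f (R x) - f x - fderiv ℝ f x v := by
    rw [heq']
    have hc0 := hc.1
    have hc1 := le_of_lt hc.2
    have hnn : (0:ℝ) ≤ ε * ‖v‖ ^ 2 := by positivity
    nlinarith [hHz]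
  have hravx := hrav x hxU
  have hnorm : ‖v‖ = ‖x - R x‖ := by rw [hv_def, norm_sub_rev]
  have hfderiv : fderiv ℝ f x (x - R x) = - fderiv ℝ f x v := by
    have : x - R x = -v := by simp [hv_def]
    rw [this, map_neg]
  have hinner : ⟪gradient f x, x - R x⟫ = fderiv ℝ f x (x - R x) := by
    rw [gradient, InnerProductSpace.toDual_symm_apply]
  rw [hinner, hfderiv]
  rw [hnorm] at hkey
  clear_value v ε
  have hkey' : -((Clb - Ca) * ‖x - R x‖ ^ 2) ≤ f (R x) - f x - fderiv ℝ f x v := by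
    rw [← hε_def]; exact hkey
  linarith
end

section
/- Let E be a finite-dimensional real inner product space, let p ≥ 2 be an integer, and let g : E → ℝ be C^{p+1}-smooth. Let S be a nonempty closed subset of the set of minimizers of g (so g equals its infimum, inf g, on S), fix x̄ ∈ S, and suppose there exist a neighborhood U of x̄ and a constant C > 0 such that g(x) − inf g ≤ C · dist^p(x, S) for all x ∈ U. Then: (1) there exist a neighborhood U′ of x̄ and C′ > 0 such that ‖∇g(x)‖ ≤ C′ · dist^{p−1}(x, S) for all x ∈ U′; and (2) there exist a neighborhood U″ of x̄ and C″ > 0 such that for every x ∈ U″ and every nearest point x̂ of x in S (i.e. x̂ ∈ S with ‖x − x̂‖ = dist(x, S)): |g(x) − inf g − (1/p)⟨∇g(x), x − x̂⟩| ≤ C″ · dist^{p+1}(x, S). -/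
open Set Finset
open scoped Nat
open scoped RealInnerProductSpace



lemma aux_coeff_bound (n : ℕ) (hn : 0 < n) :
    ∃ D > 0, ∀ (b : Fin (n+1) → ℝ) (A : ℝ),
      (∀ j : Fin (n+1), |∑ i : Fin (n+1), b i * ((j : ℝ)/n) ^ (i : ℕ)| ≤ A) →
      ∀ k, |b k| ≤ D * A := by
  have hn' : (n : ℝ) ≠ 0 := by positivity
  set v : Fin (n+1) → ℝ := fun j => (j : ℝ)/n with hv
  have hvinj : Function.Injective v := by
    intro a b hab
    have h2 : (a : ℝ) = b := by
      have h3 : (a:ℝ)/n = (b:ℝ)/n := hab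
      rwa [div_left_inj' hn'] at h3
    exact Fin.ext (by exact_mod_cast h2)
  set V := Matrix.vandermonde v with hV
  have hdet : IsUnit V.det := (Matrix.det_vandermonde_ne_zero_iff.mpr hvinj).isUnit
  refine ⟨(∑ k : Fin (n+1), ∑ j : Fin (n+1), |V⁻¹ k j|) + 1, by positivity, ?_⟩
  intro b A hA k
  have hA0 : 0 ≤ A := (abs_nonneg _).trans (hA 0)
  have hb : b = V⁻¹.mulVec (V.mulVec b) := by
    rw [Matrix.mulVec_mulVec, Matrix.nonsing_inv_mul _ hdet, Matrix.one_mulVec]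
  have hval : ∀ j, |(V.mulVec b) j| ≤ A := by
    intro j
    have : (V.mulVec b) j = ∑ i : Fin (n+1), b i * ((j : ℝ)/n) ^ (i : ℕ) := by
      simp only [Matrix.mulVec, dotProduct, hV, Matrix.vandermonde_apply, hv, mul_comm, Matrix.of_apply]
    rw [this]; exact hA j
  calc |b k| = |∑ j, V⁻¹ k j * (V.mulVec b) j| := by
        conv_lhs => rw [hb]
        rw [show V⁻¹.mulVec (V.mulVec b) k = ∑ j, V⁻¹ k j * (V.mulVec b) j by
          simp [Matrix.mulVec, dotProduct]]
    _ ≤ ∑ j, |V⁻¹ k j * (V.mulVec b) j| := Finset.abs_sum_le_sum_abs _ _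
    _ ≤ ∑ j, |V⁻¹ k j| * A := by
        refine Finset.sum_le_sum fun j _ => ?_
        rw [abs_mul]
        exact mul_le_mul_of_nonneg_left (hval j) (abs_nonneg _)
    _ = (∑ j, |V⁻¹ k j|) * A := by rw [Finset.sum_mul]
    _ ≤ ((∑ k : Fin (n+1), ∑ j : Fin (n+1), |V⁻¹ k j|) + 1) * A := by
        refine mul_le_mul_of_nonneg_right ?_ hA0
        refine le_trans ?_ (le_add_of_nonneg_right zero_le_one)
        exact Finset.single_le_sum (f := fun k => ∑ j : Fin (n+1), |V⁻¹ k j|)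
          (fun i _ => Finset.sum_nonneg fun j _ => abs_nonneg _) (Finset.mem_univ k)

lemma aux_idw {n : ℕ} {m : ℕ} {f : ℝ → ℝ} (hf : ContDiff ℝ (n : ℕ) f) (hmn : m ≤ n)
    {s : Set ℝ} (hs : UniqueDiffOn ℝ s) {x : ℝ} (hx : x ∈ s) :
    iteratedDerivWithin m f s x = iteratedDeriv m f x := by
  rw [iteratedDerivWithin_eq_iteratedFDerivWithin, iteratedDeriv_eq_iteratedFDeriv]
  congr 1
  have h1 : HasFTaylorSeriesUpToOn (n : ℕ) f (ftaylorSeriesWithin ℝ f univ) s :=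
    ((hf.contDiffOn).ftaylorSeriesWithin uniqueDiffOn_univ).mono (subset_univ s)
  have h2 := h1.eq_iteratedFDerivWithin_of_uniqueDiffOn (by exact_mod_cast hmn) hs hx
  rw [← h2]
  simp [ftaylorSeriesWithin, iteratedFDerivWithin_univ]

lemma aux_taylor {n : ℕ} {f : ℝ → ℝ} (hf : ContDiff ℝ ((n+1 : ℕ)) f)
    {M τ t : ℝ} (hτ : 0 < τ) (ht : t ∈ Set.Icc 0 τ)
    (hM : ∀ y, |iteratedDeriv (n+1) f y| ≤ M) :
    |f t - ∑ k ∈ Finset.range (n+1), iteratedDeriv k f 0 / (k ! : ℝ) * t ^ k|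
      ≤ M * t ^ (n+1) / n ! := by
  have h0τ : (0:ℝ) ≤ τ := hτ.le
  have h0 : (0:ℝ) ∈ Set.Icc (0:ℝ) τ := ⟨le_refl _, h0τ⟩
  have hsum : taylorWithinEval f n (Set.Icc 0 τ) 0 t
      = ∑ k ∈ Finset.range (n+1), iteratedDeriv k f 0 / (k ! : ℝ) * t ^ k := by
    rw [taylor_within_apply]
    refine Finset.sum_congr rfl fun k hk => ?_
    rw [aux_idw hf (by have := Finset.mem_range.mp hk; omega) (uniqueDiffOn_Icc hτ) h0]
    rw [smul_eq_mul, sub_zero]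
    ring
  have hC : ∀ y ∈ Set.Icc (0:ℝ) τ, ‖iteratedDerivWithin (n+1) f (Set.Icc 0 τ) y‖ ≤ M := by
    intro y hy
    rw [aux_idw hf le_rfl (uniqueDiffOn_Icc hτ) hy, Real.norm_eq_abs]
    exact hM y
  have := taylor_mean_remainder_bound h0τ hf.contDiffOn ht hC
  rw [hsum, Real.norm_eq_abs, sub_zero] at this
  exact this

lemma aux_coeffs (n : ℕ) (hn : 0 < n) :
    ∃ D > 0, ∀ (f : ℝ → ℝ) (M A τ : ℝ), ContDiff ℝ ((n+1 : ℕ)) f →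
      (∀ y, |iteratedDeriv (n+1) f y| ≤ M) → 0 < τ →
      (∀ t ∈ Set.Icc (0:ℝ) τ, |f t| ≤ A) →
      ∀ k, k ≤ n → |iteratedDeriv k f 0| / (k ! : ℝ) * τ ^ k ≤ D * (A + M * τ ^ (n+1)) := by
  obtain ⟨D, hD, hDb⟩ := aux_coeff_bound n hn
  refine ⟨D, hD, ?_⟩
  intro f M A τ hf hM hτ hA k hk
  have hM0 : 0 ≤ M := (abs_nonneg _).trans (hM 0)
  set b : Fin (n+1) → ℝ := fun i => iteratedDeriv i f 0 / ((i:ℕ) ! : ℝ) * τ ^ (i:ℕ) with hbdef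
  have key : ∀ j : Fin (n+1), |∑ i : Fin (n+1), b i * ((j:ℝ)/n)^(i:ℕ)| ≤ A + M * τ^(n+1) := by
    intro j
    set u : ℝ := (j:ℝ)/n with hu
    set t := τ * u with htdef
    have hu1 : u ∈ Set.Icc (0:ℝ) 1 := ⟨by positivity, by
      rw [hu, div_le_one (by exact_mod_cast hn)]
      exact_mod_cast Nat.lt_succ_iff.mp j.isLt⟩
    have ht0 : 0 ≤ t := by rw [htdef]; exact mul_nonneg hτ.le hu1.1
    have htτ : t ≤ τ := by nlinarith [hu1.2, hτ.le]
    have htmem : t ∈ Set.Icc (0:ℝ) τ := ⟨ht0, htτ⟩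
    have hsum : ∑ i : Fin (n+1), b i * u^(i:ℕ)
        = ∑ i ∈ Finset.range (n+1), iteratedDeriv i f 0 / ((i)! : ℝ) * t ^ i := by
      rw [Finset.sum_range fun i => iteratedDeriv i f 0 / ((i)! : ℝ) * t ^ i]
      refine Finset.sum_congr rfl fun i _ => ?_
      rw [hbdef, htdef, mul_pow]
      ring
    have htay := aux_taylor hf hτ htmem hM
    have h1 : |∑ i ∈ Finset.range (n+1), iteratedDeriv i f 0 / ((i)! : ℝ) * t ^ i|
        ≤ |f t| + M * t^(n+1) / n ! := by
      have := abs_sub_abs_le_abs_sub (∑ i ∈ Finset.range (n+1),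
        iteratedDeriv i f 0 / ((i)! : ℝ) * t ^ i) (f t)
      rw [abs_sub_comm] at this
      linarith [htay, this]
    have h2 : M * t^(n+1) / n ! ≤ M * τ^(n+1) := by
      have hfac : (1:ℝ) ≤ (n ! : ℝ) := by exact_mod_cast Nat.one_le_iff_ne_zero.mpr n.factorial_ne_zero
      have : M * t^(n+1) ≤ M * τ^(n+1) :=
        mul_le_mul_of_nonneg_left (pow_le_pow_left₀ ht0 htτ _) hM0
      calc M * t^(n+1) / n ! ≤ M * t^(n+1) := div_le_self (by positivity) hfac
        _ ≤ M * τ^(n+1) := this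
    rw [hsum]
    calc _ ≤ |f t| + M * t^(n+1) / n ! := h1
      _ ≤ A + M * τ^(n+1) := add_le_add (hA t htmem) h2
  have := hDb b _ key ⟨k, Nat.lt_succ_of_le hk⟩
  have hbk : |b ⟨k, Nat.lt_succ_of_le hk⟩| = |iteratedDeriv k f 0| / (k ! : ℝ) * τ ^ k := by
    rw [hbdef]
    simp only
    rw [abs_mul, abs_div, abs_pow, abs_of_pos hτ, Nat.abs_cast]
  rw [← hbk]
  exact this

lemma aux_comp_bound {E : Type*} [NormedAddCommGroup E] [NormedSpace ℝ E]
    {G : E → ℝ} {N : ℕ} (hG : ContDiff ℝ (N : ℕ) G) {M₀ : ℝ}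
    (hM : ∀ i, i ≤ N → ∀ y, ‖iteratedFDeriv ℝ i G y‖ ≤ M₀)
    (c h : E) (n : ℕ) (hn : n ≤ N) (t : ℝ) :
    |iteratedDeriv n (fun s : ℝ => G (c + s • h)) t| ≤ n ! * M₀ * ‖h‖ ^ n := by
  have hf : ContDiff ℝ (N : ℕ) (fun s : ℝ => c + s • h) :=
    contDiff_const.add (contDiff_id.smul contDiff_const)
  have hd : ∀ s : ℝ, HasFDerivAt (fun s : ℝ => c + s • h)
      (ContinuousLinearMap.smulRight (1 : ℝ →L[ℝ] ℝ) h) s := by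
    intro s
    have : HasDerivAt (fun s : ℝ => c + s • h) ((1:ℝ) • h) s :=
      ((hasDerivAt_id s).smul_const h).const_add c
    rw [one_smul] at this
    exact this.hasFDerivAt
  have hfder : fderiv ℝ (fun s : ℝ => c + s • h)
      = fun _ => ContinuousLinearMap.smulRight (1 : ℝ →L[ℝ] ℝ) h :=
    funext fun s => (hd s).fderiv
  have hD : ∀ i, 1 ≤ i → i ≤ n →
      ‖iteratedFDeriv ℝ i (fun s : ℝ => c + s • h) t‖ ≤ ‖h‖ ^ i := by
    intro i h1 _
    match i, h1 with
    | 1, _ =>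
      rw [← norm_iteratedFDeriv_fderiv, norm_iteratedFDeriv_zero, hfder, pow_one]
      rw [ContinuousLinearMap.norm_smulRight_apply]
      simp
    | (m+2), _ =>
      rw [← norm_iteratedFDeriv_fderiv, hfder, iteratedFDeriv_const_of_ne (by omega)]
      simp only [Pi.zero_apply, norm_zero]
      positivity
  have hC : ∀ i, i ≤ n → ‖iteratedFDeriv ℝ i G ((fun s : ℝ => c + s • h) t)‖ ≤ M₀ :=
    fun i hi => hM i (hi.trans hn) _
  have := norm_iteratedFDeriv_comp_le hG hf (by exact_mod_cast hn) t hC hD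
  rw [← Real.norm_eq_abs, ← norm_iteratedFDeriv_eq_norm_iteratedDeriv]
  exact this


set_option maxHeartbeats 1000000 in
/-- **Consequences of power upper growth for smooth functions.**
Let `g : E → ℝ` be `C^{p+1}`-smooth (`p ≥ 2`), let `S` be a nonempty closed subset of
the minimizers of `g` (with minimal value `gmin`), and suppose
`g x − gmin ≤ C · dist^p(x, S)` near `xb ∈ S`.  Then near `xb`:
(1) `‖∇g(x)‖ ≤ C′ dist^{p−1}(x, S)`, and (2) for every nearest point `x̂ ∈ S` of `x`,
`|g x − gmin − (1/p)⟨∇g(x), x − x̂⟩| ≤ C″ dist^{p+1}(x, S)`. -/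
theorem power_growth_gradient_and_aiming
    {E : Type*} [NormedAddCommGroup E] [InnerProductSpace ℝ E] [FiniteDimensional ℝ E]
    (p : ℕ) (hp : 2 ≤ p) (g : E → ℝ) (hg : ContDiff ℝ (p + 1 : ℕ) g)
    (S : Set E) (hSne : S.Nonempty) (hScl : IsClosed S)
    (gmin : ℝ) (hgmin : ∀ x, gmin ≤ g x) (hSmin : ∀ x ∈ S, g x = gmin)
    (xb : E) (hxb : xb ∈ S)
    (U : Set E) (hU : U ∈ nhds xb)
    (C : ℝ) (hC : 0 < C)
    (hub : ∀ x ∈ U, g x - gmin ≤ C * Metric.infDist x S ^ p) :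
    (∃ U' ∈ nhds xb, ∃ C' > (0 : ℝ), ∀ x ∈ U',
        ‖gradient g x‖ ≤ C' * Metric.infDist x S ^ (p - 1)) ∧
    (∃ U'' ∈ nhds xb, ∃ C'' > (0 : ℝ), ∀ x ∈ U'', ∀ xh ∈ S,
        ‖x - xh‖ = Metric.infDist x S →
        |g x - gmin - (1 / (p : ℝ)) * ⟪gradient g x, x - xh⟫| ≤
          C'' * Metric.infDist x S ^ (p + 1)) := by
  obtain ⟨q, rfl⟩ : ∃ q, p = q + 2 := ⟨p - 2, by omega⟩
  -- choose a radius ρ ≤ 1 with closedBall xb ρ ⊆ U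
  obtain ⟨ε, hε, hball⟩ := Metric.mem_nhds_iff.mp hU
  set ρ : ℝ := min (ε/2) 1 with hρdef
  have hρ : 0 < ρ := lt_min (by linarith) one_pos
  have hρ1 : ρ ≤ 1 := min_le_right _ _
  have hρU : Metric.closedBall xb ρ ⊆ U := by
    intro y hy
    apply hball
    rw [Metric.mem_closedBall] at hy
    rw [Metric.mem_ball]
    have : ρ ≤ ε/2 := min_le_left _ _
    linarith
  -- bump function and cut-off version of g - gmin
  set bump : ContDiffBump xb := ⟨ρ/2, ρ, by linarith, by linarith⟩ with hbump
  set G : E → ℝ := fun y => bump y * (g y - gmin) with hGdef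
  have hGg : ∀ y ∈ Metric.closedBall xb (ρ/2), G y = g y - gmin := by
    intro y hy
    rw [hGdef]
    simp only
    rw [bump.one_of_mem_closedBall hy, one_mul]
  have hGsm : ContDiff ℝ ((q+3 : ℕ)) G :=
    (bump.contDiff).mul (hg.sub contDiff_const)
  have hGcs : HasCompactSupport G := (bump.hasCompactSupport).mul_right
  -- global bounds on iterated derivatives of G
  have hbd : ∀ i : Fin (q+4), ∃ B : ℝ, ∀ y, ‖iteratedFDeriv ℝ (i : ℕ) G y‖ ≤ B := by
    intro i
    have hcont : Continuous (iteratedFDeriv ℝ (i : ℕ) G) :=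
      hGsm.continuous_iteratedFDeriv (by exact_mod_cast (by omega : (i:ℕ) ≤ q+3))
    exact hcont.bounded_above_of_compact_support (hGcs.iteratedFDeriv _)
  choose B hB using hbd
  set M₀ : ℝ := 1 + ∑ i : Fin (q+4), |B i| with hM₀def
  have hM₀pos : 0 < M₀ := by
    have : (0:ℝ) ≤ ∑ i : Fin (q+4), |B i| := Finset.sum_nonneg fun i _ => abs_nonneg _
    rw [hM₀def]; linarith
  have hM₀ : ∀ i, i ≤ q+3 → ∀ y, ‖iteratedFDeriv ℝ i G y‖ ≤ M₀ := by
    intro i hi y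
    have h1 := hB ⟨i, by omega⟩ y
    have h2 : B ⟨i, by omega⟩ ≤ ∑ j : Fin (q+4), |B j| :=
      le_trans (le_abs_self _) (Finset.single_le_sum
        (f := fun j : Fin (q+4) => |B j|) (fun j _ => abs_nonneg _) (Finset.mem_univ _))
    rw [hM₀def]
    simp only [Fin.val_mk] at h1
    linarith
  -- uniform bounds along lines
  have hcomp : ∀ (c h : E) (n : ℕ), n ≤ q+3 → ∀ t : ℝ,
      |iteratedDeriv n (fun s : ℝ => G (c + s • h)) t| ≤ n ! * M₀ * ‖h‖ ^ n :=
    fun c h n hn t => aux_comp_bound hGsm hM₀ c h n hn t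
  have hlinsm : ∀ (c h : E), ContDiff ℝ ((q+3 : ℕ)) (fun s : ℝ => G (c + s • h)) := by
    intro c h
    exact hGsm.comp (contDiff_const.add (contDiff_id.smul contDiff_const))
  -- derivative along lines
  have hderiv : ∀ (c h : E) (t : ℝ),
      deriv (fun s : ℝ => G (c + s • h)) t = fderiv ℝ G (c + t • h) h := by
    intro c h t
    have hline : HasDerivAt (fun s : ℝ => c + s • h) h t := by
      have : HasDerivAt (fun s : ℝ => c + s • h) ((1:ℝ) • h) t :=
        ((hasDerivAt_id t).smul_const h).const_add c
      rwa [one_smul] at this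
    have hGd : DifferentiableAt ℝ G (c + t • h) :=
      (hGsm.differentiable (by simp)).differentiableAt
    exact (hGd.hasFDerivAt.comp_hasDerivAt t hline).deriv
  have hgradG : ∀ x ∈ Metric.ball xb (ρ/2), ∀ w : E, fderiv ℝ G x w = ⟪gradient g x, w⟫ := by
    intro x hx w
    have hEq : G =ᶠ[nhds x] (fun y => g y - gmin) :=
      Filter.eventuallyEq_of_mem (Metric.isOpen_ball.mem_nhds hx)
        (fun y hy => hGg y (Metric.ball_subset_closedBall hy))
    rw [hEq.fderiv_eq, fderiv_sub_const]
    rw [gradient, InnerProductSpace.toDual_symm_apply]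
  obtain ⟨D, hD, hDb⟩ := aux_coeffs (q+2) (by omega)
  set ρ' : ℝ := ρ/8 with hρ'def
  have hρ'pos : 0 < ρ' := by rw [hρ'def]; linarith
  have hρ'ρ2 : ρ' ≤ ρ/2 := by rw [hρ'def]; linarith
  have hρ'1 : ρ' ≤ 1 := by rw [hρ'def]; linarith
  constructor
  · -- part (1)
    refine ⟨Metric.ball xb ρ', Metric.ball_mem_nhds xb hρ'pos,
      D * (C * 2^(q+2) + (q+3)! * M₀), by positivity, ?_⟩
    intro x hx
    set r : ℝ := Metric.infDist x S with hrdef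
    have hr0 : 0 ≤ r := Metric.infDist_nonneg
    have hxxb : ‖x - xb‖ < ρ' := by rw [← dist_eq_norm]; exact hx
    have hrle : r ≤ ‖x - xb‖ := by
      rw [← dist_eq_norm]; exact Metric.infDist_le_dist_of_mem hxb
    have hrρ' : r < ρ' := lt_of_le_of_lt hrle hxxb
    have hr1 : r ≤ 1 := le_trans hrρ'.le hρ'1
    show ‖gradient g x‖ ≤ D * (C * 2^(q+2) + (q+3)! * M₀) * r ^ (q+1)
    rcases eq_or_lt_of_le hr0 with hr|hr
    · -- r = 0 : x is a global minimizer, gradient vanishes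
      have hxS : x ∈ S := (hScl.mem_iff_infDist_zero hSne).mpr hr.symm
      have hloc : IsLocalMin g x := Filter.Eventually.of_forall fun y => by
        rw [hSmin x hxS]; exact hgmin y
      have hgz : gradient g x = 0 := by
        rw [gradient, hloc.fderiv_eq_zero, map_zero]
      rw [hgz, norm_zero]
      positivity
    · rcases eq_or_ne (gradient g x) 0 with h0|h0
      · rw [h0, norm_zero]; positivity
      · set v : E := ‖gradient g x‖⁻¹ • gradient g x with hvdef
        have hnv : ‖v‖ = 1 := norm_smul_inv_norm h0
        set η := fun s : ℝ => G (x + s • v) with hηdef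
        set K1 : ℝ := C * 2^(q+2) with hK1def
        set K2 : ℝ := (q+3)! * M₀ with hK2def
        have hK1 : 0 < K1 := by positivity
        have hK2 : 0 < K2 := by positivity
        have hηA : ∀ s ∈ Set.Icc (0:ℝ) r, |η s| ≤ K1 * r^(q+2) := by
          intro s hs
          have hs0 : 0 ≤ s := hs.1
          have hsr : s ≤ r := hs.2
          have hy : ‖x + s • v - xb‖ ≤ ρ' + r := by
            have hxy : x + s • v - xb = (x - xb) + s • v := by abel
            rw [hxy]
            refine (norm_add_le _ _).trans ?_
            rw [norm_smul, hnv, mul_one, Real.norm_eq_abs, abs_of_nonneg hs0]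
            linarith
          have hyρ2 : x + s • v ∈ Metric.closedBall xb (ρ/2) := by
            rw [Metric.mem_closedBall, dist_eq_norm]
            have : ρ' + r ≤ ρ/2 := by rw [hρ'def] at hrρ' ⊢; linarith
            linarith
          have hyU : x + s • v ∈ U := hρU (by
            rw [Metric.mem_closedBall, dist_eq_norm]
            have : ρ' + r ≤ ρ := by rw [hρ'def] at hrρ' ⊢; linarith
            linarith)
          have hGy : η s = g (x + s • v) - gmin := hGg _ hyρ2
          have h1 : 0 ≤ η s := by rw [hGy]; linarith [hgmin (x + s • v)]
          have hdist : Metric.infDist (x + s • v) S ≤ r + s := by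
            have hds : dist (x + s • v) x = s := by
              rw [dist_eq_norm, add_sub_cancel_left, norm_smul, hnv, mul_one,
                Real.norm_eq_abs, abs_of_nonneg hs0]
            calc Metric.infDist (x + s • v) S
                ≤ Metric.infDist x S + dist (x + s • v) x :=
                  Metric.infDist_le_infDist_add_dist
              _ = r + s := by rw [hds, hrdef]
          have h2 : η s ≤ C * (r+s)^(q+2) := by
            rw [hGy]
            calc g (x + s • v) - gmin ≤ C * Metric.infDist (x + s • v) S ^ (q+2) := hub _ hyU
              _ ≤ C * (r+s)^(q+2) :=
                  mul_le_mul_of_nonneg_left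
                    (pow_le_pow_left₀ Metric.infDist_nonneg hdist _) hC.le
          have h3 : C * (r+s)^(q+2) ≤ K1 * r^(q+2) := by
            have hrs : r + s ≤ 2*r := by linarith
            calc C * (r+s)^(q+2) ≤ C * (2*r)^(q+2) :=
                  mul_le_mul_of_nonneg_left (pow_le_pow_left₀ (by linarith) hrs _) hC.le
              _ = K1 * r^(q+2) := by rw [hK1def, mul_pow]; ring
          rw [abs_of_nonneg h1]; linarith
        have hηM : ∀ y, |iteratedDeriv (q+3) η y| ≤ K2 := by
          intro y
          have := hcomp x v (q+3) le_rfl y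
          rwa [hnv, one_pow, mul_one] at this
        have hkey := hDb η K2 (K1 * r^(q+2)) r (hlinsm x v) hηM hr hηA 1 (by omega)
        have hη0 : iteratedDeriv 1 η 0 = ‖gradient g x‖ := by
          rw [iteratedDeriv_one, hηdef]
          rw [hderiv x v 0, zero_smul, add_zero]
          rw [hgradG x (Metric.mem_ball.mpr (by rw [dist_eq_norm]; linarith [hρ'ρ2])) v]
          rw [hvdef, real_inner_smul_right, real_inner_self_eq_norm_sq]
          have hne : ‖gradient g x‖ ≠ 0 := norm_ne_zero_iff.mpr h0
          field_simp [sq]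
        rw [hη0] at hkey
        have hlhs : |‖gradient g x‖| / ((1:ℕ)! : ℝ) * r ^ 1 = ‖gradient g x‖ * r := by
          rw [abs_of_nonneg (norm_nonneg _), Nat.factorial_one, Nat.cast_one, div_one, pow_one]
        rw [hlhs] at hkey
        have e3 : K2 * r^((q+2)+1) ≤ K2 * r^(q+2) := by
          rw [pow_succ, ← mul_assoc]
          calc K2 * r^(q+2) * r ≤ K2 * r^(q+2) * 1 :=
                mul_le_mul_of_nonneg_left hr1 (by positivity)
            _ = K2 * r^(q+2) := mul_one _
        have hstep : D * (K1 * r^(q+2) + K2 * r^((q+2)+1))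
            ≤ (D * (K1 + K2) * r^(q+1)) * r := by
          calc D * (K1 * r^(q+2) + K2 * r^((q+2)+1))
              ≤ D * (K1 * r^(q+2) + K2 * r^(q+2)) :=
                mul_le_mul_of_nonneg_left (by linarith) hD.le
            _ = (D * (K1 + K2) * r^(q+1)) * r := by rw [pow_succ]; ring
        have hfin : ‖gradient g x‖ * r ≤ (D * (K1 + K2) * r^(q+1)) * r :=
          le_trans hkey hstep
        exact le_of_mul_le_mul_right hfin hr
  · -- part (2)
    refine ⟨Metric.ball xb ρ', Metric.ball_mem_nhds xb hρ'pos,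
      2 * (q+3)! * M₀, by positivity, ?_⟩
    intro x hx xh hxhS hxh
    set r : ℝ := Metric.infDist x S with hrdef
    have hr0 : 0 ≤ r := Metric.infDist_nonneg
    have hxxb : ‖x - xb‖ < ρ' := by rw [← dist_eq_norm]; exact hx
    have hrle : r ≤ ‖x - xb‖ := by
      rw [← dist_eq_norm]; exact Metric.infDist_le_dist_of_mem hxb
    have hrρ' : r < ρ' := lt_of_le_of_lt hrle hxxb
    have hr1 : r ≤ 1 := le_trans hrρ'.le hρ'1
    rcases eq_or_lt_of_le hr0 with hr|hr
    · -- r = 0 : x = xh and everything vanishes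
      have hxeq : x = xh := by
        have h0 : ‖x - xh‖ = 0 := by rw [hxh, ← hr]
        rwa [norm_sub_eq_zero_iff] at h0
      rw [hxeq, sub_self, inner_zero_right, mul_zero, sub_zero, hSmin xh hxhS,
        sub_self, abs_zero]
      positivity
    · set h : E := x - xh with hhdef
      have hnh : ‖h‖ = r := hxh
      set ψ := fun t : ℝ => G (xh + t • h) with hψdef
      set Mψ : ℝ := (q+3)! * M₀ * r^((q+2)+1) with hMψdef
      have hMψ0 : 0 < Mψ := by positivity
      have hψM : ∀ y, |iteratedDeriv (q+3) ψ y| ≤ Mψ := by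
        intro y
        have := hcomp xh h (q+3) le_rfl y
        rwa [hnh] at this
      have hψsm : ContDiff ℝ ((q+3 : ℕ)) ψ := hlinsm xh h
      -- geometry of the segment
      have hxhxb : ‖xh - xb‖ < r + ρ' := by
        calc ‖xh - xb‖ ≤ ‖xh - x‖ + ‖x - xb‖ := norm_sub_le_norm_sub_add_norm_sub _ _ _
          _ < r + ρ' := by rw [norm_sub_rev, ← hhdef, hxh]; linarith
      have hmem2 : ∀ t ∈ Set.Icc (0:ℝ) 1, ‖xh + t • h - xb‖ < 3 * ρ' := by
        intro t ht
        have : xh + t • h - xb = (xh - xb) + t • h := by abel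
        rw [this]
        calc ‖(xh - xb) + t • h‖ ≤ ‖xh - xb‖ + ‖t • h‖ := norm_add_le _ _
          _ = ‖xh - xb‖ + t * r := by
              rw [norm_smul, hnh, Real.norm_eq_abs, abs_of_nonneg ht.1]
          _ < (r + ρ') + t * r := by linarith
          _ ≤ (r + ρ') + r := by nlinarith [ht.1, ht.2]
          _ < 3 * ρ' := by linarith
      have hmemρ2 : ∀ t ∈ Set.Icc (0:ℝ) 1, xh + t • h ∈ Metric.closedBall xb (ρ/2) := by
        intro t ht
        rw [Metric.mem_closedBall, dist_eq_norm]
        have := hmem2 t ht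
        rw [hρ'def] at this
        linarith
      have hmemU : ∀ t ∈ Set.Icc (0:ℝ) 1, xh + t • h ∈ U := by
        intro t ht
        apply hρU
        rw [Metric.mem_closedBall, dist_eq_norm]
        have := hmem2 t ht
        rw [hρ'def] at this
        linarith
      have hψval : ∀ t ∈ Set.Icc (0:ℝ) 1, 0 ≤ ψ t ∧ ψ t ≤ C * (t*r)^(q+2) := by
        intro t ht
        have hGy : ψ t = g (xh + t • h) - gmin := hGg _ (hmemρ2 t ht)
        constructor
        · rw [hGy]; linarith [hgmin (xh + t • h)]
        · rw [hGy]
          have hdist : Metric.infDist (xh + t • h) S ≤ t * r := by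
            have hds : dist (xh + t • h) xh = t * r := by
              rw [dist_eq_norm, add_sub_cancel_left, norm_smul, hnh,
                Real.norm_eq_abs, abs_of_nonneg ht.1]
            calc Metric.infDist (xh + t • h) S ≤ dist (xh + t • h) xh :=
                  Metric.infDist_le_dist_of_mem hxhS
              _ = t * r := hds
          calc g (xh + t • h) - gmin ≤ C * Metric.infDist (xh + t • h) S ^ (q+2) :=
                hub _ (hmemU t ht)
            _ ≤ C * (t*r)^(q+2) :=
                mul_le_mul_of_nonneg_left
                  (pow_le_pow_left₀ Metric.infDist_nonneg hdist _) hC.le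
      have hψ0 : ψ 0 = 0 := by
        have : ψ 0 = g (xh + (0:ℝ) • h) - gmin := hGg _ (hmemρ2 0 ⟨le_refl _, zero_le_one⟩)
        rw [this, zero_smul, add_zero, hSmin xh hxhS, sub_self]
      -- vanishing of low-order Taylor coefficients
      have hvanish : ∀ k, 1 ≤ k → k ≤ q+1 → iteratedDeriv k ψ 0 = 0 := by
        intro k hk1 hk2
        set a : ℝ := |iteratedDeriv k ψ 0| / (k ! : ℝ) with hadef
        have ha0 : 0 ≤ a := by positivity
        set K : ℝ := D * (C * r^(q+2) + Mψ) with hKdef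
        have hK : 0 < K := by positivity
        have hbound : ∀ τ : ℝ, 0 < τ → τ ≤ 1 → a ≤ K * τ := by
          intro τ hτ hτ1
          have hA : ∀ t ∈ Set.Icc (0:ℝ) τ, |ψ t| ≤ C * r^(q+2) * τ^(q+2) := by
            intro t ht
            have ht1 : t ∈ Set.Icc (0:ℝ) 1 := ⟨ht.1, ht.2.trans hτ1⟩
            obtain ⟨hpos, hle⟩ := hψval t ht1
            rw [abs_of_nonneg hpos]
            have htq : t^(q+2) ≤ τ^(q+2) := pow_le_pow_left₀ ht.1 ht.2 _
            calc ψ t ≤ C * (t*r)^(q+2) := hle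
              _ = C * (t^(q+2) * r^(q+2)) := by rw [mul_pow]
              _ ≤ C * (τ^(q+2) * r^(q+2)) :=
                  mul_le_mul_of_nonneg_left
                    (mul_le_mul_of_nonneg_right htq (pow_nonneg hr0 _)) hC.le
              _ = C * r^(q+2) * τ^(q+2) := by ring
          have hkey := hDb ψ Mψ (C * r^(q+2) * τ^(q+2)) τ hψsm hψM hτ hA k (by omega)
          have hexp1 : τ^(q+2) ≤ τ^(k+1) := pow_le_pow_of_le_one hτ.le hτ1 (by omega)
          have hexp2 : τ^((q+2)+1) ≤ τ^(k+1) := pow_le_pow_of_le_one hτ.le hτ1 (by omega)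
          have t1 : C * r^(q+2) * τ^(q+2) ≤ C * r^(q+2) * τ^(k+1) :=
            mul_le_mul_of_nonneg_left hexp1 (by positivity)
          have t2 : Mψ * τ^((q+2)+1) ≤ Mψ * τ^(k+1) :=
            mul_le_mul_of_nonneg_left hexp2 hMψ0.le
          have hstep : D * (C * r^(q+2) * τ^(q+2) + Mψ * τ^((q+2)+1)) ≤ (K * τ) * τ^k := by
            calc D * (C * r^(q+2) * τ^(q+2) + Mψ * τ^((q+2)+1))
                ≤ D * (C * r^(q+2) * τ^(k+1) + Mψ * τ^(k+1)) :=
                  mul_le_mul_of_nonneg_left (add_le_add t1 t2) hD.le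
              _ = (K * τ) * τ^k := by rw [hKdef, pow_succ]; ring
          have : a * τ^k ≤ (K * τ) * τ^k := le_trans hkey hstep
          exact le_of_mul_le_mul_right this (pow_pos hτ k)
        have ha : a ≤ 0 := by
          by_contra hcon
          push_neg at hcon
          have hτ' : 0 < min 1 (a/(2*K)) := lt_min one_pos (by positivity)
          have hb := hbound _ hτ' (min_le_left _ _)
          have hb2 : K * min 1 (a/(2*K)) ≤ K * (a/(2*K)) :=
            mul_le_mul_of_nonneg_left (min_le_right _ _) hK.le
          have hb3 : K * (a/(2*K)) = a/2 := by field_simp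
          nlinarith
        have haz : a = 0 := le_antisymm ha ha0
        have hfz : |iteratedDeriv k ψ 0| = 0 := by
          rw [hadef, div_eq_zero_iff] at haz
          rcases haz with h'|h'
          · exact h'
          · exact absurd h' (by positivity)
        exact abs_eq_zero.mp hfz
      -- values at t = 1
      have hx2 : xh + (1:ℝ) • h = x := by rw [one_smul, hhdef]; abel
      have hxball : x ∈ Metric.ball xb (ρ/2) :=
        Metric.mem_ball.mpr (by rw [dist_eq_norm]; linarith)
      have hψ1 : ψ 1 = g x - gmin := by
        have := hGg x (Metric.ball_subset_closedBall hxball)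
        rw [hψdef]; simp only
        rw [hx2, this]
      have hdψ1 : deriv ψ 1 = ⟪gradient g x, x - xh⟫ := by
        rw [hψdef, hderiv xh h 1, hx2, hgradG x hxball h, hhdef]
      -- Taylor estimates at t = 1
      set Bc : ℝ := iteratedDeriv (q+2) ψ 0 with hBdef
      have hone : (1:ℝ) ∈ Set.Icc (0:ℝ) 1 := ⟨zero_le_one, le_refl _⟩
      have hT1 := aux_taylor (n := q+2) hψsm one_pos hone hψM
      have hsum1 : ∑ k ∈ Finset.range (q+3), iteratedDeriv k ψ 0 / (k ! : ℝ) * 1^k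
          = Bc / ((q+2)! : ℝ) := by
        rw [show q+3 = (q+2)+1 from rfl, Finset.sum_range_succ]
        have hrest : ∑ k ∈ Finset.range (q+2), iteratedDeriv k ψ 0 / (k ! : ℝ) * 1^k = 0 := by
          refine Finset.sum_eq_zero fun k hk => ?_
          rcases Nat.eq_zero_or_pos k with h'|h'
          · subst h'
            simp only [iteratedDeriv_zero, hψ0]
            simp
          · have hkle : k ≤ q+1 := by
              have := Finset.mem_range.mp hk; omega
            rw [hvanish k h' hkle]
            simp
        rw [hrest, zero_add, one_pow, hBdef]
        ring
      rw [hsum1] at hT1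
      -- derivative smoothness and Taylor
      have hcast : ((q+3 : ℕ) : WithTop ℕ∞) = ((q+2 : ℕ) : WithTop ℕ∞) + 1 := by
        push_cast
        rfl
      have hψ'sm : ContDiff ℝ ((q+2 : ℕ)) (deriv ψ) := by
        have h' := hψsm
        rw [hcast] at h'
        exact (contDiff_succ_iff_deriv.mp h').2.2
      have hψ'M : ∀ y, |iteratedDeriv (q+2) (deriv ψ) y| ≤ Mψ := by
        intro y
        rw [← iteratedDeriv_succ']
        exact hψM y
      have hT2 := aux_taylor (n := q+1) hψ'sm one_pos hone hψ'M
      have hsum2 : ∑ k ∈ Finset.range (q+2), iteratedDeriv k (deriv ψ) 0 / (k ! : ℝ) * 1^k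
          = Bc / ((q+1)! : ℝ) := by
        rw [show q+2 = (q+1)+1 from rfl, Finset.sum_range_succ]
        have hrest : ∑ k ∈ Finset.range (q+1),
            iteratedDeriv k (deriv ψ) 0 / (k ! : ℝ) * 1^k = 0 := by
          refine Finset.sum_eq_zero fun k hk => ?_
          have hkle : k + 1 ≤ q+1 := by
            have := Finset.mem_range.mp hk; omega
          rw [← iteratedDeriv_succ', hvanish (k+1) (by omega) hkle]
          simp
        rw [hrest, zero_add, one_pow, ← iteratedDeriv_succ', hBdef]
        ring
      rw [hsum2] at hT2
      -- put everything together
      have hfac2 : (1:ℝ) ≤ ((q+2)! : ℝ) := by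
        exact_mod_cast Nat.one_le_iff_ne_zero.mpr (q+2).factorial_ne_zero
      have hfac1 : (1:ℝ) ≤ ((q+1)! : ℝ) := by
        exact_mod_cast Nat.one_le_iff_ne_zero.mpr (q+1).factorial_ne_zero
      have h1 : |ψ 1 - Bc / ((q+2)! : ℝ)| ≤ Mψ := by
        refine le_trans hT1 ?_
        rw [one_pow, mul_one]
        exact div_le_self hMψ0.le hfac2
      have h2 : |deriv ψ 1 - Bc / ((q+1)! : ℝ)| ≤ Mψ := by
        refine le_trans hT2 ?_
        rw [one_pow, mul_one]
        exact div_le_self hMψ0.le hfac1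
      have hq2pos : (0:ℝ) < ((q:ℝ)+2) := by positivity
      have hfactsucc : (((q+2)! : ℕ) : ℝ) = ((q:ℝ)+2) * ((q+1)! : ℝ) := by
        rw [show (q+2) = (q+1)+1 from rfl, Nat.factorial_succ]
        push_cast
        ring
      have hzero : Bc/(((q+2)! : ℕ) : ℝ) - (1/((q:ℝ)+2)) * (Bc/(((q+1)! : ℕ) : ℝ)) = 0 := by
        rw [hfactsucc]
        have hf1 : ((q+1)! : ℝ) ≠ 0 := by positivity
        field_simp
        ring
      have hiden : g x - gmin - (1 / (((q+2) : ℕ) : ℝ)) * ⟪gradient g x, x - xh⟫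
          = (ψ 1 - Bc / ((q+2)! : ℝ)) - (1/((q:ℝ)+2)) * (deriv ψ 1 - Bc / ((q+1)! : ℝ)) := by
        rw [← hψ1, ← hdψ1]
        push_cast
        push_cast at hzero
        linarith [hzero]
      calc |g x - gmin - (1 / (((q+2) : ℕ) : ℝ)) * ⟪gradient g x, x - xh⟫|
          = |(ψ 1 - Bc / ((q+2)! : ℝ)) - (1/((q:ℝ)+2)) * (deriv ψ 1 - Bc / ((q+1)! : ℝ))| := by
            rw [hiden]
        _ ≤ |ψ 1 - Bc / ((q+2)! : ℝ)| + |(1/((q:ℝ)+2)) * (deriv ψ 1 - Bc / ((q+1)! : ℝ))| :=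
            abs_sub _ _
        _ = |ψ 1 - Bc / ((q+2)! : ℝ)| + (1/((q:ℝ)+2)) * |deriv ψ 1 - Bc / ((q+1)! : ℝ)| := by
            rw [abs_mul, abs_of_pos (by positivity : (0:ℝ) < 1/((q:ℝ)+2))]
        _ ≤ Mψ + 1 * Mψ := by
            have hle1 : (1/((q:ℝ)+2)) * |deriv ψ 1 - Bc / ((q+1)! : ℝ)| ≤ 1 * Mψ := by
              apply mul_le_mul ?_ h2 (abs_nonneg _) zero_le_one
              rw [div_le_one hq2pos]; linarith
            linarith
        _ = 2 * Mψ := by ring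
        _ = 2 * (q+3)! * M₀ * r^((q+2)+1) := by rw [hMψdef]; ring
end

section
/- Let f : ℝ^d → ℝ be C¹-smooth with a minimizer x̄ and minimal value f* = f(x̄), and fix α ∈ (0,1), c_L > 0, L > 0 and δ > 0 such that on the ball U = B(x̄, δ): f(x) ≥ f* for all x ∈ U, the gradient ∇f is L-Lipschitz continuous on U, and the Łojasiewicz inequality c_L · ‖∇f(x)‖ ≥ (f(x) − f*)^α holds for all x ∈ U. Consider gradient descent with constant stepsize: x_{k+1} = x_k − η∇f(x_k) with 0 < η ≤ 1/L. Then there exists ρ₀ > 0 such that for every initialization x₀ ∈ B(x̄, ρ₀) and every k ≥ 1, the iterate x_k lies in U and satisfies ‖x_k − x₀‖ ≤ (2/L)‖∇f(x₀)‖ + (4c_L/(1 − α)) · (f(x₀) − f*)^{1−α}. -/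
open Real Set InnerProductSpace

/-- Concavity-type tangent inequality for `rpow`. -/
private lemma rpow_tangent_step {a b p : ℝ} (ha : 0 < a) (hb : 0 ≤ b) (hba : b ≤ a)
    (hp0 : 0 < p) (hp1 : p < 1) :
    p * a ^ (p - 1) * (a - b) ≤ a ^ p - b ^ p := by
  set ψ : ℝ → ℝ := fun t => t ^ p - p * a ^ (p - 1) * t with hψ
  have hmono : MonotoneOn ψ (Icc 0 a) := by
    apply monotoneOn_of_deriv_nonneg (convex_Icc 0 a)
    · apply ContinuousOn.sub
      · exact fun t ht => (Real.continuousAt_rpow_const t p (Or.inr hp0.le)).continuousWithinAt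
      · exact (continuous_const.mul continuous_id).continuousOn
    · intro t ht
      rw [interior_Icc] at ht
      have hD : HasDerivAt ψ (p * t ^ (p - 1) - p * a ^ (p - 1)) t := by
        have h1 := Real.hasDerivAt_rpow_const (x := t) (p := p) (Or.inl ht.1.ne')
        have h2 := h1.sub ((hasDerivAt_id t).const_mul (p * a ^ (p - 1)))
        simp only [id, mul_one] at h2
        exact h2
      exact hD.differentiableAt.differentiableWithinAt
    · intro t ht
      rw [interior_Icc] at ht
      have hD : HasDerivAt ψ (p * t ^ (p - 1) - p * a ^ (p - 1)) t := by
        have h1 := Real.hasDerivAt_rpow_const (x := t) (p := p) (Or.inl ht.1.ne')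
        have h2 := h1.sub ((hasDerivAt_id t).const_mul (p * a ^ (p - 1)))
        simp only [id, mul_one] at h2
        exact h2
      rw [hD.deriv]
      have : a ^ (p - 1) ≤ t ^ (p - 1) :=
        Real.rpow_le_rpow_of_nonpos ht.1 ht.2.le (by linarith)
      nlinarith
  have h := hmono (Set.mem_Icc.mpr ⟨hb, hba⟩)
    (Set.mem_Icc.mpr ⟨ha.le, le_refl a⟩) hba
  simp only [hψ] at h
  nlinarith [h]

/-- Descent lemma: quadratic upper bound from a Lipschitz gradient on a convex set. -/
private lemma descent_quadratic_bound {E : Type*} [NormedAddCommGroup E] [InnerProductSpace ℝ E]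
    [CompleteSpace E]
    {f : E → ℝ} (hf : ContDiff ℝ 1 f) {L : ℝ} (hL : 0 < L) {s : Set E} (hs : Convex ℝ s)
    (hLip : LipschitzOnWith L.toNNReal (gradient f) s)
    {x v : E} (hx : x ∈ s) (hxv : x + v ∈ s) :
    f (x + v) ≤ f x + ⟪gradient f x, v⟫_ℝ + L / 2 * ‖v‖ ^ 2 := by
  have hdf : Differentiable ℝ f := hf.differentiable one_ne_zero
  set g := gradient f with hg
  set h : ℝ → ℝ := fun t => f (x + t • v) - t * ⟪g x, v⟫_ℝ - L / 2 * ‖v‖ ^ 2 * t ^ 2 with hh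
  have hD : ∀ t : ℝ, HasDerivAt h
      (⟪g (x + t • v), v⟫_ℝ - ⟪g x, v⟫_ℝ - L / 2 * ‖v‖ ^ 2 * (2 * t)) t := by
    intro t
    have hγ : HasDerivAt (fun t : ℝ => x + t • v) v t := by
      simpa using ((hasDerivAt_id t).smul_const v).const_add x
    have hφ : HasDerivAt (fun t : ℝ => f (x + t • v)) ⟪g (x + t • v), v⟫_ℝ t := by
      have := ((hdf (x + t • v)).hasGradientAt.hasFDerivAt).comp_hasDerivAt t hγ
      simpa [hg, InnerProductSpace.toDual_apply_apply, gradient, Function.comp_def] using this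
    have hlin : HasDerivAt (fun t : ℝ => t * ⟪g x, v⟫_ℝ) ⟪g x, v⟫_ℝ t := by
      simpa using (hasDerivAt_id t).mul_const ⟪g x, v⟫_ℝ
    have hq : HasDerivAt (fun t : ℝ => L / 2 * ‖v‖ ^ 2 * t ^ 2)
        (L / 2 * ‖v‖ ^ 2 * (2 * t)) t := by
      have := (hasDerivAt_pow 2 t).const_mul (L / 2 * ‖v‖ ^ 2)
      refine this.congr_deriv ?_; ring
    exact (hφ.sub hlin).sub hq
  have hmem : ∀ t : ℝ, t ∈ Icc (0:ℝ) 1 → x + t • v ∈ s := by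
    intro t ht
    have := hs hx hxv (by linarith [ht.2] : (0:ℝ) ≤ 1 - t) ht.1 (by ring)
    have heq : (1 - t) • x + t • (x + v) = x + t • v := by module
    rwa [heq] at this
  have hanti : AntitoneOn h (Icc (0:ℝ) 1) := by
    apply antitoneOn_of_deriv_nonpos (convex_Icc 0 1)
    · exact fun t _ => ((hD t).differentiableAt.continuousAt).continuousWithinAt
    · intro t ht
      exact ((hD t).differentiableAt).differentiableWithinAt
    · intro t ht
      rw [interior_Icc] at ht
      rw [(hD t).deriv]
      have hmem' : x + t • v ∈ s := hmem t ⟨ht.1.le, ht.2.le⟩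
      have hinner : ⟪g (x + t • v), v⟫_ℝ - ⟪g x, v⟫_ℝ ≤ ‖g (x + t • v) - g x‖ * ‖v‖ := by
        rw [← inner_sub_left]
        exact real_inner_le_norm _ _
      have hlipb : ‖g (x + t • v) - g x‖ ≤ L * (t * ‖v‖) := by
        have := hLip.dist_le_mul _ hmem' _ hx
        rw [dist_eq_norm] at this
        have h2 : dist (x + t • v) x = t * ‖v‖ := by
          rw [dist_eq_norm, add_sub_cancel_left, norm_smul, Real.norm_eq_abs,
            abs_of_pos ht.1]
        rw [h2, Real.coe_toNNReal L hL.le] at this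
        exact this
      have hvn : (0:ℝ) ≤ ‖v‖ := norm_nonneg v
      nlinarith
  have h10 : h 1 ≤ h 0 := hanti (Set.mem_Icc.mpr ⟨le_refl 0, zero_le_one⟩)
    (Set.mem_Icc.mpr ⟨zero_le_one, le_refl 1⟩) zero_le_one
  simp only [hh, one_smul, zero_smul, add_zero, one_pow, one_mul, zero_mul,
    mul_zero, sub_zero, zero_pow, ne_eq, OfNat.ofNat_ne_zero, not_false_eq_true] at h10
  linarith

set_option maxHeartbeats 1000000 in
/-- **Finite length of gradient descent under the Łojasiewicz inequality.**
Let `f : ℝ^d → ℝ` be `C¹` with minimizer `xb`, and suppose on the ball `U = B(xb, δ)`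
that `f ≥ f(xb)`, `∇f` is `L`-Lipschitz, and the Łojasiewicz inequality
`c_L‖∇f(x)‖ ≥ (f x − f xb)^α` holds (`α ∈ (0,1)`).  Then for gradient descent
`x_{k+1} = x_k − η ∇f(x_k)` with `0 < η ≤ 1/L` there is `ρ₀ > 0` such that every
trajectory started in `B(xb, ρ₀)` stays in `U` and satisfies
`‖x_k − x₀‖ ≤ (2/L)‖∇f(x₀)‖ + (4 c_L/(1−α)) (f x₀ − f xb)^{1−α}` for all `k ≥ 1`. -/
theorem gradient_descent_finite_length
    (d : ℕ) (f : EuclideanSpace ℝ (Fin d) → ℝ) (hf : ContDiff ℝ 1 f)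
    (xb : EuclideanSpace ℝ (Fin d))
    (α c_L L δ : ℝ) (hα0 : 0 < α) (hα1 : α < 1)
    (hcL : 0 < c_L) (hL : 0 < L) (hδ : 0 < δ)
    (hmin : ∀ x ∈ Metric.ball xb δ, f xb ≤ f x)
    (hLip : LipschitzOnWith L.toNNReal (gradient f) (Metric.ball xb δ))
    (hKL : ∀ x ∈ Metric.ball xb δ, (f x - f xb) ^ α ≤ c_L * ‖gradient f x‖)
    (η : ℝ) (hη0 : 0 < η) (hη : η ≤ 1 / L) :
    ∃ ρ₀ > (0 : ℝ), ∀ x : ℕ → EuclideanSpace ℝ (Fin d),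
      (∀ k : ℕ, x (k + 1) = x k - η • gradient f (x k)) →
      x 0 ∈ Metric.ball xb ρ₀ →
      ∀ k : ℕ, 1 ≤ k →
        x k ∈ Metric.ball xb δ ∧
        ‖x k - x 0‖ ≤ (2 / L) * ‖gradient f (x 0)‖ +
          (4 * c_L / (1 - α)) * (f (x 0) - f xb) ^ (1 - α) := by
  set p := 1 - α with hp
  have hp0 : 0 < p := by rw [hp]; linarith
  have hp1 : p < 1 := by rw [hp]; linarith
  -- a point of the ball where f does not exceed f xb is a critical point
  have hgrad_zero : ∀ y ∈ Metric.ball xb δ, f y ≤ f xb → gradient f y = 0 := by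
    intro y hy hfy
    have hlm : IsLocalMin f y :=
      Filter.eventually_of_mem (Metric.isOpen_ball.mem_nhds hy)
        (fun z hz => hfy.trans (hmin z hz))
    rw [gradient, hlm.fderiv_eq_zero, map_zero]
  have hgxb : gradient f xb = 0 :=
    hgrad_zero xb (Metric.mem_ball_self hδ) le_rfl
  -- choose ρ₀ by continuity
  have hcontA : ContinuousAt (fun y => 2 * c_L / p * (f y - f xb) ^ p) xb := by
    apply ContinuousAt.mul continuousAt_const
    exact (Real.continuousAt_rpow_const _ p (Or.inr hp0.le)).comp
      ((hf.continuous.continuousAt).sub continuousAt_const)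
  have hevent : ∀ᶠ y in nhds xb, 2 * c_L / p * (f y - f xb) ^ p < δ / 4 := by
    have h0 : 2 * c_L / p * (f xb - f xb) ^ p = 0 := by
      simp [Real.zero_rpow hp0.ne']
    have ht := hcontA.tendsto
    rw [h0] at ht
    exact ht.eventually_lt_const (by positivity)
  obtain ⟨ε, hε, hball⟩ := Metric.eventually_nhds_iff_ball.mp hevent
  refine ⟨min ε (δ / 4), by positivity, ?_⟩
  intro x hrec hx0
  have hx0ε : x 0 ∈ Metric.ball xb ε :=
    Metric.ball_subset_ball (min_le_left _ _) hx0
  have hx0near : ‖x 0 - xb‖ < δ / 4 := by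
    have := Metric.ball_subset_ball (min_le_right ε (δ/4)) hx0
    rwa [Metric.mem_ball, dist_eq_norm] at this
  have hx0half : x 0 ∈ Metric.ball xb (δ / 2) := by
    rw [Metric.mem_ball, dist_eq_norm]; linarith
  have hx0δ : x 0 ∈ Metric.ball xb δ :=
    Metric.ball_subset_ball (by linarith) hx0half
  set A := 2 * c_L / p * (f (x 0) - f xb) ^ p with hA
  have hAδ : A < δ / 4 := hball _ hx0ε
  -- the key one-step estimate
  have key : ∀ y, y ∈ Metric.ball xb (δ / 2) →
      y - η • gradient f y ∈ Metric.ball xb δ ∧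
      f xb ≤ f (y - η • gradient f y) ∧
      ‖y - η • gradient f y - y‖ ≤
        2 * c_L / p * ((f y - f xb) ^ p - (f (y - η • gradient f y) - f xb) ^ p) := by
    intro y hy2
    have hyδ : y ∈ Metric.ball xb δ := Metric.ball_subset_ball (by linarith) hy2
    have hy2' : ‖y - xb‖ < δ / 2 := by rwa [Metric.mem_ball, dist_eq_norm] at hy2
    have hgb : ‖gradient f y‖ ≤ L * ‖y - xb‖ := by
      have := hLip.dist_le_mul _ hyδ _ (Metric.mem_ball_self hδ)
      rw [Real.coe_toNNReal L hL.le, dist_eq_norm, dist_eq_norm, hgxb, sub_zero] at this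
      exact this
    have hηg : η * ‖gradient f y‖ ≤ ‖y - xb‖ := by
      calc η * ‖gradient f y‖ ≤ (1 / L) * (L * ‖y - xb‖) :=
            mul_le_mul hη hgb (norm_nonneg _) (by positivity)
        _ = ‖y - xb‖ := by field_simp
    have hstep : ‖y - η • gradient f y - y‖ = η * ‖gradient f y‖ := by
      have h1 : y - η • gradient f y - y = -(η • gradient f y) := by abel
      rw [h1, norm_neg, norm_smul, Real.norm_eq_abs, abs_of_pos hη0]
    have hyP : y - η • gradient f y ∈ Metric.ball xb δ := by
      rw [Metric.mem_ball, dist_eq_norm]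
      have h1 : y - η • gradient f y - xb = (y - η • gradient f y - y) + (y - xb) := by abel
      calc ‖y - η • gradient f y - xb‖
          ≤ ‖y - η • gradient f y - y‖ + ‖y - xb‖ := by rw [h1]; exact norm_add_le _ _
        _ < δ := by rw [hstep]; linarith
    have hfyP : f xb ≤ f (y - η • gradient f y) := hmin _ hyP
    -- descent inequality
    have hdes : f (y - η • gradient f y) ≤ f y - η / 2 * ‖gradient f y‖ ^ 2 := by
      have hxv : y + -(η • gradient f y) ∈ Metric.ball xb δ := by
        rwa [← sub_eq_add_neg]
      have hq := descent_quadratic_bound hf hL (convex_ball xb δ) hLip hyδ hxv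
      rw [← sub_eq_add_neg] at hq
      have hi : ⟪gradient f y, -(η • gradient f y)⟫_ℝ = -(η * ‖gradient f y‖ ^ 2) := by
        rw [inner_neg_right, real_inner_smul_right, real_inner_self_eq_norm_sq]
      have hn : ‖-(η • gradient f y)‖ ^ 2 = η ^ 2 * ‖gradient f y‖ ^ 2 := by
        rw [norm_neg, norm_smul, Real.norm_eq_abs, abs_of_pos hη0, mul_pow]
      rw [hi, hn] at hq
      have hLη : η * L ≤ 1 := (le_div_iff₀ hL).mp hη
      nlinarith [sq_nonneg ‖gradient f y‖]
    refine ⟨hyP, hfyP, ?_⟩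
    by_cases hgy : gradient f y = 0
    · simp [hgy]
    -- nontrivial step
    have ha : 0 < f y - f xb := by
      rcases lt_or_eq_of_le (hmin y hyδ) with h | h
      · linarith
      · exact absurd (hgrad_zero y hyδ h.ge) hgy
    have hb : 0 ≤ f (y - η • gradient f y) - f xb := by linarith
    have hgpos : 0 < ‖gradient f y‖ := norm_pos_iff.mpr hgy
    have hba : f (y - η • gradient f y) - f xb ≤ f y - f xb := by nlinarith
    have hconc := rpow_tangent_step ha hb hba hp0 hp1
    have hexp : (f y - f xb) ^ (p - 1) = ((f y - f xb) ^ α)⁻¹ := by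
      rw [show p - 1 = -α by rw [hp]; ring, Real.rpow_neg ha.le]
    rw [hexp] at hconc
    have hKLy := hKL y hyδ
    have hapow : 0 < (f y - f xb) ^ α := Real.rpow_pos_of_pos ha α
    have hinv : (c_L * ‖gradient f y‖)⁻¹ ≤ ((f y - f xb) ^ α)⁻¹ :=
      inv_anti₀ hapow hKLy
    have hd : η / 2 * ‖gradient f y‖ ^ 2 ≤
        (f y - f xb) - (f (y - η • gradient f y) - f xb) := by linarith
    have e1 : η * ‖gradient f y‖ =
        2 * c_L / p * (p * (c_L * ‖gradient f y‖)⁻¹ * (η / 2 * ‖gradient f y‖ ^ 2)) := by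
      field_simp
    have e2 : p * (c_L * ‖gradient f y‖)⁻¹ * (η / 2 * ‖gradient f y‖ ^ 2) ≤
        p * ((f y - f xb) ^ α)⁻¹ * (η / 2 * ‖gradient f y‖ ^ 2) :=
      mul_le_mul_of_nonneg_right (mul_le_mul_of_nonneg_left hinv hp0.le) (by positivity)
    have e3 : p * ((f y - f xb) ^ α)⁻¹ * (η / 2 * ‖gradient f y‖ ^ 2) ≤
        p * ((f y - f xb) ^ α)⁻¹ * ((f y - f xb) - (f (y - η • gradient f y) - f xb)) :=
      mul_le_mul_of_nonneg_left hd
        (mul_nonneg hp0.le (inv_nonneg.mpr hapow.le))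
    rw [hstep, e1]
    exact mul_le_mul_of_nonneg_left ((e2.trans e3).trans hconc) (by positivity)
  -- main induction
  have claim : ∀ k : ℕ, x k ∈ Metric.ball xb (δ / 2) ∧ f xb ≤ f (x k) ∧
      (∑ i ∈ Finset.range k, ‖x (i + 1) - x i‖) + 2 * c_L / p * (f (x k) - f xb) ^ p ≤ A := by
    intro k
    induction k with
    | zero =>
      refine ⟨hx0half, hmin _ hx0δ, ?_⟩
      simp only [Finset.range_zero, Finset.sum_empty, zero_add]
      exact le_of_eq rfl
    | succ k ih =>
      obtain ⟨hk2, hkf, hksum⟩ := ih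
      obtain ⟨hk1δ, hk1f, hk1len⟩ := key (x k) hk2
      rw [← hrec k] at hk1δ hk1f hk1len
      have hrpk1 : 0 ≤ 2 * c_L / p * (f (x (k + 1)) - f xb) ^ p :=
        mul_nonneg (by positivity) (Real.rpow_nonneg (by linarith) p)
      have hsum' : (∑ i ∈ Finset.range (k + 1), ‖x (i + 1) - x i‖) +
          2 * c_L / p * (f (x (k + 1)) - f xb) ^ p ≤ A := by
        rw [Finset.sum_range_succ]
        have expand : 2 * c_L / p * ((f (x k) - f xb) ^ p - (f (x (k + 1)) - f xb) ^ p) =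
            2 * c_L / p * (f (x k) - f xb) ^ p -
            2 * c_L / p * (f (x (k + 1)) - f xb) ^ p := by ring
        rw [expand] at hk1len
        linarith
      refine ⟨?_, hk1f, hsum'⟩
      have htel : ‖x (k + 1) - x 0‖ ≤ ∑ i ∈ Finset.range (k + 1), ‖x (i + 1) - x i‖ := by
        have h1 : dist (x 0) (x (k + 1)) ≤
            ∑ i ∈ Finset.range (k + 1), ‖x (i + 1) - x i‖ := by
          refine (dist_le_range_sum_dist x (k + 1)).trans ?_
          refine Finset.sum_le_sum fun i _ => ?_
          rw [dist_eq_norm, norm_sub_rev]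
        rwa [dist_eq_norm, norm_sub_rev] at h1
      rw [Metric.mem_ball, dist_eq_norm]
      have htri : ‖x (k + 1) - xb‖ ≤ ‖x (k + 1) - x 0‖ + ‖x 0 - xb‖ := by
        have h1 : x (k + 1) - xb = (x (k + 1) - x 0) + (x 0 - xb) := by abel
        rw [h1]; exact norm_add_le _ _
      linarith
  -- conclusion
  intro k _
  obtain ⟨hk2, hkf, hksum⟩ := claim k
  refine ⟨Metric.ball_subset_ball (by linarith) hk2, ?_⟩
  have htel : ‖x k - x 0‖ ≤ ∑ i ∈ Finset.range k, ‖x (i + 1) - x i‖ := by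
    have h1 : dist (x 0) (x k) ≤ ∑ i ∈ Finset.range k, ‖x (i + 1) - x i‖ := by
      refine (dist_le_range_sum_dist x k).trans ?_
      refine Finset.sum_le_sum fun i _ => ?_
      rw [dist_eq_norm, norm_sub_rev]
    rwa [dist_eq_norm, norm_sub_rev] at h1
  have hrpk : 0 ≤ 2 * c_L / p * (f (x k) - f xb) ^ p :=
    mul_nonneg (by positivity) (Real.rpow_nonneg (by linarith) p)
  have hS : 0 ≤ ∑ i ∈ Finset.range k, ‖x (i + 1) - x i‖ :=
    Finset.sum_nonneg fun i _ => norm_nonneg _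
  have hA2 : 4 * c_L / p * (f (x 0) - f xb) ^ p = 2 * A := by rw [hA]; ring
  have hfirst : 0 ≤ 2 / L * ‖gradient f (x 0)‖ := by positivity
  linarith
end

section
/- Let E be a real inner product space, let g : E → ℝ be differentiable at a point x, let x̄ ∈ E with value g* = g(x̄), and let p ≥ 1 be a real number. Suppose x satisfies: g(x) − g* > 0, the aiming inequality ⟨∇g(x), x − x̄⟩ ≥ g(x) − g*, the lower growth bound g(x) − g* ≥ a · ‖x − x̄‖^p, and the gradient bound ‖∇g(x)‖ ≤ b · ‖x − x̄‖^{p−1}, for constants 0 < a ≤ b. Then the Polyak gradient step x⁺ := x − ((g(x) − g*)/‖∇g(x)‖²)·∇g(x) satisfies ‖x⁺ − x̄‖² ≤ ‖x − x̄‖² − ((g(x) − g*)/‖∇g(x)‖)² ≤ (1 − a²/b²) · ‖x − x̄‖². In particular, a single Polyak step shrinks the distance to x̄ by the constant factor √(1 − a²/b²) < 1 when a < b (and sends x to x̄ when a = b). -/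
open scoped RealInnerProductSpace

/-- **Contraction of a single Polyak step.**
Let `g : E → ℝ` be differentiable at `x`, with target point `xb` and value `g xb`.
If `g x − g xb > 0`, the aiming inequality `⟨∇g(x), x − xb⟩ ≥ g x − g xb` holds,
`g x − g xb ≥ a‖x − xb‖^p`, and `‖∇g(x)‖ ≤ b‖x − xb‖^{p−1}` with `0 < a ≤ b` and
`p ≥ 1`, then the Polyak step `x⁺ = x − ((g x − g xb)/‖∇g(x)‖²) ∇g(x)` satisfies
`‖x⁺ − xb‖² ≤ ‖x − xb‖² − ((g x − g xb)/‖∇g(x)‖)² ≤ (1 − a²/b²)‖x − xb‖²`. -/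
theorem polyak_step_contracts
    {E : Type*} [NormedAddCommGroup E] [InnerProductSpace ℝ E] [CompleteSpace E]
    (g : E → ℝ) (x xb : E) (hdiff : DifferentiableAt ℝ g x)
    (p : ℝ) (hp : 1 ≤ p) (a b : ℝ) (ha : 0 < a) (hab : a ≤ b)
    (hpos : 0 < g x - g xb)
    (haim : g x - g xb ≤ ⟪gradient g x, x - xb⟫)
    (hgrowth : a * ‖x - xb‖ ^ p ≤ g x - g xb)
    (hgrad : ‖gradient g x‖ ≤ b * ‖x - xb‖ ^ (p - 1)) :
    ‖(x - ((g x - g xb) / ‖gradient g x‖ ^ 2) • gradient g x) - xb‖ ^ 2 ≤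
        ‖x - xb‖ ^ 2 - ((g x - g xb) / ‖gradient g x‖) ^ 2 ∧
      ‖x - xb‖ ^ 2 - ((g x - g xb) / ‖gradient g x‖) ^ 2 ≤
        (1 - a ^ 2 / b ^ 2) * ‖x - xb‖ ^ 2 := by

  set v := gradient g x with hv
  set Δ := g x - g xb with hΔ
  have hd : x - xb ≠ 0 := by
    intro h
    rw [h, inner_zero_right] at haim
    linarith
  have hD : (0:ℝ) < ‖x - xb‖ := norm_pos_iff.2 hd
  have hvne : v ≠ 0 := by
    intro h
    rw [h, inner_zero_left] at haim
    linarith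
  have hV : (0:ℝ) < ‖v‖ := norm_pos_iff.2 hvne
  have hb : (0:ℝ) < b := lt_of_lt_of_le ha hab
  set t := Δ / ‖v‖ ^ 2 with hT
  constructor
  · have hexp : x - t • v - xb = (x - xb) - t • v := by abel
    rw [hexp, norm_sub_sq_real, real_inner_smul_right, norm_smul, real_inner_comm]
    have ht : 0 ≤ t := div_nonneg hpos.le (by positivity)
    rw [Real.norm_eq_abs, abs_of_nonneg ht]
    have h1 : (t * ‖v‖) ^ 2 = Δ ^ 2 / ‖v‖ ^ 2 := by
      rw [hT]; field_simp
    have h2 : (Δ / ‖v‖) ^ 2 = Δ ^ 2 / ‖v‖ ^ 2 := by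
      rw [div_pow]
    have h3 : t * Δ = Δ ^ 2 / ‖v‖ ^ 2 := by
      rw [hT]; field_simp
    nlinarith [mul_le_mul_of_nonneg_left haim ht]
  · have hs : (0:ℝ) < ‖x - xb‖ ^ (p - 1) := Real.rpow_pos_of_pos hD _
    have hsplit : ‖x - xb‖ ^ p = ‖x - xb‖ ^ (p - 1) * ‖x - xb‖ := by
      have h := Real.rpow_add hD (p-1) 1
      rw [Real.rpow_one] at h
      rw [← h]
      norm_num
    have hkey : a * ‖x - xb‖ / b ≤ Δ / ‖v‖ := by
      have h1 : a * ‖x - xb‖ / b = a * (‖x - xb‖ ^ (p-1) * ‖x - xb‖) / (b * ‖x - xb‖ ^ (p-1)) := by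
        field_simp
      rw [h1, ← hsplit]
      exact div_le_div₀ (by linarith) hgrowth hV hgrad
    have hkey2 : (a * ‖x - xb‖ / b) ^ 2 ≤ (Δ / ‖v‖) ^ 2 := by
      apply sq_le_sq' _ hkey
      have : 0 ≤ a * ‖x - xb‖ / b := by positivity
      linarith
    have heq : (1 - a ^ 2 / b ^ 2) * ‖x - xb‖ ^ 2 = ‖x - xb‖ ^ 2 - (a * ‖x - xb‖ / b) ^ 2 := by
      field_simp
    linarith
end

section
/- For every B = (P; Q) ∈ M (i.e. PPᵀ = D and PQᵀ = 0): the point B̄ = (P; 0) lies in S and is a nearest point of B in S; the gradient of f at B (with respect to the Frobenius inner product) is ∇f(B) = 4(BBᵀ − X)B, which in block form equals (0; 4QQᵀQ); and the inequalities ⟨∇f(B), B − B̄⟩_F = 4‖QQᵀ‖_F² = 4f(B) ≥ f(B) and ‖∇f(B)‖_F ≤ 4 · dist³(B, S) hold. -/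
open Matrix

/-- The Frobenius norm of a real matrix. -/
noncomputable def frobNorm {m n : ℕ} (A : Matrix (Fin m) (Fin n) ℝ) : ℝ :=
  Real.sqrt (∑ i, ∑ j, A i j ^ 2)

/-- Points of `ℝ^{d×k}` are written in block form `B = (P; Q)`; this is the Frobenius
distance between two such block pairs. -/
noncomputable def frobDist {r dr k : ℕ}
    (B C : Matrix (Fin r) (Fin k) ℝ × Matrix (Fin dr) (Fin k) ℝ) : ℝ :=
  Real.sqrt (frobNorm (B.1 - C.1) ^ 2 + frobNorm (B.2 - C.2) ^ 2)

/-- Frobenius distance from a block pair to a set of block pairs. -/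
noncomputable def frobDistSet {r dr k : ℕ}
    (B : Matrix (Fin r) (Fin k) ℝ × Matrix (Fin dr) (Fin k) ℝ)
    (S : Set (Matrix (Fin r) (Fin k) ℝ × Matrix (Fin dr) (Fin k) ℝ)) : ℝ :=
  sInf (frobDist B '' S)

/-- The matrix-factorization objective `f(B) = ‖BBᵀ − X‖_F²` in block form:
`f(P,Q) = ‖PPᵀ − D‖_F² + 2‖PQᵀ‖_F² + ‖QQᵀ‖_F²`. -/
noncomputable def mfObj {r dr k : ℕ} (D : Matrix (Fin r) (Fin r) ℝ)
    (B : Matrix (Fin r) (Fin k) ℝ × Matrix (Fin dr) (Fin k) ℝ) : ℝ :=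
  frobNorm (B.1 * B.1ᵀ - D) ^ 2 + 2 * frobNorm (B.1 * B.2ᵀ) ^ 2 +
    frobNorm (B.2 * B.2ᵀ) ^ 2

/-- The solution set `S = {(P;Q) : PPᵀ = D, Q = 0}`. -/
def mfSol {r dr k : ℕ} (D : Matrix (Fin r) (Fin r) ℝ) :
    Set (Matrix (Fin r) (Fin k) ℝ × Matrix (Fin dr) (Fin k) ℝ) :=
  {B | B.1 * B.1ᵀ = D ∧ B.2 = 0}

/-- The ravine `M = {(P;Q) : PPᵀ = D, PQᵀ = 0}`. -/
def mfRavine {r dr k : ℕ} (D : Matrix (Fin r) (Fin r) ℝ) :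
    Set (Matrix (Fin r) (Fin k) ℝ × Matrix (Fin dr) (Fin k) ℝ) :=
  {B | B.1 * B.1ᵀ = D ∧ B.1 * B.2ᵀ = 0}


/-- The trace (Frobenius) inner product of two real matrices. -/
noncomputable def frobInner {m n : ℕ} (A B : Matrix (Fin m) (Fin n) ℝ) : ℝ :=
  ∑ i, ∑ j, A i j * B i j

attribute [local instance] Matrix.normedAddCommGroup Matrix.normedSpace

lemma frobNorm_nonneg {m n : ℕ} (A : Matrix (Fin m) (Fin n) ℝ) : 0 ≤ frobNorm A :=
  Real.sqrt_nonneg _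

lemma frobNorm_sq' {m n : ℕ} (A : Matrix (Fin m) (Fin n) ℝ) :
    frobNorm A ^ 2 = ∑ i, ∑ j, A i j ^ 2 := by
  rw [frobNorm, Real.sq_sqrt]; positivity

lemma frobNorm_zero' {m n : ℕ} : frobNorm (0 : Matrix (Fin m) (Fin n) ℝ) = 0 := by
  simp [frobNorm]

lemma frobNorm_transpose' {m n : ℕ} (A : Matrix (Fin m) (Fin n) ℝ) :
    frobNorm Aᵀ = frobNorm A := by
  rw [frobNorm, frobNorm, Finset.sum_comm]
  simp [Matrix.transpose_apply]

lemma frobNorm_mul_le' {m n p : ℕ} (A : Matrix (Fin m) (Fin n) ℝ)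
    (B : Matrix (Fin n) (Fin p) ℝ) : frobNorm (A * B) ≤ frobNorm A * frobNorm B := by
  rw [frobNorm, frobNorm, frobNorm, ← Real.sqrt_mul (by positivity)]
  apply Real.sqrt_le_sqrt
  calc ∑ i, ∑ j, (A * B) i j ^ 2
      = ∑ i, ∑ j, (∑ l, A i l * B l j) ^ 2 := by
        simp [Matrix.mul_apply]
    _ ≤ ∑ i, ∑ j, (∑ l, A i l ^ 2) * (∑ l, B l j ^ 2) := by
        refine Finset.sum_le_sum fun i _ => Finset.sum_le_sum fun j _ => ?_
        exact Finset.sum_mul_sq_le_sq_mul_sq _ _ _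
    _ = (∑ i, ∑ l, A i l ^ 2) * (∑ j, ∑ l, B l j ^ 2) := (Finset.sum_mul_sum _ _ _ _).symm
    _ = (∑ i, ∑ l, A i l ^ 2) * (∑ l, ∑ j, B l j ^ 2) := by
        congr 1
        exact Finset.sum_comm

lemma frobNorm_four_smul {m n : ℕ} (A : Matrix (Fin m) (Fin n) ℝ) :
    frobNorm ((4 : ℝ) • A) = 4 * frobNorm A := by
  have h : ∑ i, ∑ j, ((4 : ℝ) • A) i j ^ 2 = 4 ^ 2 * ∑ i, ∑ j, A i j ^ 2 := by
    simp [Matrix.smul_apply, smul_eq_mul, mul_pow, Finset.mul_sum]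
  rw [frobNorm, h, Real.sqrt_mul (by positivity), Real.sqrt_sq (by norm_num), frobNorm]

lemma mfObj_eq {r dr k : ℕ} (D : Matrix (Fin r) (Fin r) ℝ) :
    mfObj (dr := dr) (k := k) D = fun B =>
      (∑ i, ∑ j, ((∑ l, B.1 i l * B.1 j l) - D i j) * ((∑ l, B.1 i l * B.1 j l) - D i j)) +
      2 * (∑ i, ∑ j, (∑ l, B.1 i l * B.2 j l) * (∑ l, B.1 i l * B.2 j l)) +
      (∑ i, ∑ j, (∑ l, B.2 i l * B.2 j l) * (∑ l, B.2 i l * B.2 j l)) := by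
  funext B
  simp only [mfObj, frobNorm_sq']
  simp only [pow_two, Matrix.sub_apply, Matrix.mul_apply, Matrix.transpose_apply]

noncomputable def entryCLM {m n : ℕ} (i : Fin m) (j : Fin n) :
    Matrix (Fin m) (Fin n) ℝ →L[ℝ] ℝ :=
  LinearMap.toContinuousLinearMap (Matrix.entryLinearMap ℝ ℝ i j)

@[simp] lemma entryCLM_apply {m n : ℕ} (i : Fin m) (j : Fin n) (A : Matrix (Fin m) (Fin n) ℝ) :
    entryCLM i j A = A i j := rfl

section
variable {r dr k : ℕ}
abbrev E (r dr k : ℕ) := Matrix (Fin r) (Fin k) ℝ × Matrix (Fin dr) (Fin k) ℝ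

noncomputable def e1 (i : Fin r) (l : Fin k) : E r dr k →L[ℝ] ℝ :=
  (entryCLM i l).comp (ContinuousLinearMap.fst ℝ _ _)
noncomputable def e2 (i : Fin dr) (l : Fin k) : E r dr k →L[ℝ] ℝ :=
  (entryCLM i l).comp (ContinuousLinearMap.snd ℝ _ _)

@[simp] lemma e1_apply (i : Fin r) (l : Fin k) (B : E r dr k) : e1 i l B = B.1 i l := rfl
@[simp] lemma e2_apply (i : Fin dr) (l : Fin k) (B : E r dr k) : e2 i l B = B.2 i l := rfl

lemma he1 (i : Fin r) (l : Fin k) (B : E r dr k) :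
    HasFDerivAt (fun B : E r dr k => B.1 i l) (e1 (dr := dr) i l) B :=
  (e1 i l).hasFDerivAt

lemma he2 (i : Fin dr) (l : Fin k) (B : E r dr k) :
    HasFDerivAt (fun B : E r dr k => B.2 i l) (e2 (r := r) i l) B :=
  (e2 i l).hasFDerivAt

lemma key (Dv : Fin r → ℝ) (B : E r dr k)
    (h1 : B.1 * B.1ᵀ = Matrix.diagonal Dv) (h2 : B.1 * B.2ᵀ = 0) :
    ∃ L : E r dr k →L[ℝ] ℝ, HasFDerivAt (mfObj (Matrix.diagonal Dv)) L B ∧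
      ∀ V : E r dr k, L V = frobInner (0 : Matrix (Fin r) (Fin k) ℝ) V.1 +
        frobInner ((4 : ℝ) • (B.2 * B.2ᵀ * B.2)) V.2 := by
  have h1' : ∀ i j, (∑ l, B.1 i l * B.1 j l) = Matrix.diagonal Dv i j := by
    intro i j
    have := congrFun (congrFun h1 i) j
    simpa [Matrix.mul_apply, Matrix.transpose_apply] using this
  have h2' : ∀ i j, (∑ l, B.1 i l * B.2 j l) = 0 := by
    intro i j
    have := congrFun (congrFun h2 i) j
    simpa [Matrix.mul_apply, Matrix.transpose_apply] using this
  have H1 := HasFDerivAt.fun_sum (fun i (_ : i ∈ Finset.univ) =>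
    HasFDerivAt.fun_sum (fun j (_ : j ∈ Finset.univ) =>
      (((HasFDerivAt.fun_sum (fun l (_ : l ∈ Finset.univ) =>
        ((he1 i l B).fun_mul (he1 j l B)))).sub_const (Matrix.diagonal Dv i j)).fun_mul
       ((HasFDerivAt.fun_sum (fun l (_ : l ∈ Finset.univ) =>
        ((he1 i l B).fun_mul (he1 j l B)))).sub_const (Matrix.diagonal Dv i j)))))
  have H2 := (HasFDerivAt.fun_sum (fun i (_ : i ∈ Finset.univ) =>
    HasFDerivAt.fun_sum (fun j (_ : j ∈ Finset.univ) =>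
      ((HasFDerivAt.fun_sum (fun l (_ : l ∈ Finset.univ) =>
        ((he1 i l B).fun_mul (he2 j l B)))).fun_mul
       (HasFDerivAt.fun_sum (fun l (_ : l ∈ Finset.univ) =>
        ((he1 i l B).fun_mul (he2 j l B)))))))).const_mul (2:ℝ)
  have H3 := HasFDerivAt.fun_sum (fun i (_ : i ∈ Finset.univ) =>
    HasFDerivAt.fun_sum (fun j (_ : j ∈ Finset.univ) =>
      ((HasFDerivAt.fun_sum (fun l (_ : l ∈ Finset.univ) =>
        ((he2 i l B).fun_mul (he2 j l B)))).fun_mul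
       (HasFDerivAt.fun_sum (fun l (_ : l ∈ Finset.univ) =>
        ((he2 i l B).fun_mul (he2 j l B)))))))
  have H := (H1.add H2).add H3
  refine ⟨_, by rw [mfObj_eq]; exact H, ?_⟩
  intro V
  simp only [h1', h2', sub_self, zero_smul, smul_zero, zero_mul, mul_zero, zero_add, add_zero,
    Finset.sum_const_zero, smul_zero,
    ContinuousLinearMap.add_apply, ContinuousLinearMap.smul_apply, ContinuousLinearMap.coe_sum',
    Finset.sum_apply, ContinuousLinearMap.zero_apply, e1_apply, e2_apply, smul_eq_mul]
  change (∑ i, ∑ i_1, ((∑ i_2, B.2 i i_2 * B.2 i_1 i_2) •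
      ∑ i_2, (B.2 i i_2 • e2 (r := r) i_1 i_2 + B.2 i_1 i_2 • e2 i i_2) +
    (∑ i_2, B.2 i i_2 * B.2 i_1 i_2) • ∑ i_2, (B.2 i i_2 • e2 i_1 i_2 + B.2 i_1 i_2 • e2 i i_2)) :
      E r dr k →L[ℝ] ℝ) V = _
  simp only [ContinuousLinearMap.add_apply, ContinuousLinearMap.smul_apply,
    ContinuousLinearMap.coe_sum', Finset.sum_apply, e2_apply, smul_eq_mul]
  simp only [frobInner, Matrix.smul_apply, Matrix.mul_apply, Matrix.transpose_apply,
    Matrix.zero_apply, zero_mul, Finset.sum_const_zero, zero_add, smul_eq_mul]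
  set Q := B.2 with hQ
  set W := V.2 with hW
  have hsym : ∀ a b, (∑ i, Q a i * Q b i) = (∑ i, Q b i * Q a i) := by
    intro a b; exact Finset.sum_congr rfl fun i _ => mul_comm _ _
  have eA : ∀ (x x₁ : Fin dr),
      ((∑ i, Q x i * Q x₁ i) * (∑ x₂, (Q x x₂ * W x₁ x₂ + Q x₁ x₂ * W x x₂)) +
       (∑ i, Q x i * Q x₁ i) * (∑ x₂, (Q x x₂ * W x₁ x₂ + Q x₁ x₂ * W x x₂))) =
      (∑ x₂, 2 * (∑ i, Q x i * Q x₁ i) * (Q x x₂ * W x₁ x₂)) +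
      (∑ x₂, 2 * (∑ i, Q x i * Q x₁ i) * (Q x₁ x₂ * W x x₂)) := by
    intro x x₁
    generalize (∑ i, Q x i * Q x₁ i) = S
    rw [Finset.mul_sum, ← Finset.sum_add_distrib, ← Finset.sum_add_distrib]
    exact Finset.sum_congr rfl fun x₂ _ => by ring
  calc (∑ x, ∑ x₁, ((∑ i, Q x i * Q x₁ i) * (∑ x₂, (Q x x₂ * W x₁ x₂ + Q x₁ x₂ * W x x₂)) +
       (∑ i, Q x i * Q x₁ i) * (∑ x₂, (Q x x₂ * W x₁ x₂ + Q x₁ x₂ * W x x₂))))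
      = (∑ x, ∑ x₁, ∑ x₂, 2 * (∑ i, Q x i * Q x₁ i) * (Q x x₂ * W x₁ x₂)) +
        (∑ x, ∑ x₁, ∑ x₂, 2 * (∑ i, Q x i * Q x₁ i) * (Q x₁ x₂ * W x x₂)) := by
        rw [← Finset.sum_add_distrib]
        refine Finset.sum_congr rfl fun x _ => ?_
        rw [← Finset.sum_add_distrib]
        exact Finset.sum_congr rfl fun x₁ _ => eA x x₁
    _ = (∑ x, ∑ x₁, ∑ x₂, 2 * (∑ i, Q x i * Q x₁ i) * (Q x x₂ * W x₁ x₂)) +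
        (∑ x, ∑ x₁, ∑ x₂, 2 * (∑ i, Q x i * Q x₁ i) * (Q x x₂ * W x₁ x₂)) := by
        congr 1
        rw [Finset.sum_comm]
        refine Finset.sum_congr rfl fun x _ => Finset.sum_congr rfl fun x₁ _ => ?_
        rw [hsym x₁ x]
    _ = ∑ x, ∑ x₁, ∑ x₂, 4 * (∑ i, Q x i * Q x₁ i) * (Q x x₂ * W x₁ x₂) := by
        rw [← Finset.sum_add_distrib]
        refine Finset.sum_congr rfl fun x _ => ?_
        rw [← Finset.sum_add_distrib]
        refine Finset.sum_congr rfl fun x₁ _ => ?_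
        rw [← Finset.sum_add_distrib]
        exact Finset.sum_congr rfl fun x₂ _ => by ring
    _ = ∑ a, ∑ b, 4 * (∑ j, (∑ l, Q a l * Q j l) * Q j b) * W a b := by
        rw [Finset.sum_comm]
        refine Finset.sum_congr rfl fun a _ => ?_
        rw [Finset.sum_comm]
        refine Finset.sum_congr rfl fun b _ => ?_
        have hr : (4 * ∑ j, (∑ l, Q a l * Q j l) * Q j b) * W a b =
            ∑ j, 4 * ((∑ l, Q a l * Q j l) * Q j b) * W a b := by
          rw [Finset.mul_sum, Finset.sum_mul]
        rw [hr]
        refine Finset.sum_congr rfl fun j _ => ?_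
        rw [hsym j a]
        ring

lemma frobInner_grad {dr k : ℕ} (Q : Matrix (Fin dr) (Fin k) ℝ) :
    frobInner ((4 : ℝ) • (Q * Qᵀ * Q)) Q = 4 * frobNorm (Q * Qᵀ) ^ 2 := by
  have hsym : ∀ a b, (∑ i, Q a i * Q b i) = (∑ i, Q b i * Q a i) := fun a b =>
    Finset.sum_congr rfl fun i _ => mul_comm _ _
  simp only [frobNorm_sq']
  simp only [frobInner, Matrix.smul_apply, Matrix.mul_apply,
    Matrix.transpose_apply, smul_eq_mul, pow_two]
  rw [Finset.mul_sum]
  refine Finset.sum_congr rfl fun i _ => ?_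
  rw [Finset.mul_sum]
  calc ∑ b, 4 * (∑ j, (∑ l, Q i l * Q j l) * Q j b) * Q i b
      = ∑ b, ∑ j, 4 * ((∑ l, Q i l * Q j l) * (Q j b * Q i b)) := by
        refine Finset.sum_congr rfl fun b _ => ?_
        rw [Finset.mul_sum, Finset.sum_mul]
        exact Finset.sum_congr rfl fun j _ => by ring
    _ = ∑ j, ∑ b, 4 * ((∑ l, Q i l * Q j l) * (Q j b * Q i b)) := Finset.sum_comm
    _ = ∑ j, 4 * ((∑ l, Q i l * Q j l) * ∑ l, Q i l * Q j l) := by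
        refine Finset.sum_congr rfl fun j _ => ?_
        rw [← Finset.mul_sum, ← Finset.mul_sum, hsym j i]

/-- **Aiming and gradient bound for matrix factorization on the ravine.**
For every `B = (P;Q) ∈ M`: the point `B̄ = (P;0)` lies in `S` and is a nearest point
of `B` in `S`; the gradient of `f` at `B` with respect to the Frobenius inner product
is `(0; 4QQᵀQ)` (expressed here through the Fréchet derivative); and
`⟨∇f(B), B − B̄⟩_F = 4‖QQᵀ‖_F² = 4 f(B) ≥ f(B)` and `‖∇f(B)‖_F ≤ 4 dist³(B, S)`. -/
theorem matrix_factorization_aiming_and_gradient_bound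
    (r d k : ℕ) (hr : 0 < r) (hrd : r < d) (hrk : r ≤ k)
    (Dv : Fin r → ℝ) (hDv : ∀ i, 0 < Dv i) :
    ∀ B : Matrix (Fin r) (Fin k) ℝ × Matrix (Fin (d - r)) (Fin k) ℝ,
      B ∈ mfRavine (Matrix.diagonal Dv) →
      (B.1, (0 : Matrix (Fin (d - r)) (Fin k) ℝ)) ∈ mfSol (Matrix.diagonal Dv) ∧
      frobDist B (B.1, (0 : Matrix (Fin (d - r)) (Fin k) ℝ)) =
        frobDistSet B (mfSol (Matrix.diagonal Dv)) ∧
      DifferentiableAt ℝ (mfObj (Matrix.diagonal Dv)) B ∧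
      (∀ V : Matrix (Fin r) (Fin k) ℝ × Matrix (Fin (d - r)) (Fin k) ℝ,
        fderiv ℝ (mfObj (Matrix.diagonal Dv)) B V =
          frobInner ((0 : Matrix (Fin r) (Fin k) ℝ)) V.1 +
            frobInner ((4 : ℝ) • (B.2 * B.2ᵀ * B.2)) V.2) ∧
      frobInner ((4 : ℝ) • (B.2 * B.2ᵀ * B.2)) B.2 = 4 * frobNorm (B.2 * B.2ᵀ) ^ 2 ∧
      4 * frobNorm (B.2 * B.2ᵀ) ^ 2 = 4 * mfObj (Matrix.diagonal Dv) B ∧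
      mfObj (Matrix.diagonal Dv) B ≤ frobInner ((4 : ℝ) • (B.2 * B.2ᵀ * B.2)) B.2 ∧
      frobNorm ((4 : ℝ) • (B.2 * B.2ᵀ * B.2)) ≤
        4 * frobDistSet B (mfSol (Matrix.diagonal Dv)) ^ 3 := by
  intro B hB
  obtain ⟨hBP, hBQ⟩ := hB
  have hsol : (B.1, (0 : Matrix (Fin (d - r)) (Fin k) ℝ)) ∈ mfSol (Matrix.diagonal Dv) :=
    ⟨hBP, rfl⟩
  -- distance computations
  have hQn : frobDist B (B.1, (0 : Matrix (Fin (d - r)) (Fin k) ℝ)) = frobNorm B.2 := by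
    simp only [frobDist, sub_self, frobNorm_zero', sub_zero]
    rw [zero_pow (by norm_num), zero_add, Real.sqrt_sq (frobNorm_nonneg _)]
  have himg : frobNorm B.2 ∈ frobDist B '' mfSol (Matrix.diagonal Dv) := ⟨_, hsol, hQn⟩
  have hlb : ∀ x ∈ frobDist B '' mfSol (Matrix.diagonal Dv), frobNorm B.2 ≤ x := by
    rintro x ⟨C, hC, rfl⟩
    rw [frobDist, hC.2, sub_zero]
    have h := Real.sqrt_le_sqrt (show frobNorm B.2 ^ 2 ≤
        frobNorm (B.1 - C.1) ^ 2 + frobNorm B.2 ^ 2 by nlinarith [sq_nonneg (frobNorm (B.1 - C.1))])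
    rwa [Real.sqrt_sq (frobNorm_nonneg _)] at h
  have hdist : frobDistSet B (mfSol (Matrix.diagonal Dv)) = frobNorm B.2 := by
    refine le_antisymm (csInf_le ⟨frobNorm B.2, fun x hx => hlb x hx⟩ himg)
      (le_csInf ⟨_, himg⟩ hlb)
  have hobj : mfObj (Matrix.diagonal Dv) B = frobNorm (B.2 * B.2ᵀ) ^ 2 := by
    rw [mfObj, hBP, sub_self, hBQ]
    simp [frobNorm_zero']
  obtain ⟨L, hL, hLV⟩ := key Dv B hBP hBQ
  refine ⟨hsol, by rw [hQn, hdist], hL.differentiableAt, ?_, frobInner_grad B.2, ?_, ?_, ?_⟩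
  · intro V
    rw [hL.fderiv]
    exact hLV V
  · rw [hobj]
  · rw [frobInner_grad B.2, hobj]
    nlinarith [sq_nonneg (frobNorm (B.2 * B.2ᵀ))]
  · rw [hdist, frobNorm_four_smul]
    have h1 := frobNorm_mul_le' (B.2 * B.2ᵀ) B.2
    have h2 := frobNorm_mul_le' B.2 B.2ᵀ
    rw [frobNorm_transpose'] at h2
    have h4 := frobNorm_nonneg B.2
    have hc : frobNorm (B.2 * B.2ᵀ * B.2) ≤ frobNorm B.2 ^ 3 := by
      calc frobNorm (B.2 * B.2ᵀ * B.2) ≤ frobNorm (B.2 * B.2ᵀ) * frobNorm B.2 := h1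
        _ ≤ (frobNorm B.2 * frobNorm B.2) * frobNorm B.2 :=
            mul_le_mul_of_nonneg_right h2 h4
        _ = frobNorm B.2 ^ 3 := by ring
    linarith
end
end

section
/- Let h : ℝ^{d×d} → ℝ be C²-smooth and define g : ℝ^{d×k} → ℝ by g(B) = h(BBᵀ). Then for any B₁, B₂ ∈ ℝ^{d×k} with B₁B₁ᵀ = B₂B₂ᵀ, the Hessians of g at B₁ and B₂ have equal rank: rank(∇²g(B₁)) = rank(∇²g(B₂)). In particular, the Hessian ∇²g has constant rank on any set of the form {B ∈ ℝ^{d×k} : BBᵀ = X} for a fixed matrix X. -/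
open Matrix

attribute [local instance] Matrix.normedAddCommGroup Matrix.normedSpace

-- dot product computation
lemma dot_aux {d k : ℕ} (A : Matrix (Fin d) (Fin k) ℝ) (x y : Fin k → ℝ) :
    (A *ᵥ x) ⬝ᵥ (A *ᵥ y) = ((Aᵀ * A) *ᵥ x) ⬝ᵥ y := by
  rw [Matrix.dotProduct_mulVec, ← Matrix.mulVec_transpose, Matrix.mulVec_mulVec]

-- existence of orthogonal Q
lemma exists_orthogonal {d k : ℕ} (B₁ B₂ : Matrix (Fin d) (Fin k) ℝ)
    (hB : B₁ * B₁ᵀ = B₂ * B₂ᵀ) :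
    ∃ Q : Matrix (Fin k) (Fin k) ℝ, Q * Qᵀ = 1 ∧ Qᵀ * Q = 1 ∧ B₂ = B₁ * Q := by
  classical
  let ε : EuclideanSpace ℝ (Fin k) ≃ₗ[ℝ] (Fin k → ℝ) := WithLp.linearEquiv 2 ℝ (Fin k → ℝ)
  let f₁ : (Fin d → ℝ) →ₗ[ℝ] EuclideanSpace ℝ (Fin k) := ε.symm.toLinearMap ∘ₗ B₁ᵀ.mulVecLin
  let f₂ : (Fin d → ℝ) →ₗ[ℝ] EuclideanSpace ℝ (Fin k) := ε.symm.toLinearMap ∘ₗ B₂ᵀ.mulVecLin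
  have hf₁ : ∀ x, f₁ x = ε.symm (B₁ᵀ *ᵥ x) := fun x => rfl
  have hf₂ : ∀ x, f₂ x = ε.symm (B₂ᵀ *ᵥ x) := fun x => rfl
  have hinnergen : ∀ (C : Matrix (Fin d) (Fin k) ℝ) (x y : Fin d → ℝ),
      (inner ℝ (ε.symm (Cᵀ *ᵥ x)) (ε.symm (Cᵀ *ᵥ y)) : ℝ) = ((C * Cᵀ) *ᵥ x) ⬝ᵥ y := by
    intro C x y
    rw [show C * Cᵀ = Cᵀᵀ * Cᵀ by rw [Matrix.transpose_transpose], ← dot_aux Cᵀ x y]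
    simp [PiLp.inner_apply, RCLike.inner_apply, dotProduct, ε,
      WithLp.linearEquiv_symm_apply, mul_comm]
  have hinner : ∀ x y, (inner ℝ (f₁ x) (f₁ y) : ℝ) = inner ℝ (f₂ x) (f₂ y) := by
    intro x y
    rw [hf₁, hf₁, hf₂, hf₂, hinnergen, hinnergen, hB]
  have hker : LinearMap.ker f₁ ≤ LinearMap.ker f₂ := by
    intro x hx
    rw [LinearMap.mem_ker] at hx ⊢
    have : (inner ℝ (f₂ x) (f₂ x) : ℝ) = 0 := by rw [← hinner, hx, inner_zero_right]
    exact inner_self_eq_zero.mp this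
  let φ : (LinearMap.range f₁) →ₗ[ℝ] EuclideanSpace ℝ (Fin k) :=
    ((LinearMap.ker f₁).liftQ f₂ hker) ∘ₗ f₁.quotKerEquivRange.symm.toLinearMap
  have hφ : ∀ x : Fin d → ℝ, φ ⟨f₁ x, LinearMap.mem_range_self f₁ x⟩ = f₂ x := by
    intro x
    have : f₁.quotKerEquivRange.symm ⟨f₁ x, LinearMap.mem_range_self f₁ x⟩ =
        Submodule.Quotient.mk x := f₁.quotKerEquivRange_symm_apply_image x _
    simp only [φ, LinearMap.comp_apply, LinearEquiv.coe_coe, this]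
    exact Submodule.liftQ_apply _ f₂ x
  have hφinner : ∀ s t : LinearMap.range f₁, (inner ℝ (φ s) (φ t) : ℝ) = inner ℝ s t := by
    rintro ⟨s, x, rfl⟩ ⟨t, y, rfl⟩
    rw [hφ x, hφ y]
    have : (inner ℝ (⟨f₁ x, LinearMap.mem_range_self f₁ x⟩ : LinearMap.range f₁)
        (⟨f₁ y, LinearMap.mem_range_self f₁ y⟩ : LinearMap.range f₁) : ℝ) =
        inner ℝ (f₁ x) (f₁ y) := rfl
    rw [this, hinner]
  let LI : (LinearMap.range f₁) →ₗᵢ[ℝ] EuclideanSpace ℝ (Fin k) := φ.isometryOfInner hφinner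
  let L : EuclideanSpace ℝ (Fin k) →ₗᵢ[ℝ] EuclideanSpace ℝ (Fin k) := LI.extend
  have hL : ∀ x : Fin d → ℝ, L (f₁ x) = f₂ x := by
    intro x
    have := LI.extend_apply ⟨f₁ x, LinearMap.mem_range_self f₁ x⟩
    rw [this]
    show φ _ = _
    exact hφ x
  have hLinner : ∀ v w : EuclideanSpace ℝ (Fin k), (inner ℝ (L v) (L w) : ℝ) = inner ℝ v w :=
    fun v w => L.inner_map_map v w
  -- the matrix of L
  let M : Matrix (Fin k) (Fin k) ℝ :=
    LinearMap.toMatrix' (ε.toLinearMap ∘ₗ L.toLinearMap ∘ₗ ε.symm.toLinearMap)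
  have hMv : ∀ v : Fin k → ℝ, M *ᵥ v = ε (L (ε.symm v)) := by
    intro v
    rw [← Matrix.toLin'_apply, Matrix.toLin'_toMatrix']
    rfl
  -- M is orthogonal
  have hMinner : ∀ v w : Fin k → ℝ, (M *ᵥ v) ⬝ᵥ (M *ᵥ w) = v ⬝ᵥ w := by
    intro v w
    rw [hMv, hMv]
    have h1 : (inner ℝ (L (ε.symm v)) (L (ε.symm w)) : ℝ) = inner ℝ (ε.symm v) (ε.symm w) :=
      hLinner _ _
    have h2 : ∀ a b : EuclideanSpace ℝ (Fin k), (inner ℝ a b : ℝ) = (ε a) ⬝ᵥ (ε b) := by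
      intro a b
      simp [PiLp.inner_apply, RCLike.inner_apply, dotProduct, ε,
        WithLp.linearEquiv_apply, mul_comm]
    calc (ε (L (ε.symm v))) ⬝ᵥ (ε (L (ε.symm w)))
        = inner ℝ (L (ε.symm v)) (L (ε.symm w)) := (h2 _ _).symm
      _ = inner ℝ (ε.symm v) (ε.symm w) := h1
      _ = (ε (ε.symm v)) ⬝ᵥ (ε (ε.symm w)) := h2 _ _
      _ = v ⬝ᵥ w := by rw [ε.apply_symm_apply, ε.apply_symm_apply]
  have hMT : Mᵀ * M = 1 := by
    ext i j
    have h3 : ((Mᵀ * M) *ᵥ Pi.single j 1) ⬝ᵥ Pi.single i 1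
        = Pi.single j (1:ℝ) ⬝ᵥ Pi.single i 1 := by
      rw [← dot_aux]; exact hMinner _ _
    simp only [Matrix.mulVec_single_one, Matrix.col_apply, dotProduct_single, single_dotProduct,
      mul_one, one_mul, Pi.single_apply] at h3
    rw [h3, Matrix.one_apply]
  have hMB : M * B₁ᵀ = B₂ᵀ := by
    apply Matrix.toLin'.injective
    apply LinearMap.ext
    intro x
    simp only [Matrix.toLin'_apply, ← Matrix.mulVec_mulVec]
    rw [hMv]
    have : ε.symm (B₁ᵀ *ᵥ x) = f₁ x := rfl
    rw [this, hL x]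
    exact congrArg ε (hf₂ x) ▸ (ε.apply_symm_apply _)
  refine ⟨Mᵀ, ?_, ?_, ?_⟩
  · rw [Matrix.transpose_transpose]; exact hMT
  · rw [Matrix.transpose_transpose]; exact mul_eq_one_comm.mp hMT
  · calc B₂ = (B₂ᵀ)ᵀ := (Matrix.transpose_transpose B₂).symm
      _ = (M * B₁ᵀ)ᵀ := by rw [hMB]
      _ = B₁ * Mᵀ := by rw [Matrix.transpose_mul, Matrix.transpose_transpose]

/-- **Constant rank of the Hessian on factorization fibers.**
Let `h : ℝ^{d×d} → ℝ` be `C²` and `g(B) = h(BBᵀ)` on `ℝ^{d×k}`.  Then for all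
`B₁, B₂` with `B₁B₁ᵀ = B₂B₂ᵀ`, the Hessians of `g` (second Fréchet derivatives) at
`B₁` and `B₂` have the same rank; in particular `∇²g` has constant rank on any set
`{B : BBᵀ = X}`. -/
theorem hessian_constant_rank_on_factorization_fiber
    (d k : ℕ) (h : Matrix (Fin d) (Fin d) ℝ → ℝ) (hh : ContDiff ℝ 2 h)
    (B₁ B₂ : Matrix (Fin d) (Fin k) ℝ) (hB : B₁ * B₁ᵀ = B₂ * B₂ᵀ) :
    LinearMap.rank
        (fderiv ℝ (fderiv ℝ (fun B : Matrix (Fin d) (Fin k) ℝ => h (B * Bᵀ))) B₁).toLinearMap =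
      LinearMap.rank
        (fderiv ℝ (fderiv ℝ (fun B : Matrix (Fin d) (Fin k) ℝ => h (B * Bᵀ))) B₂).toLinearMap := by
  classical
  obtain ⟨Q, hQ1, hQ2, hBQ⟩ := exists_orthogonal B₁ B₂ hB
  set g : Matrix (Fin d) (Fin k) ℝ → ℝ := fun B => h (B * Bᵀ) with hg
  -- the continuous linear equiv of right multiplication by Q
  let eL : Matrix (Fin d) (Fin k) ℝ ≃ₗ[ℝ] Matrix (Fin d) (Fin k) ℝ :=
    { toFun := fun B => B * Q
      invFun := fun B => B * Qᵀ
      map_add' := fun X Y => Matrix.add_mul X Y Q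
      map_smul' := fun c X => Matrix.smul_mul c X Q
      left_inv := fun X => by
        show X * Q * Qᵀ = X
        rw [Matrix.mul_assoc, hQ1, Matrix.mul_one]
      right_inv := fun X => by
        show X * Qᵀ * Q = X
        rw [Matrix.mul_assoc, hQ2, Matrix.mul_one] }
  let e : Matrix (Fin d) (Fin k) ℝ ≃L[ℝ] Matrix (Fin d) (Fin k) ℝ :=
    eL.toContinuousLinearEquiv
  have he : ∀ B, e B = B * Q := fun B => rfl
  -- invariance of g
  have hge : g ∘ e = g := by
    funext B
    show h ((B * Q) * (B * Q)ᵀ) = h (B * Bᵀ)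
    rw [Matrix.transpose_mul, Matrix.mul_assoc, ← Matrix.mul_assoc Q, hQ1,
      Matrix.one_mul]
  -- first derivative identity
  have hF : ∀ B, fderiv ℝ g B = (fderiv ℝ g (e B)).comp (e : Matrix (Fin d) (Fin k) ℝ →L[ℝ] Matrix (Fin d) (Fin k) ℝ) := by
    intro B
    conv_lhs => rw [← hge]
    exact e.comp_right_fderiv
  -- rewrite as composition with a fixed continuous linear equiv on the codomain
  let Ψ : (Matrix (Fin d) (Fin k) ℝ →L[ℝ] ℝ) ≃L[ℝ] (Matrix (Fin d) (Fin k) ℝ →L[ℝ] ℝ) :=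
    (e.arrowCongr (ContinuousLinearEquiv.refl ℝ ℝ)).symm
  have hΨ : ∀ f : Matrix (Fin d) (Fin k) ℝ →L[ℝ] ℝ, Ψ f = f.comp (e : Matrix (Fin d) (Fin k) ℝ →L[ℝ] Matrix (Fin d) (Fin k) ℝ) := by
    intro f
    ext x
    simp [Ψ, ContinuousLinearEquiv.arrowCongr]
  have hFe : (fderiv ℝ g) ∘ e = Ψ.symm ∘ (fderiv ℝ g) := by
    funext B
    have := hF B
    rw [← hΨ] at this
    simp only [Function.comp_apply]
    exact (ContinuousLinearEquiv.eq_symm_apply Ψ).mpr this.symm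
  -- differentiate both sides at B₁
  letI : NormedAddCommGroup (Matrix (Fin d) (Fin k) ℝ →L[ℝ] ℝ) := ContinuousLinearMap.toNormedAddCommGroup
  letI : NormedSpace ℝ (Matrix (Fin d) (Fin k) ℝ →L[ℝ] ℝ) := ContinuousLinearMap.toNormedSpace
  have hd1 : fderiv ℝ ((fderiv ℝ g) ∘ e) B₁
      = (fderiv ℝ (fderiv ℝ g) (e B₁)).comp (e : Matrix (Fin d) (Fin k) ℝ →L[ℝ] Matrix (Fin d) (Fin k) ℝ) := e.comp_right_fderiv
  have hd2 : fderiv ℝ (Ψ.symm ∘ (fderiv ℝ g)) B₁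
      = (Ψ.symm : (Matrix (Fin d) (Fin k) ℝ →L[ℝ] ℝ) →L[ℝ] (Matrix (Fin d) (Fin k) ℝ →L[ℝ] ℝ)).comp (fderiv ℝ (fderiv ℝ g) B₁) := Ψ.symm.comp_fderiv
  have key : (fderiv ℝ (fderiv ℝ g) B₂).comp (e : Matrix (Fin d) (Fin k) ℝ →L[ℝ] Matrix (Fin d) (Fin k) ℝ)
      = (Ψ.symm : (Matrix (Fin d) (Fin k) ℝ →L[ℝ] ℝ) →L[ℝ] (Matrix (Fin d) (Fin k) ℝ →L[ℝ] ℝ)).comp (fderiv ℝ (fderiv ℝ g) B₁) := by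
    have heB : e B₁ = B₂ := by rw [he, ← hBQ]
    rw [← heB, ← hd1, ← hd2, hFe]
  -- take ranks
  have hrank1 : LinearMap.rank ((fderiv ℝ (fderiv ℝ g) B₂).comp (e : Matrix (Fin d) (Fin k) ℝ →L[ℝ] Matrix (Fin d) (Fin k) ℝ)).toLinearMap
      = LinearMap.rank (fderiv ℝ (fderiv ℝ g) B₂).toLinearMap := by
    rw [ContinuousLinearMap.toLinearMap_comp]
    show LinearMap.rank ((fderiv ℝ (fderiv ℝ g) B₂).toLinearMap ∘ₗ eL.toLinearMap) = _
    unfold LinearMap.rank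
    rw [LinearMap.range_comp_of_range_eq_top _ (LinearEquiv.range eL)]
  have hrank2 : LinearMap.rank ((Ψ.symm : (Matrix (Fin d) (Fin k) ℝ →L[ℝ] ℝ) →L[ℝ] (Matrix (Fin d) (Fin k) ℝ →L[ℝ] ℝ)).comp
        (fderiv ℝ (fderiv ℝ g) B₁)).toLinearMap
      = LinearMap.rank (fderiv ℝ (fderiv ℝ g) B₁).toLinearMap := by
    rw [ContinuousLinearMap.toLinearMap_comp]
    show LinearMap.rank (Ψ.symm.toLinearEquiv.toLinearMap ∘ₗ
      (fderiv ℝ (fderiv ℝ g) B₁).toLinearMap) = _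
    unfold LinearMap.rank
    rw [LinearMap.range_comp]
    exact Ψ.symm.toLinearEquiv.rank_map_eq _
  rw [← hrank1, key, hrank2]
end
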